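/- arXiv:1906.03409 — 7 statements merged into one kernel-verified Lean document; each statement's English description precedes it below -/
import Mathlib

section
/- Let {S(t)}_{t≥0} be a twin semigroup on a norming dual pair (Y,Y⋄) with constants M ≥ 1, ω ∈ ℝ and Laplace transform S̄(λ) for λ > ω. For y, z ∈ Y the following are equivalent: (1) there exists λ > ω such that y = S̄(λ)(λ·y − z); (2) for every t > 0 and every y⋄ ∈ Y⋄ one has ∫₀ᵗ y⋄S(τ)z dτ = y⋄S(t)y − ⟨y⋄, y⟩. In particular, if (1) holds for one λ > ω then it holds for every λ > ω. -/
open MeasureTheory Filter Topology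

/-- A norming dual pair of real Banach spaces: a bounded bilinear pairing such that
each space norms the other. -/
structure NormingDualPair (Y Yd : Type*) [NormedAddCommGroup Y] [NormedSpace ℝ Y]
    [CompleteSpace Y] [NormedAddCommGroup Yd] [NormedSpace ℝ Yd] [CompleteSpace Yd] where
  pair : Yd →ₗ[ℝ] Y →ₗ[ℝ] ℝ
  M : ℝ
  one_le_M : 1 ≤ M
  pair_bound : ∀ (yd : Yd) (y : Y), |pair yd y| ≤ M * ‖yd‖ * ‖y‖
  norm_eq : ∀ y : Y, ‖y‖ = sSup {r : ℝ | ∃ yd : Yd, ‖yd‖ ≤ 1 ∧ r = |pair yd y|}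
  norm_eq' : ∀ yd : Yd, ‖yd‖ = sSup {r : ℝ | ∃ y : Y, ‖y‖ ≤ 1 ∧ r = |pair yd y|}

/-- A twin semigroup on a norming dual pair `(Y, Yd)`: a semigroup of twin operators,
exponentially bounded, with weakly measurable orbits, whose Laplace transform (for
`λ > omega`) is again a twin operator. -/
structure TwinSemigroup (Y Yd : Type*) [NormedAddCommGroup Y] [NormedSpace ℝ Y]
    [CompleteSpace Y] [NormedAddCommGroup Yd] [NormedSpace ℝ Yd] [CompleteSpace Yd]
    (P : NormingDualPair Y Yd) where
  /-- the action of `S(t)` on `Y` -/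
  S : ℝ → Y →ₗ[ℝ] Y
  /-- the action of `S(t)` on `Yd` -/
  Sd : ℝ → Yd →ₗ[ℝ] Yd
  compat : ∀ t : ℝ, 0 ≤ t → ∀ (yd : Yd) (y : Y), P.pair (Sd t yd) y = P.pair yd (S t y)
  S_zero : S 0 = LinearMap.id
  S_add : ∀ t s : ℝ, 0 ≤ t → 0 ≤ s → ∀ y : Y, S (t + s) y = S t (S s y)
  M : ℝ
  omega : ℝ
  one_le_M : 1 ≤ M
  bound : ∀ t : ℝ, 0 ≤ t → ∀ (yd : Yd) (y : Y),
    |P.pair yd (S t y)| ≤ M * Real.exp (omega * t) * ‖y‖ * ‖yd‖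
  meas : ∀ (yd : Yd) (y : Y), Measurable fun t : ℝ => P.pair yd (S t y)
  /-- the action of the Laplace transform `S̄(λ)` on `Y` -/
  lap : ℝ → Y →ₗ[ℝ] Y
  /-- the action of the Laplace transform `S̄(λ)` on `Yd` -/
  lapd : ℝ → Yd →ₗ[ℝ] Yd
  lap_compat : ∀ l : ℝ, omega < l → ∀ (yd : Yd) (y : Y),
    P.pair (lapd l yd) y = P.pair yd (lap l y)
  lap_eq : ∀ l : ℝ, omega < l → ∀ (yd : Yd) (y : Y),
    P.pair yd (lap l y) = ∫ t in Set.Ioi (0:ℝ), Real.exp (-l * t) * P.pair yd (S t y)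

open MeasureTheory Filter Topology Set

section Helpers
variable {Y Yd : Type*} [NormedAddCommGroup Y] [NormedSpace ℝ Y] [CompleteSpace Y]
    [NormedAddCommGroup Yd] [NormedSpace ℝ Yd] [CompleteSpace Yd]
    {P : NormingDualPair Y Yd} (T : TwinSemigroup Y Yd P)

lemma NormingDualPair.pair_inj {a b : Y} (h : ∀ yd : Yd, P.pair yd a = P.pair yd b) :
    a = b := by
  have hn : ‖a - b‖ = 0 := by
    rw [P.norm_eq]
    have hs : {r : ℝ | ∃ yd : Yd, ‖yd‖ ≤ 1 ∧ r = |P.pair yd (a - b)|} = {0} := by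
      ext r
      simp only [Set.mem_setOf_eq, Set.mem_singleton_iff]
      constructor
      · rintro ⟨yd, -, rfl⟩
        simp [map_sub, h yd]
      · rintro rfl
        exact ⟨0, by simp, by simp⟩
    rw [hs, csSup_singleton]
  rw [← sub_eq_zero]
  exact norm_eq_zero.mp hn

lemma TwinSemigroup.M_nonneg : (0:ℝ) ≤ T.M := le_trans zero_le_one T.one_le_M

/-- bound on the pairing against the orbit, uniform on `(0, t]`. -/
lemma TwinSemigroup.bdd_pair (yd : Yd) (x : Y) (t : ℝ) :
    ∀ τ ∈ Set.Ioc (0:ℝ) t,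
      |P.pair yd (T.S τ x)| ≤ T.M * Real.exp (|T.omega| * t) * ‖x‖ * ‖yd‖ := by
  intro τ hτ
  refine (T.bound τ hτ.1.le yd x).trans ?_
  have h1 : T.omega * τ ≤ |T.omega| * t :=
    le_trans (mul_le_mul_of_nonneg_right (le_abs_self _) hτ.1.le)
      (mul_le_mul_of_nonneg_left hτ.2 (abs_nonneg _))
  gcongr
  exact T.M_nonneg

/-- interval integrability of `τ ↦ exp (a τ) * ⟨yd, S τ x⟩` on `[0, t]`. -/
lemma TwinSemigroup.ii_exp_pair (a : ℝ) (yd : Yd) (x : Y) {t : ℝ} (ht : 0 ≤ t) :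
    IntervalIntegrable (fun τ => Real.exp (a * τ) * P.pair yd (T.S τ x)) volume 0 t := by
  rw [intervalIntegrable_iff_integrableOn_Ioc_of_le ht]
  haveI : IsFiniteMeasure (volume.restrict (Set.Ioc (0:ℝ) t)) :=
    ⟨by rw [Measure.restrict_apply_univ]; exact measure_Ioc_lt_top⟩
  refine ⟨(((Real.continuous_exp.comp (continuous_const.mul continuous_id)).measurable).mul
    (T.meas yd x)).aestronglyMeasurable.restrict, ?_⟩
  apply HasFiniteIntegral.of_bounded
    (C := Real.exp (|a| * t) * (T.M * Real.exp (|T.omega| * t) * ‖x‖ * ‖yd‖))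
  refine (ae_restrict_iff' measurableSet_Ioc).2 ?_
  filter_upwards with τ hτ
  rw [Real.norm_eq_abs, abs_mul, Real.abs_exp]
  have h1 : Real.exp (a * τ) ≤ Real.exp (|a| * t) := by
    apply Real.exp_le_exp.2
    exact le_trans (mul_le_mul_of_nonneg_right (le_abs_self _) hτ.1.le)
      (mul_le_mul_of_nonneg_left hτ.2 (abs_nonneg _))
  exact mul_le_mul h1 (T.bdd_pair yd x t τ hτ) (abs_nonneg _) (Real.exp_pos _).le

lemma TwinSemigroup.ii_pair (yd : Yd) (x : Y) {t : ℝ} (ht : 0 ≤ t) :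
    IntervalIntegrable (fun τ => P.pair yd (T.S τ x)) volume 0 t := by
  have h : (fun τ => P.pair yd (T.S τ x))
      = fun τ => Real.exp (0 * τ) * P.pair yd (T.S τ x) := by
    funext τ; simp
  rw [h]
  exact T.ii_exp_pair 0 yd x ht

/-- integrability of `τ ↦ exp (−l τ) * ⟨yd, S τ x⟩` on `(0, ∞)` for `l > ω`. -/
lemma TwinSemigroup.int_exp_Ioi {l : ℝ} (hl : T.omega < l) (yd : Yd) (x : Y) :
    IntegrableOn (fun τ => Real.exp (-l * τ) * P.pair yd (T.S τ x)) (Set.Ioi (0:ℝ)) := by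
  refine Integrable.mono'
    (((exp_neg_integrableOn_Ioi 0 (show 0 < l - T.omega by linarith)).const_mul
      (T.M * ‖x‖ * ‖yd‖)))
    ((((Real.continuous_exp.comp (continuous_const.mul continuous_id)).measurable).mul
      (T.meas yd x)).aestronglyMeasurable.restrict) ?_
  refine (ae_restrict_iff' measurableSet_Ioi).2 ?_
  filter_upwards with τ hτ
  rw [Real.norm_eq_abs, abs_mul, Real.abs_exp]
  have hb := T.bound τ (le_of_lt hτ) yd x
  calc Real.exp (-l * τ) * |P.pair yd (T.S τ x)|
      ≤ Real.exp (-l * τ) * (T.M * Real.exp (T.omega * τ) * ‖x‖ * ‖yd‖) := by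
        exact mul_le_mul_of_nonneg_left hb (Real.exp_pos _).le
    _ = T.M * ‖x‖ * ‖yd‖ * Real.exp (-(l - T.omega) * τ) := by
        rw [show -(l - T.omega) * τ = -l * τ + T.omega * τ by ring, Real.exp_add]; ring

lemma tri_fubini {f c Cp : ℝ → ℝ} {t B : ℝ} (ht : 0 ≤ t)
    (hf : Measurable f) (hB : ∀ u ∈ Set.Ioc (0:ℝ) t, |f u| ≤ B)
    (hc : Continuous c) (hCp : ∀ τ, HasDerivAt Cp (c τ) τ) :
    (∫ τ in (0:ℝ)..t, c τ * ∫ u in (0:ℝ)..τ, f u)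
      = ∫ u in (0:ℝ)..t, (Cp t - Cp u) * f u := by
  rcases eq_or_lt_of_le ht with rfl | htpos
  · simp
  -- bound for c on [0, t]
  obtain ⟨Cc, hCc⟩ : ∃ Cc, ∀ x ∈ Set.Icc (0:ℝ) t, ‖c x‖ ≤ Cc :=
    isCompact_Icc.exists_bound_of_continuousOn hc.continuousOn
  have hCc0 : 0 ≤ Cc := le_trans (norm_nonneg _) (hCc 0 ⟨le_rfl, ht⟩)
  have hB0 : 0 ≤ B := le_trans (abs_nonneg _) (hB t ⟨htpos, le_rfl⟩)
  set μ : Measure ℝ := volume.restrict (Set.Ioc (0:ℝ) t) with hμ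
  haveI : IsFiniteMeasure μ := ⟨by
    rw [hμ, Measure.restrict_apply_univ]; exact measure_Ioc_lt_top⟩
  set F : ℝ → ℝ → ℝ := fun τ u => if u ≤ τ then c τ * f u else 0 with hF
  have hFmeas : Measurable (Function.uncurry F) := by
    apply Measurable.ite (measurableSet_le measurable_snd measurable_fst)
    · exact ((hc.measurable.comp measurable_fst).mul (hf.comp measurable_snd))
    · exact measurable_const
  have hFint : Integrable (Function.uncurry F) (μ.prod μ) := by
    refine ⟨hFmeas.aestronglyMeasurable, ?_⟩
    apply HasFiniteIntegral.of_bounded (C := Cc * B)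
    rw [hμ, Measure.prod_restrict]
    refine (ae_restrict_iff' ((measurableSet_Ioc).prod measurableSet_Ioc)).2 ?_
    filter_upwards with p hp
    rcases hp with ⟨hp1, hp2⟩
    simp only [Function.uncurry, hF]
    split_ifs with h
    · rw [Real.norm_eq_abs, abs_mul]
      have h1 : |c p.1| ≤ Cc := by
        simpa [Real.norm_eq_abs] using hCc p.1 ⟨hp1.1.le, hp1.2⟩
      exact mul_le_mul h1 (hB p.2 hp2) (abs_nonneg _) hCc0
    · simpa using mul_nonneg hCc0 hB0
  have swap := integral_integral_swap hFint
  -- LHS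
  have hL : (∫ τ, ∫ u, F τ u ∂μ ∂μ) = ∫ τ in (0:ℝ)..t, c τ * ∫ u in (0:ℝ)..τ, f u := by
    rw [intervalIntegral.integral_of_le ht, hμ]
    refine setIntegral_congr_fun measurableSet_Ioc (fun τ hτ => ?_)
    have h1 : (fun u => F τ u) = (Set.Iic τ).indicator (fun u => c τ * f u) := by
      funext u; simp [hF, Set.indicator_apply, Set.mem_Iic]
    rw [h1, setIntegral_indicator measurableSet_Iic]
    have h2 : Set.Ioc (0:ℝ) t ∩ Set.Iic τ = Set.Ioc 0 τ := by
      ext u; simp only [Set.mem_inter_iff, Set.mem_Ioc, Set.mem_Iic]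
      exact ⟨fun ⟨⟨a, b⟩, d⟩ => ⟨a, d⟩, fun ⟨a, d⟩ => ⟨⟨a, d.trans hτ.2⟩, d⟩⟩
    rw [h2, intervalIntegral.integral_of_le hτ.1.le, integral_const_mul]
  -- RHS
  have hR : (∫ u, ∫ τ, F τ u ∂μ ∂μ) = ∫ u in (0:ℝ)..t, (Cp t - Cp u) * f u := by
    rw [intervalIntegral.integral_of_le ht, hμ]
    refine setIntegral_congr_fun measurableSet_Ioc (fun u hu => ?_)
    have h1 : (fun τ => F τ u) = (Set.Ici u).indicator (fun τ => c τ * f u) := by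
      funext τ; simp [hF, Set.indicator_apply, Set.mem_Ici]
    rw [h1, setIntegral_indicator measurableSet_Ici]
    have h2 : Set.Ioc (0:ℝ) t ∩ Set.Ici u = Set.Icc u t := by
      ext τ; simp only [Set.mem_inter_iff, Set.mem_Ioc, Set.mem_Icc, Set.mem_Ici]
      exact ⟨fun ⟨⟨a, b⟩, d⟩ => ⟨d, b⟩, fun ⟨a, b⟩ => ⟨⟨lt_of_lt_of_le hu.1 a, b⟩, a⟩⟩
    rw [h2, integral_Icc_eq_integral_Ioc, ← intervalIntegral.integral_of_le hu.2,
      intervalIntegral.integral_mul_const]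
    congr 1
    exact intervalIntegral.integral_eq_sub_of_hasDerivAt (fun τ _ => hCp τ)
      (hc.intervalIntegrable u t)
  rw [← hL, ← hR]; exact swap
lemma TwinSemigroup.pair_S_lap {l : ℝ} (hl : T.omega < l) (yd : Yd) (x : Y) {t : ℝ}
    (ht : 0 ≤ t) :
    P.pair yd (T.S t (T.lap l x))
      = Real.exp (l * t) * ∫ u in Set.Ioi t, Real.exp (-l * u) * P.pair yd (T.S u x) := by
  rw [← T.compat t ht, T.lap_eq l hl]
  have h1 : ∀ s ∈ Set.Ioi (0:ℝ), Real.exp (-l * s) * P.pair (T.Sd t yd) (T.S s x)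
      = Real.exp (-l * s) * P.pair yd (T.S (t + s) x) := by
    intro s hs
    rw [T.compat t ht yd (T.S s x), ← T.S_add t s ht (le_of_lt hs)]
  rw [setIntegral_congr_fun measurableSet_Ioi h1]
  have h2 : (∫ u in Set.Ioi t, Real.exp (-l * u) * P.pair yd (T.S u x))
      = ∫ s in Set.Ioi (0:ℝ), Real.exp (-l * (s + t)) * P.pair yd (T.S (s + t) x) := by
    have hpre : (fun x : ℝ => x + t) ⁻¹' Set.Ioi t = Set.Ioi (0:ℝ) := by
      ext s
      simp only [Set.mem_preimage, Set.mem_Ioi, lt_add_iff_pos_left]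
    rw [← (measurePreserving_add_right volume t).setIntegral_preimage_emb
      (measurableEmbedding_addRight t)
      (fun u => Real.exp (-l * u) * P.pair yd (T.S u x)) (Set.Ioi t), hpre]
  rw [h2, ← integral_const_mul]
  refine setIntegral_congr_fun measurableSet_Ioi (fun s hs => ?_)
  rw [add_comm s t, show Real.exp (l * t) * (Real.exp (-l * (t + s)) * P.pair yd (T.S (t + s) x))
    = (Real.exp (l * t) * Real.exp (-l * (t + s))) * P.pair yd (T.S (t + s) x) by ring,
    ← Real.exp_add, show l * t + -l * (t + s) = -l * s by ring]
lemma TwinSemigroup.bdd_exp_pair (a : ℝ) (yd : Yd) (x : Y) (t : ℝ) :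
    ∀ u ∈ Set.Ioc (0:ℝ) t, |Real.exp (a * u) * P.pair yd (T.S u x)|
      ≤ Real.exp (|a| * t) * (T.M * Real.exp (|T.omega| * t) * ‖x‖ * ‖yd‖) := by
  intro u hu
  rw [abs_mul, Real.abs_exp]
  have h1 : Real.exp (a * u) ≤ Real.exp (|a| * t) :=
    Real.exp_le_exp.2 (le_trans (mul_le_mul_of_nonneg_right (le_abs_self _) hu.1.le)
      (mul_le_mul_of_nonneg_left hu.2 (abs_nonneg _)))
  exact mul_le_mul h1 (T.bdd_pair yd x t u hu) (abs_nonneg _) (Real.exp_pos _).le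

lemma TwinSemigroup.key1 {l : ℝ} (hl : T.omega < l) {y z : Y}
    (hy : y = T.lap l (l • y - z)) {t : ℝ} (ht : 0 < t) (yd : Yd) :
    (∫ τ in (0:ℝ)..t, P.pair yd (T.S τ z)) = P.pair yd (T.S t y) - P.pair yd y := by
  set x : Y := l • y - z with hx
  set g : ℝ → ℝ := fun τ => P.pair yd (T.S τ x) with hg
  set A : ℝ := ∫ u in Set.Ioi (0:ℝ), Real.exp (-l * u) * g u with hA
  set ψ : ℝ → ℝ := fun τ => ∫ u in (0:ℝ)..τ, Real.exp (-l * u) * g u with hψ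
  have hint : IntegrableOn (fun u => Real.exp (-l * u) * g u) (Set.Ioi (0:ℝ)) :=
    T.int_exp_Ioi hl yd x
  have hAy : P.pair yd y = A := by
    rw [hA, hg]
    conv_lhs => rw [hy]
    rw [T.lap_eq l hl]
  -- the key representation of the orbit of y
  have hshift : ∀ τ : ℝ, 0 ≤ τ → P.pair yd (T.S τ y)
      = Real.exp (l * τ) * (A - ψ τ) := by
    intro τ hτ
    conv_lhs => rw [hy]
    rw [T.pair_S_lap hl yd x hτ]
    congr 1
    have hsplit : A = (∫ u in Set.Ioc (0:ℝ) τ, Real.exp (-l * u) * g u)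
        + ∫ u in Set.Ioi τ, Real.exp (-l * u) * g u := by
      rw [hA, ← setIntegral_union (Set.Ioc_disjoint_Ioi le_rfl) measurableSet_Ioi
        (hint.mono_set Set.Ioc_subset_Ioi_self) (hint.mono_set (Set.Ioi_subset_Ioi hτ)),
        Set.Ioc_union_Ioi_eq_Ioi hτ]
    rw [hψ]
    simp only []
    rw [intervalIntegral.integral_of_le hτ]
    linarith [hsplit]
  -- continuity / integrability facts
  have hgm : Measurable g := T.meas yd x
  have hfm : Measurable (fun u => Real.exp (-l * u) * g u) :=
    ((Real.continuous_exp.comp (continuous_const.mul continuous_id)).measurable).mul hgm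
  have hψc : ContinuousOn ψ (Set.uIcc (0:ℝ) t) := by
    apply intervalIntegral.continuousOn_primitive_interval
    rw [Set.uIcc_of_le ht.le, integrableOn_Icc_iff_integrableOn_Ioc]
    exact (intervalIntegrable_iff_integrableOn_Ioc_of_le ht.le).1
      (T.ii_exp_pair (-l) yd x ht.le)
  have i2 : IntervalIntegrable (fun τ => l * Real.exp (l * τ) * ψ τ) volume 0 t := by
    apply ContinuousOn.intervalIntegrable
    exact ((continuous_const.mul (Real.continuous_exp.comp
      (continuous_const.mul continuous_id))).continuousOn.mul hψc)
  have i3 : IntervalIntegrable g volume 0 t := T.ii_pair yd x ht.le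
  have i1 : IntervalIntegrable (fun τ => A * (l * Real.exp (l * τ))) volume 0 t :=
    (continuous_const.mul (continuous_const.mul (Real.continuous_exp.comp
      (continuous_const.mul continuous_id)))).intervalIntegrable 0 t
  -- rewrite the integrand
  have e1 : (∫ τ in (0:ℝ)..t, P.pair yd (T.S τ z))
      = ∫ τ in (0:ℝ)..t,
          (A * (l * Real.exp (l * τ)) - l * Real.exp (l * τ) * ψ τ - g τ) := by
    apply intervalIntegral.integral_congr
    intro τ hτ
    rw [Set.uIcc_of_le ht.le] at hτ
    have hzτ : P.pair yd (T.S τ z) = l * P.pair yd (T.S τ y) - g τ := by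
      have hzz : z = l • y - x := by rw [hx]; abel
      conv_lhs => rw [hzz]
      simp [map_sub, LinearMap.map_smul, smul_eq_mul, hg]
    show P.pair yd (T.S τ z)
        = A * (l * Real.exp (l * τ)) - l * Real.exp (l * τ) * ψ τ - g τ
    rw [hzτ, hshift τ hτ.1]
    ring
  -- FTC for the pure exponential part
  have v1 : (∫ τ in (0:ℝ)..t, l * Real.exp (l * τ)) = Real.exp (l * t) - 1 := by
    have hd : ∀ τ ∈ Set.uIcc (0:ℝ) t,
        HasDerivAt (fun τ => Real.exp (l * τ)) (l * Real.exp (l * τ)) τ := by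
      intro τ _
      have := ((hasDerivAt_id τ).const_mul l).exp
      simpa [mul_comm] using this
    rw [intervalIntegral.integral_eq_sub_of_hasDerivAt hd
      ((continuous_const.mul (Real.continuous_exp.comp
        (continuous_const.mul continuous_id))).intervalIntegrable 0 t)]
    simp
  -- triangle Fubini for the middle part
  have v2 : (∫ τ in (0:ℝ)..t, l * Real.exp (l * τ) * ψ τ)
      = Real.exp (l * t) * ψ t - ∫ u in (0:ℝ)..t, g u := by
    have htri := tri_fubini (f := fun u => Real.exp (-l * u) * g u)
      (c := fun τ => l * Real.exp (l * τ)) (Cp := fun τ => Real.exp (l * τ))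
      (B := Real.exp (|(-l)| * t) * (T.M * Real.exp (|T.omega| * t) * ‖x‖ * ‖yd‖)) ht.le
      hfm (T.bdd_exp_pair (-l) yd x t)
      (continuous_const.mul (Real.continuous_exp.comp (continuous_const.mul continuous_id)))
      (fun τ => by simpa [mul_comm] using ((hasDerivAt_id τ).const_mul l).exp)
    rw [hψ]
    simp only []
    rw [htri]
    have e2 : (∫ u in (0:ℝ)..t, (Real.exp (l * t) - Real.exp (l * u)) * (Real.exp (-l * u) * g u))
        = ∫ u in (0:ℝ)..t, (Real.exp (l * t) * (Real.exp (-l * u) * g u) - g u) := by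
      apply intervalIntegral.integral_congr
      intro u _
      have huu : Real.exp (l * u) * Real.exp (-l * u) = 1 := by
        rw [← Real.exp_add]; simp
      show (Real.exp (l * t) - Real.exp (l * u)) * (Real.exp (-l * u) * g u)
          = Real.exp (l * t) * (Real.exp (-l * u) * g u) - g u
      calc (Real.exp (l * t) - Real.exp (l * u)) * (Real.exp (-l * u) * g u)
          = Real.exp (l * t) * (Real.exp (-l * u) * g u)
            - (Real.exp (l * u) * Real.exp (-l * u)) * g u := by ring
        _ = Real.exp (l * t) * (Real.exp (-l * u) * g u) - g u := by rw [huu]; ring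
    rw [e2, intervalIntegral.integral_sub
      ((T.ii_exp_pair (-l) yd x ht.le).const_mul _) i3, intervalIntegral.integral_const_mul]
  rw [e1, intervalIntegral.integral_sub (i1.sub i2) i3,
    intervalIntegral.integral_sub i1 i2, intervalIntegral.integral_const_mul, v1, v2,
    hshift t ht.le, hAy]
  ring
lemma TwinSemigroup.key2 {y z : Y}
    (H : ∀ t : ℝ, 0 < t → ∀ yd : Yd,
      (∫ τ in (0:ℝ)..t, P.pair yd (T.S τ z)) = P.pair yd (T.S t y) - P.pair yd y)
    {l : ℝ} (hl : T.omega < l) : y = T.lap l (l • y - z) := by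
  apply NormingDualPair.pair_inj (P := P)
  intro yd
  set x : Y := l • y - z with hx
  set w : ℝ → ℝ := fun τ => P.pair yd (T.S τ z) with hw
  set h : ℝ → ℝ := fun τ => P.pair yd (T.S τ y) with hh
  set v : ℝ → ℝ := fun τ => Real.exp (-l * τ) * P.pair yd (T.S τ x) with hv
  have hvy : P.pair yd (T.lap l x) = ∫ τ in Set.Ioi (0:ℝ), v τ := T.lap_eq l hl yd x
  have hvint : IntegrableOn v (Set.Ioi (0:ℝ)) := T.int_exp_Ioi hl yd x
  have hh0 : h 0 = P.pair yd y := by rw [hh]; simp [T.S_zero]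
  have hwm : Measurable w := T.meas yd z
  have hd : ∀ τ : ℝ, HasDerivAt (fun s => -Real.exp (-l * s)) (l * Real.exp (-l * τ)) τ := by
    intro τ
    have h0 : HasDerivAt (fun s => -Real.exp (-l * s)) (-(Real.exp (-l * τ) * (-l * 1))) τ :=
      (((hasDerivAt_id τ).const_mul (-l)).exp).neg
    convert h0 using 1
    ring
  have hcont : Continuous (fun τ : ℝ => l * Real.exp (-l * τ)) :=
    continuous_const.mul (Real.continuous_exp.comp (continuous_const.mul continuous_id))
  -- the finite-horizon identity
  have hfin : ∀ T' : ℝ, 0 < T' → (∫ τ in (0:ℝ)..T', v τ)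
      = h 0 - Real.exp (-l * T') * h T' := by
    intro T' hT'
    have hWk : ∀ τ : ℝ, 0 ≤ τ → (∫ u in (0:ℝ)..τ, w u) = h τ - h 0 := by
      intro τ hτ
      rcases eq_or_lt_of_le hτ with hzero | hpos
      · rw [← hzero]; simp
      · simpa [hw, hh, T.S_zero] using H τ hpos yd
    have hpt : ∀ τ ∈ Set.uIcc (0:ℝ) T',
        v τ = h 0 * (l * Real.exp (-l * τ))
          + l * Real.exp (-l * τ) * (∫ u in (0:ℝ)..τ, w u)
          - Real.exp (-l * τ) * w τ := by
      intro τ hτ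
      rw [Set.uIcc_of_le hT'.le] at hτ
      have hxτ : P.pair yd (T.S τ x) = l * h τ - w τ := by
        rw [hx]
        simp [map_sub, LinearMap.map_smul, smul_eq_mul, hh, hw]
      show Real.exp (-l * τ) * P.pair yd (T.S τ x)
          = h 0 * (l * Real.exp (-l * τ))
            + l * Real.exp (-l * τ) * (∫ u in (0:ℝ)..τ, w u)
            - Real.exp (-l * τ) * w τ
      rw [hxτ, hWk τ hτ.1]
      ring
    -- integrability of the three pieces
    have j1 : IntervalIntegrable (fun τ => h 0 * (l * Real.exp (-l * τ))) volume 0 T' :=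
      (continuous_const.mul hcont).intervalIntegrable 0 T'
    have hwint : IntegrableOn w (Set.uIcc (0:ℝ) T') := by
      rw [Set.uIcc_of_le hT'.le, integrableOn_Icc_iff_integrableOn_Ioc]
      exact (intervalIntegrable_iff_integrableOn_Ioc_of_le hT'.le).1 (T.ii_pair yd z hT'.le)
    have j2 : IntervalIntegrable
        (fun τ => l * Real.exp (-l * τ) * (∫ u in (0:ℝ)..τ, w u)) volume 0 T' := by
      apply ContinuousOn.intervalIntegrable
      exact hcont.continuousOn.mul (intervalIntegral.continuousOn_primitive_interval hwint)
    have j3 : IntervalIntegrable (fun τ => Real.exp (-l * τ) * w τ) volume 0 T' :=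
      T.ii_exp_pair (-l) yd z hT'.le
    have e1 : (∫ τ in (0:ℝ)..T', v τ)
        = (∫ τ in (0:ℝ)..T', (h 0 * (l * Real.exp (-l * τ))
            + l * Real.exp (-l * τ) * (∫ u in (0:ℝ)..τ, w u)))
          - ∫ τ in (0:ℝ)..T', Real.exp (-l * τ) * w τ := by
      rw [← intervalIntegral.integral_sub (j1.add j2) j3]
      exact intervalIntegral.integral_congr hpt
    have v1 : (∫ τ in (0:ℝ)..T', h 0 * (l * Real.exp (-l * τ)))
        = h 0 * (1 - Real.exp (-l * T')) := by
      rw [intervalIntegral.integral_const_mul,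
        intervalIntegral.integral_eq_sub_of_hasDerivAt (fun τ _ => hd τ)
          (hcont.intervalIntegrable 0 T')]
      simp only [mul_zero, neg_zero, Real.exp_zero]
      ring
    have v2 : (∫ τ in (0:ℝ)..T', l * Real.exp (-l * τ) * (∫ u in (0:ℝ)..τ, w u))
        = (∫ u in (0:ℝ)..T', Real.exp (-l * u) * w u)
          - Real.exp (-l * T') * (h T' - h 0) := by
      have htri := tri_fubini (f := w) (c := fun τ => l * Real.exp (-l * τ))
        (Cp := fun τ => -Real.exp (-l * τ))
        (B := T.M * Real.exp (|T.omega| * T') * ‖z‖ * ‖yd‖) hT'.le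
        hwm (T.bdd_pair yd z T') hcont hd
      rw [htri]
      have e2 : (∫ u in (0:ℝ)..T', (-Real.exp (-l * T') - -Real.exp (-l * u)) * w u)
          = ∫ u in (0:ℝ)..T',
              (Real.exp (-l * u) * w u - Real.exp (-l * T') * w u) := by
        apply intervalIntegral.integral_congr
        intro u _
        ring
      rw [e2, intervalIntegral.integral_sub j3 ((T.ii_pair yd z hT'.le).const_mul _),
        intervalIntegral.integral_const_mul, H T' hT' yd]
      simp only [hh, T.S_zero, LinearMap.id_coe, id_eq]
    rw [e1, intervalIntegral.integral_add j1 j2, v1, v2]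
    ring
  -- pass to the limit
  have h1 : Tendsto (fun T' => ∫ τ in (0:ℝ)..T', v τ) atTop
      (𝓝 (∫ τ in Set.Ioi (0:ℝ), v τ)) :=
    intervalIntegral_tendsto_integral_Ioi 0 hvint tendsto_id
  have h2 : Tendsto (fun T' => h 0 - Real.exp (-l * T') * h T') atTop (𝓝 (h 0)) := by
    have hz : Tendsto (fun T' => Real.exp (-l * T') * h T') atTop (𝓝 0) := by
      apply squeeze_zero_norm' (a := fun T' => (T.M * ‖y‖ * ‖yd‖) * Real.exp (-((l - T.omega) * T')))
      · filter_upwards [eventually_ge_atTop (0:ℝ)] with T' hT'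
        rw [Real.norm_eq_abs, abs_mul, Real.abs_exp]
        calc Real.exp (-l * T') * |h T'|
            ≤ Real.exp (-l * T') * (T.M * Real.exp (T.omega * T') * ‖y‖ * ‖yd‖) :=
              mul_le_mul_of_nonneg_left (T.bound T' hT' yd y) (Real.exp_pos _).le
          _ = T.M * ‖y‖ * ‖yd‖ * Real.exp (-((l - T.omega) * T')) := by
              rw [show -((l - T.omega) * T') = -l * T' + T.omega * T' by ring, Real.exp_add]
              ring
      · have ha : Tendsto (fun T' : ℝ => (l - T.omega) * T') atTop atTop :=
          Tendsto.const_mul_atTop (by linarith) tendsto_id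
        have hb := Real.tendsto_exp_neg_atTop_nhds_zero.comp ha
        have := hb.const_mul (T.M * ‖y‖ * ‖yd‖)
        simpa using this
    have := tendsto_const_nhds.sub hz (α := ℝ) (f := fun _ : ℝ => h 0) (l := atTop)
    simpa using this
  have hkey : (∫ τ in Set.Ioi (0:ℝ), v τ) = h 0 := by
    refine tendsto_nhds_unique (h1.congr' ?_) h2
    filter_upwards [eventually_gt_atTop (0:ℝ)] with T' hT' using hfin T' hT'
  rw [hvy, hkey, hh0]
end Helpers

/-- Lemma 2.2 of Diekmann–Verduyn Lunel: characterization of the generator of a twin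
semigroup.  For `y z : Y`, `y ∈ D(C)` with `z ∈ Cy` (i.e. `y = S̄(λ)(λy − z)` for some
`λ > ω`) iff `∫₀ᵗ y⋄S(τ)z dτ = y⋄S(t)y − ⟨y⋄,y⟩` for all `t > 0` and all `y⋄`;
moreover if the resolvent identity holds for one `λ > ω` it holds for all `λ > ω`. -/
theorem twin_generator_characterization
    {Y Yd : Type*} [NormedAddCommGroup Y] [NormedSpace ℝ Y] [CompleteSpace Y]
    [NormedAddCommGroup Yd] [NormedSpace ℝ Yd] [CompleteSpace Yd]
    (P : NormingDualPair Y Yd) (T : TwinSemigroup Y Yd P) (y z : Y) :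
    ((∃ l : ℝ, T.omega < l ∧ y = T.lap l (l • y - z)) ↔
      (∀ t : ℝ, 0 < t → ∀ yd : Yd,
        (∫ τ in (0:ℝ)..t, P.pair yd (T.S τ z)) = P.pair yd (T.S t y) - P.pair yd y))
    ∧ ((∃ l : ℝ, T.omega < l ∧ y = T.lap l (l • y - z)) →
        ∀ l : ℝ, T.omega < l → y = T.lap l (l • y - z)) := by
  constructor
  · constructor
    · rintro ⟨l, hl, hy⟩ t ht yd
      exact T.key1 hl hy ht yd
    · intro H
      exact ⟨T.omega + 1, by linarith, T.key2 H (by linarith)⟩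
  · rintro ⟨l, hl, hy⟩ l' hl'
    exact T.key2 (fun t ht yd => T.key1 hl hy ht yd) hl'
end

section
/- Let {S(t)}_{t≥0} be a twin semigroup on a norming dual pair (Y,Y⋄) with constants M ≥ 1, ω ∈ ℝ and Laplace transform S̄(λ) for λ > ω. Then for every t > 0 and y ∈ Y there exists an element w ∈ Y (denoted ∫₀ᵗ S(τ)y dτ) such that ⟨y⋄, w⟩ = ∫₀ᵗ y⋄S(τ)y dτ for all y⋄ ∈ Y⋄; moreover w belongs to the domain of the generator C with S(t)y − y ∈ Cw, i.e. w = S̄(λ)(λ·w − (S(t)y − y)) for every λ > ω. -/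
open MeasureTheory Filter Topology

section Aux
variable {Y Yd : Type*} [NormedAddCommGroup Y] [NormedSpace ℝ Y] [CompleteSpace Y]
    [NormedAddCommGroup Yd] [NormedSpace ℝ Yd] [CompleteSpace Yd]
    (P : NormingDualPair Y Yd)

lemma NDP_norm_le (a : Y) (C : ℝ) (hC : 0 ≤ C) (h : ∀ yd : Yd, |P.pair yd a| ≤ C * ‖yd‖) :
    ‖a‖ ≤ C := by
  rw [P.norm_eq a]
  apply Real.sSup_le _ hC
  rintro r ⟨yd, hyd, rfl⟩
  calc |P.pair yd a| ≤ C * ‖yd‖ := h yd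
    _ ≤ C * 1 := by nlinarith
    _ = C := mul_one C

lemma NDP_eq_of_pair (a b : Y) (hab : ∀ yd : Yd, P.pair yd a = P.pair yd b) : a = b := by
  have h0 : ‖a - b‖ ≤ 0 := by
    apply NDP_norm_le P (a - b) 0 le_rfl
    intro yd
    simp [map_sub, hab yd]
  have h1 : ‖a - b‖ = 0 := le_antisymm h0 (norm_nonneg _)
  exact sub_eq_zero.1 (norm_eq_zero.1 h1)

end Aux

/-- shift: integral over `Ioi 0` of a shifted function. -/
lemma shift_Ioi (F : ℝ → ℝ) (a : ℝ) :
    ∫ τ in Set.Ioi (0:ℝ), F (τ + a) = ∫ u in Set.Ioi a, F u := by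
  calc ∫ τ in Set.Ioi (0:ℝ), F (τ + a)
      = ∫ τ, (Set.Ioi (0:ℝ)).indicator (fun τ => F (τ + a)) τ :=
        (MeasureTheory.integral_indicator measurableSet_Ioi).symm
    _ = ∫ τ, (Set.Ioi a).indicator F (τ + a) := by
        congr 1 with τ
        simp only [Set.indicator_apply, Set.mem_Ioi]
        have h : 0 < τ ↔ a < τ + a := by constructor <;> intro <;> linarith
        simp only [h]
    _ = ∫ u, (Set.Ioi a).indicator F u := integral_add_right_eq_self _ a
    _ = ∫ u in Set.Ioi a, F u := MeasureTheory.integral_indicator measurableSet_Ioi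

lemma split_Ioi (F : ℝ → ℝ) (h : ℝ) (h0 : 0 ≤ h) (hF : IntegrableOn F (Set.Ioi 0)) :
    ∫ τ in Set.Ioi (0:ℝ), F τ = (∫ τ in Set.Ioc (0:ℝ) h, F τ) + ∫ τ in Set.Ioi h, F τ := by
  rw [← Set.Ioc_union_Ioi_eq_Ioi h0]
  exact MeasureTheory.setIntegral_union (Set.Ioc_disjoint_Ioi le_rfl) measurableSet_Ioi
    (hF.mono_set Set.Ioc_subset_Ioi_self) (hF.mono_set (Set.Ioi_subset_Ioi h0))

lemma exp_int (l a b : ℝ) (hab : a ≤ b) :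
    ∫ τ in a..b, l * Real.exp (-l * τ) = Real.exp (-l * a) - Real.exp (-l * b) := by
  have h1 : ∀ τ ∈ Set.uIcc a b, HasDerivAt (fun x => -Real.exp (-l * x)) (l * Real.exp (-l * τ)) τ := by
    intro τ _
    have h := (((hasDerivAt_id τ).const_mul (-l)).exp).neg
    simp only [id] at h
    rw [show l * Real.exp (-l * τ) = -(Real.exp (-l * τ) * (-l * 1)) by ring]
    exact h
  have h2 : IntervalIntegrable (fun τ => l * Real.exp (-l * τ)) volume a b :=
    (continuous_const.mul (Real.continuous_exp.comp (continuous_const.mul continuous_id))).intervalIntegrable a b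
  rw [intervalIntegral.integral_eq_sub_of_hasDerivAt h1 h2]
  ring

section TAux
variable {Y Yd : Type*} [NormedAddCommGroup Y] [NormedSpace ℝ Y] [CompleteSpace Y]
    [NormedAddCommGroup Yd] [NormedSpace ℝ Yd] [CompleteSpace Yd]
    {P : NormingDualPair Y Yd} (T : TwinSemigroup Y Yd P)

lemma TL_meas (yd : Yd) (y : Y) (l c : ℝ) :
    Measurable (fun τ : ℝ => Real.exp (-l * τ) * P.pair yd (T.S (τ + c) y)) :=
  (Real.measurable_exp.comp (measurable_id.const_mul (-l))).mul
    ((T.meas yd y).comp (measurable_id.add_const c))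

lemma TL_int1 (l c : ℝ) (hl : T.omega < l) (hc : 0 ≤ c) (yd : Yd) (y : Y) :
    IntegrableOn (fun τ => Real.exp (-l * τ) * P.pair yd (T.S (τ + c) y)) (Set.Ioi 0) := by
  have hM : (0:ℝ) < T.M := lt_of_lt_of_le one_pos T.one_le_M
  apply Integrable.mono'
    (g := fun τ => (T.M * Real.exp (T.omega * c) * ‖y‖ * ‖yd‖) * Real.exp (-(l - T.omega) * τ))
  · exact (exp_neg_integrableOn_Ioi 0 (by linarith)).const_mul _
  · exact (TL_meas T yd y l c).aestronglyMeasurable.restrict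
  · filter_upwards [ae_restrict_mem measurableSet_Ioi] with τ hτ
    have hτ0 : (0:ℝ) < τ := hτ
    have hb := T.bound (τ + c) (by linarith) yd y
    have he : (0:ℝ) < Real.exp (-l * τ) := Real.exp_pos _
    calc ‖Real.exp (-l * τ) * P.pair yd (T.S (τ + c) y)‖
        = Real.exp (-l * τ) * |P.pair yd (T.S (τ + c) y)| := by
          rw [norm_mul, Real.norm_eq_abs, Real.norm_eq_abs, Real.abs_exp]
      _ ≤ Real.exp (-l * τ) * (T.M * Real.exp (T.omega * (τ + c)) * ‖y‖ * ‖yd‖) := by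
          exact mul_le_mul_of_nonneg_left hb he.le
      _ = (T.M * Real.exp (T.omega * c) * ‖y‖ * ‖yd‖) * Real.exp (-(l - T.omega) * τ) := by
          rw [show Real.exp (-l*τ) * (T.M * Real.exp (T.omega * (τ + c)) * ‖y‖ * ‖yd‖)
              = (T.M * ‖y‖ * ‖yd‖) * (Real.exp (-l*τ) * Real.exp (T.omega * (τ + c))) by ring,
            ← Real.exp_add,
            show T.M * Real.exp (T.omega * c) * ‖y‖ * ‖yd‖ * Real.exp (-(l - T.omega) * τ)
              = (T.M * ‖y‖ * ‖yd‖) * (Real.exp (T.omega * c) * Real.exp (-(l - T.omega) * τ)) by ring,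
            ← Real.exp_add]
          ring_nf

lemma TL_int1' (l : ℝ) (hl : T.omega < l) (yd : Yd) (y : Y) :
    IntegrableOn (fun τ => Real.exp (-l * τ) * P.pair yd (T.S τ y)) (Set.Ioi 0) := by
  have h := TL_int1 T l 0 hl le_rfl yd y
  simpa using h

lemma TL_int2 (a b : ℝ) (ha : 0 ≤ a) (yd : Yd) (y : Y) :
    IntegrableOn (fun u => P.pair yd (T.S u y)) (Set.Ioc a b) := by
  have hM : (0:ℝ) < T.M := lt_of_lt_of_le one_pos T.one_le_M
  apply Integrable.mono'
    (g := fun _ => T.M * Real.exp (|T.omega| * max b 0) * ‖y‖ * ‖yd‖)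
  · exact integrableOn_const measure_Ioc_lt_top.ne
  · exact (T.meas yd y).aestronglyMeasurable.restrict
  · filter_upwards [ae_restrict_mem measurableSet_Ioc] with u hu
    have h0u : 0 ≤ u := le_of_lt (lt_of_le_of_lt ha hu.1)
    have hub : u ≤ max b 0 := le_max_of_le_left hu.2
    have hexp : Real.exp (T.omega * u) ≤ Real.exp (|T.omega| * max b 0) := by
      apply Real.exp_le_exp.2
      calc T.omega * u ≤ |T.omega| * u := mul_le_mul_of_nonneg_right (le_abs_self _) h0u
        _ ≤ |T.omega| * max b 0 := mul_le_mul_of_nonneg_left hub (abs_nonneg _)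
    calc ‖P.pair yd (T.S u y)‖ = |P.pair yd (T.S u y)| := rfl
      _ ≤ T.M * Real.exp (T.omega * u) * ‖y‖ * ‖yd‖ := T.bound u h0u yd y
      _ ≤ T.M * Real.exp (|T.omega| * max b 0) * ‖y‖ * ‖yd‖ :=
          mul_le_mul_of_nonneg_right (mul_le_mul_of_nonneg_right
            (mul_le_mul_of_nonneg_left hexp hM.le) (norm_nonneg y)) (norm_nonneg yd)

/-- The exact per-piece Laplace identity. -/
lemma TL_L1 (l h : ℝ) (hl : T.omega < l) (hh : 0 ≤ h) (yd : Yd) (z : Y) :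
    P.pair yd (T.lap l z) - Real.exp (-l * h) * P.pair yd (T.lap l (T.S h z))
      = ∫ s in Set.Ioc (0:ℝ) h, Real.exp (-l * s) * P.pair yd (T.S s z) := by
  have e1 : P.pair yd (T.lap l z)
      = ∫ τ in Set.Ioi (0:ℝ), Real.exp (-l * τ) * P.pair yd (T.S τ z) := T.lap_eq l hl yd z
  have e2 : P.pair yd (T.lap l (T.S h z))
      = ∫ τ in Set.Ioi (0:ℝ), Real.exp (-l * τ) * P.pair yd (T.S (τ + h) z) := by
    rw [T.lap_eq l hl yd (T.S h z)]
    apply setIntegral_congr_fun measurableSet_Ioi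
    intro τ hτ
    have h2 : T.S (τ + h) z = T.S τ (T.S h z) := T.S_add τ h (le_of_lt hτ) hh z
    dsimp only
    rw [← h2]
  have e3 : Real.exp (-l * h) * ∫ τ in Set.Ioi (0:ℝ), Real.exp (-l * τ) * P.pair yd (T.S (τ + h) z)
      = ∫ τ in Set.Ioi (0:ℝ), Real.exp (-l * (τ + h)) * P.pair yd (T.S (τ + h) z) := by
    rw [← MeasureTheory.integral_const_mul]
    apply setIntegral_congr_fun measurableSet_Ioi
    intro τ _
    dsimp only
    rw [← mul_assoc, ← Real.exp_add]
    ring_nf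
  have e4 : (∫ τ in Set.Ioi (0:ℝ), Real.exp (-l * (τ + h)) * P.pair yd (T.S (τ + h) z))
      = ∫ u in Set.Ioi h, Real.exp (-l * u) * P.pair yd (T.S u z) :=
    shift_Ioi (fun u => Real.exp (-l * u) * P.pair yd (T.S u z)) h
  have e5 := split_Ioi (fun u => Real.exp (-l * u) * P.pair yd (T.S u z)) h hh
    (TL_int1' T l hl yd z)
  rw [e1, e2, e3, e4]
  rw [e5]
  ring

set_option maxHeartbeats 1000000 in
lemma TL_part1 (P : NormingDualPair Y Yd) (T : TwinSemigroup Y Yd P) (t : ℝ) (ht : 0 < t) (y : Y) :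
    ∃ w : Y, ∀ yd : Yd, P.pair yd w = ∫ τ in (0:ℝ)..t, P.pair yd (T.S τ y) := by
  have hM : (0:ℝ) < T.M := lt_of_lt_of_le one_pos T.one_le_M
  set lam : ℝ := max T.omega 0 + 1 with hlam_def
  have hlam : T.omega < lam := lt_of_le_of_lt (le_max_left _ _) (by rw [hlam_def]; linarith)
  have hlam0 : 0 < lam := lt_of_le_of_lt (le_max_right _ _) (by rw [hlam_def]; linarith)
  set K : ℝ := T.M * Real.exp (|T.omega| * t) * ‖y‖ with hK_def
  have hK0 : 0 ≤ K := by positivity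
  have hfb : ∀ (yd : Yd) (u : ℝ), 0 ≤ u → u ≤ t → |P.pair yd (T.S u y)| ≤ K * ‖yd‖ := by
    intro yd u h0 h1
    have hexp : Real.exp (T.omega * u) ≤ Real.exp (|T.omega| * t) := by
      apply Real.exp_le_exp.2
      calc T.omega * u ≤ |T.omega| * u := mul_le_mul_of_nonneg_right (le_abs_self _) h0
        _ ≤ |T.omega| * t := mul_le_mul_of_nonneg_left h1 (abs_nonneg _)
    calc |P.pair yd (T.S u y)| ≤ T.M * Real.exp (T.omega * u) * ‖y‖ * ‖yd‖ := T.bound u h0 yd y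
      _ ≤ K * ‖yd‖ := mul_le_mul_of_nonneg_right (mul_le_mul_of_nonneg_right
            (mul_le_mul_of_nonneg_left hexp hM.le) (norm_nonneg y)) (norm_nonneg yd)
  set wseq : ℕ → Y := fun n => ∑ j ∈ Finset.range (n+1),
      (T.lap lam (T.S ((j:ℝ) * (t/((n:ℝ)+1))) y)
        - Real.exp (-lam * (t/((n:ℝ)+1))) • T.lap lam (T.S (t/((n:ℝ)+1)) (T.S ((j:ℝ) * (t/((n:ℝ)+1))) y)))
    with hwseq_def
  have key : ∀ (n : ℕ) (yd : Yd),
      |P.pair yd (wseq n) - ∫ τ in (0:ℝ)..t, P.pair yd (T.S τ y)|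
        ≤ lam * t^2 * K * ‖yd‖ / ((n:ℝ)+1) := by
    intro n yd
    have hn1 : (0:ℝ) < (n:ℝ)+1 := by positivity
    set h : ℝ := t / ((n:ℝ)+1) with hh_def
    have hh0 : 0 < h := div_pos ht hn1
    have hjh : ∀ j : ℕ, (0:ℝ) ≤ (j:ℝ) * h := fun j => mul_nonneg (Nat.cast_nonneg j) hh0.le
    have hjt : ∀ j : ℕ, j < n + 1 → ∀ s ∈ Set.Ioc (0:ℝ) h, 0 ≤ s + (j:ℝ)*h ∧ s + (j:ℝ)*h ≤ t := by
      intro j hj s hs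
      have hjn : (j:ℝ) ≤ (n:ℝ) := by exact_mod_cast Nat.lt_succ_iff.1 hj
      constructor
      · have := hs.1; nlinarith [hjh j]
      · have h2 : s + (j:ℝ)*h ≤ h + (n:ℝ)*h := by nlinarith [hs.2]
        have h3 : h + (n:ℝ)*h = t := by
          rw [hh_def]; field_simp; ring
        linarith
    -- (a)+(b)+(c): weak value of wseq n
    have pair_sum : P.pair yd (wseq n) = ∑ j ∈ Finset.range (n+1),
        ∫ s in Set.Ioc (0:ℝ) h, Real.exp (-lam * s) * P.pair yd (T.S (s + (j:ℝ)*h) y) := by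
      rw [hwseq_def]
      rw [map_sum]
      apply Finset.sum_congr rfl
      intro j _
      rw [map_sub, _root_.map_smul, smul_eq_mul]
      rw [TL_L1 T lam h hlam hh0.le yd (T.S ((j:ℝ)*h) y)]
      apply setIntegral_congr_fun measurableSet_Ioc
      intro s hs
      dsimp only
      rw [← T.S_add s ((j:ℝ)*h) hs.1.le (hjh j) y]
    -- (d): the target as a sum
    have tgt_sum : (∫ τ in (0:ℝ)..t, P.pair yd (T.S τ y)) = ∑ j ∈ Finset.range (n+1),
        ∫ s in Set.Ioc (0:ℝ) h, P.pair yd (T.S (s + (j:ℝ)*h) y) := by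
      have hint : ∀ k < n+1, IntervalIntegrable (fun u => P.pair yd (T.S u y)) volume
          ((fun k : ℕ => (k:ℝ)*h) k) ((fun k : ℕ => (k:ℝ)*h) (k+1)) := by
        intro k _
        simp only
        have hle : (k:ℝ)*h ≤ ((k:ℝ)+1)*h := by nlinarith
        have hcast : (((k+1:ℕ)):ℝ) = (k:ℝ)+1 := by push_cast; ring
        rw [hcast, intervalIntegrable_iff_integrableOn_Ioc_of_le hle]
        exact TL_int2 T _ _ (hjh k) yd y
      have hsum := intervalIntegral.sum_integral_adjacent_intervals hint
      have ha0 : ((0:ℕ):ℝ)*h = 0 := by simp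
      have haN : (((n+1:ℕ)):ℝ)*h = t := by push_cast; rw [hh_def]; field_simp
      rw [ha0, haN] at hsum
      rw [← hsum]
      apply Finset.sum_congr rfl
      intro j _
      have hcomp := intervalIntegral.integral_comp_add_right (a := (0:ℝ)) (b := h)
        (fun u => P.pair yd (T.S u y)) ((j:ℝ)*h)
      rw [show (0:ℝ) + (j:ℝ)*h = (j:ℝ)*h by ring, show h + (j:ℝ)*h = (((j+1:ℕ)):ℝ)*h by push_cast; ring] at hcomp
      rw [← hcomp, intervalIntegral.integral_of_le hh0.le]
    -- (e): the error estimate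
    have i1 : ∀ j : ℕ, j < n+1 → IntegrableOn
        (fun s => P.pair yd (T.S (s + (j:ℝ)*h) y)) (Set.Ioc (0:ℝ) h) := by
      intro j hj
      apply Integrable.mono' (g := fun _ => K * ‖yd‖)
      · exact integrableOn_const measure_Ioc_lt_top.ne
      · exact ((T.meas yd y).comp (measurable_id.add_const _)).aestronglyMeasurable.restrict
      · filter_upwards [ae_restrict_mem measurableSet_Ioc] with s hs
        obtain ⟨hge, hle⟩ := hjt j hj s hs
        exact hfb yd _ hge hle
    have i2 : ∀ j : ℕ, j < n+1 → IntegrableOn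
        (fun s => Real.exp (-lam * s) * P.pair yd (T.S (s + (j:ℝ)*h) y)) (Set.Ioc (0:ℝ) h) := by
      intro j hj
      apply Integrable.mono' (g := fun _ => K * ‖yd‖)
      · exact integrableOn_const measure_Ioc_lt_top.ne
      · exact (TL_meas T yd y lam ((j:ℝ)*h)).aestronglyMeasurable.restrict
      · filter_upwards [ae_restrict_mem measurableSet_Ioc] with s hs
        obtain ⟨hge, hle⟩ := hjt j hj s hs
        have he1 : Real.exp (-lam * s) ≤ 1 := Real.exp_le_one_iff.2 (by nlinarith [hs.1])
        calc ‖Real.exp (-lam*s) * P.pair yd (T.S (s + (j:ℝ)*h) y)‖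
            = Real.exp (-lam*s) * |P.pair yd (T.S (s + (j:ℝ)*h) y)| := by
              rw [norm_mul, Real.norm_eq_abs, Real.norm_eq_abs, Real.abs_exp]
          _ ≤ 1 * (K * ‖yd‖) := mul_le_mul he1 (hfb yd _ hge hle) (abs_nonneg _) one_pos.le
          _ = K * ‖yd‖ := one_mul _
    have piece : ∀ j : ℕ, j < n+1 →
        |(∫ s in Set.Ioc (0:ℝ) h, Real.exp (-lam * s) * P.pair yd (T.S (s + (j:ℝ)*h) y))
          - ∫ s in Set.Ioc (0:ℝ) h, P.pair yd (T.S (s + (j:ℝ)*h) y)|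
        ≤ (lam * h * (K * ‖yd‖)) * h := by
      intro j hj
      rw [← integral_sub (i2 j hj) (i1 j hj)]
      have hmeas : AEStronglyMeasurable
          (fun s => Real.exp (-lam * s) * P.pair yd (T.S (s + (j:ℝ)*h) y)
            - P.pair yd (T.S (s + (j:ℝ)*h) y)) (volume.restrict (Set.Ioc (0:ℝ) h)) :=
        ((TL_meas T yd y lam ((j:ℝ)*h)).sub
          ((T.meas yd y).comp (measurable_id.add_const _))).aestronglyMeasurable.restrict
      have hb : ∀ s ∈ Set.Ioc (0:ℝ) h,
          ‖Real.exp (-lam * s) * P.pair yd (T.S (s + (j:ℝ)*h) y)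
            - P.pair yd (T.S (s + (j:ℝ)*h) y)‖ ≤ lam * h * (K * ‖yd‖) := by
        intro s hs
        obtain ⟨hge, hle⟩ := hjt j hj s hs
        have hs0 : 0 < s := hs.1
        have hfs := hfb yd _ hge hle
        have hexp1 : Real.exp (-lam * s) ≤ 1 := Real.exp_le_one_iff.2 (by nlinarith)
        have hexp2 : 1 - Real.exp (-lam * s) ≤ lam * s := by
          have := Real.add_one_le_exp (-(lam * s))
          have h2 : -(lam*s) = -lam * s := by ring
          rw [h2] at this; linarith
        rw [show Real.exp (-lam * s) * P.pair yd (T.S (s + (j:ℝ)*h) y)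
            - P.pair yd (T.S (s + (j:ℝ)*h) y)
            = (Real.exp (-lam * s) - 1) * P.pair yd (T.S (s + (j:ℝ)*h) y) from by ring]
        calc ‖(Real.exp (-lam * s) - 1) * P.pair yd (T.S (s + (j:ℝ)*h) y)‖
            = |Real.exp (-lam * s) - 1| * |P.pair yd (T.S (s + (j:ℝ)*h) y)| := by
              rw [norm_mul, Real.norm_eq_abs, Real.norm_eq_abs]
          _ = (1 - Real.exp (-lam * s)) * |P.pair yd (T.S (s + (j:ℝ)*h) y)| := by
              rw [abs_of_nonpos (by linarith)]; ring_nf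
          _ ≤ (lam * s) * (K * ‖yd‖) := by
              apply mul_le_mul hexp2 hfs (abs_nonneg _)
              nlinarith
          _ ≤ lam * h * (K * ‖yd‖) := by
              have hKy : 0 ≤ K * ‖yd‖ := mul_nonneg hK0 (norm_nonneg yd)
              have : lam * s ≤ lam * h := mul_le_mul_of_nonneg_left hs.2 hlam0.le
              nlinarith
      have := norm_setIntegral_le_of_norm_le_const (μ := volume) (s := Set.Ioc (0:ℝ) h)
        measure_Ioc_lt_top hb
      rw [Real.volume_real_Ioc_of_le (by linarith), sub_zero] at this
      exact this
    rw [pair_sum, tgt_sum, ← Finset.sum_sub_distrib]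
    calc |∑ j ∈ Finset.range (n+1),
        ((∫ s in Set.Ioc (0:ℝ) h, Real.exp (-lam * s) * P.pair yd (T.S (s + (j:ℝ)*h) y))
          - ∫ s in Set.Ioc (0:ℝ) h, P.pair yd (T.S (s + (j:ℝ)*h) y))|
        ≤ ∑ j ∈ Finset.range (n+1), |(∫ s in Set.Ioc (0:ℝ) h, Real.exp (-lam * s) * P.pair yd (T.S (s + (j:ℝ)*h) y))
          - ∫ s in Set.Ioc (0:ℝ) h, P.pair yd (T.S (s + (j:ℝ)*h) y)| := Finset.abs_sum_le_sum_abs _ _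
      _ ≤ ∑ j ∈ Finset.range (n+1), (lam * h * (K * ‖yd‖)) * h := by
          apply Finset.sum_le_sum
          intro j hjmem
          exact piece j (Finset.mem_range.1 hjmem)
      _ = ((n:ℝ)+1) * ((lam * h * (K * ‖yd‖)) * h) := by
          rw [Finset.sum_const, Finset.card_range]
          push_cast; ring
      _ = lam * t^2 * K * ‖yd‖ / ((n:ℝ)+1) := by
          rw [hh_def]; field_simp
  -- Cauchy sequence
  have hC0 : 0 ≤ lam * t^2 * K := by positivity
  have hseq : ∀ (n m N : ℕ), N ≤ n → N ≤ m →
      dist (wseq n) (wseq m) ≤ 2 * (lam * t^2 * K) / ((N:ℝ)+1) := by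
    intro n m N hn hm
    rw [dist_eq_norm]
    apply NDP_norm_le P _ _ (by positivity)
    intro yd
    have k1 := key n yd
    have k2 := key m yd
    have hmono : ∀ p q : ℕ, q ≤ p →
        lam * t^2 * K * ‖yd‖ / ((p:ℝ)+1) ≤ lam * t^2 * K * ‖yd‖ / ((q:ℝ)+1) := by
      intro p q hqp
      gcongr
      all_goals first | positivity | exact_mod_cast hqp
    have h1 := le_trans k1 (hmono n N hn)
    have h2 := le_trans k2 (hmono m N hm)
    calc |P.pair yd (wseq n - wseq m)|
        = |(P.pair yd (wseq n) - ∫ τ in (0:ℝ)..t, P.pair yd (T.S τ y))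
          - (P.pair yd (wseq m) - ∫ τ in (0:ℝ)..t, P.pair yd (T.S τ y))| := by
          rw [map_sub]; ring_nf
      _ ≤ |P.pair yd (wseq n) - ∫ τ in (0:ℝ)..t, P.pair yd (T.S τ y)|
          + |P.pair yd (wseq m) - ∫ τ in (0:ℝ)..t, P.pair yd (T.S τ y)| := abs_sub _ _
      _ ≤ lam * t^2 * K * ‖yd‖ / ((N:ℝ)+1) + lam * t^2 * K * ‖yd‖ / ((N:ℝ)+1) := add_le_add h1 h2
      _ = 2 * (lam * t^2 * K) / ((N:ℝ)+1) * ‖yd‖ := by ring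
  have htend : Tendsto (fun N : ℕ => 2 * (lam * t^2 * K) / ((N:ℝ)+1)) atTop (𝓝 0) := by
    have h1 := tendsto_const_div_atTop_nhds_zero_nat (2 * (lam * t^2 * K))
    have h2 := h1.comp (tendsto_add_atTop_nat 1)
    refine h2.congr fun N => ?_
    simp only [Function.comp_apply]
    push_cast; ring
  have hc : CauchySeq wseq := cauchySeq_of_le_tendsto_0 _ hseq htend
  obtain ⟨w, hw⟩ := cauchySeq_tendsto_of_complete hc
  refine ⟨w, fun yd => ?_⟩
  have hcont : Tendsto (fun n => P.pair yd (wseq n)) atTop (𝓝 (P.pair yd w)) := by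
    have hb : ∀ x : Y, ‖P.pair yd x‖ ≤ (P.M * ‖yd‖) * ‖x‖ := by
      intro x
      rw [Real.norm_eq_abs]
      calc |P.pair yd x| ≤ P.M * ‖yd‖ * ‖x‖ := P.pair_bound yd x
        _ = (P.M * ‖yd‖) * ‖x‖ := by ring
    have := (((P.pair yd).mkContinuous (P.M * ‖yd‖) hb).continuous.tendsto w).comp hw
    exact this
  have hdiff : Tendsto (fun n : ℕ => |P.pair yd (wseq n) - ∫ τ in (0:ℝ)..t, P.pair yd (T.S τ y)|)
      atTop (𝓝 |P.pair yd w - ∫ τ in (0:ℝ)..t, P.pair yd (T.S τ y)|) :=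
    (continuous_abs.tendsto _).comp (hcont.sub tendsto_const_nhds)
  have hbnd : Tendsto (fun n : ℕ => lam * t^2 * K * ‖yd‖ / ((n:ℝ)+1)) atTop (𝓝 0) := by
    have h1 := tendsto_const_div_atTop_nhds_zero_nat (lam * t^2 * K * ‖yd‖)
    have h2 := h1.comp (tendsto_add_atTop_nat 1)
    refine h2.congr fun N => ?_
    simp only [Function.comp_apply]
    push_cast; ring
  have hle : |P.pair yd w - ∫ τ in (0:ℝ)..t, P.pair yd (T.S τ y)| ≤ 0 :=
    le_of_tendsto_of_tendsto' hdiff hbnd (fun n => key n yd)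
  have := abs_nonneg (P.pair yd w - ∫ τ in (0:ℝ)..t, P.pair yd (T.S τ y))
  have h0 : |P.pair yd w - ∫ τ in (0:ℝ)..t, P.pair yd (T.S τ y)| = 0 := le_antisymm hle this
  have := abs_eq_zero.1 h0
  linarith [sub_eq_zero.1 this]

set_option maxHeartbeats 1600000 in
lemma TL_part2 (P : NormingDualPair Y Yd) (T : TwinSemigroup Y Yd P) (t : ℝ) (ht : 0 < t)
    (y w : Y) (hw : ∀ yd : Yd, P.pair yd w = ∫ τ in (0:ℝ)..t, P.pair yd (T.S τ y))
    (l : ℝ) (hl : T.omega < l) : w = T.lap l (l • w - (T.S t y - y)) := by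
  apply NDP_eq_of_pair P
  intro yd
  set A : ℝ := ∫ u in Set.Ioc (0:ℝ) t, Real.exp (-l*u) * P.pair yd (T.S u y) with hA_def
  set B : ℝ := ∫ u in Set.Ioi t, Real.exp (-l*u) * P.pair yd (T.S u y) with hB_def
  set F : ℝ := ∫ u in Set.Ioc (0:ℝ) t, P.pair yd (T.S u y) with hF_def
  set Q : ℝ := ∫ τ in Set.Ioi (0:ℝ), Real.exp (-l*τ) * P.pair yd (T.S τ w) with hQ_def
  have hwF : P.pair yd w = F := by
    rw [hw yd, intervalIntegral.integral_of_le ht.le]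
  -- the weak identity for S τ w
  have hq : ∀ τ : ℝ, 0 ≤ τ →
      P.pair yd (T.S τ w) = ∫ u in Set.Ioc τ (τ+t), P.pair yd (T.S u y) := by
    intro τ hτ
    have h2 : Set.EqOn (fun σ => P.pair (T.Sd τ yd) (T.S σ y))
        (fun σ => P.pair yd (T.S (σ+τ) y)) (Set.uIcc 0 t) := by
      intro σ hσ
      rw [Set.uIcc_of_le ht.le] at hσ
      dsimp only
      rw [T.compat τ hτ yd (T.S σ y), ← T.S_add τ σ hτ hσ.1 y, add_comm τ σ]
    have h3 := intervalIntegral.integral_comp_add_right (a := (0:ℝ)) (b := t)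
      (fun u => P.pair yd (T.S u y)) τ
    calc P.pair yd (T.S τ w) = P.pair (T.Sd τ yd) w := (T.compat τ hτ yd w).symm
      _ = ∫ σ in (0:ℝ)..t, P.pair (T.Sd τ yd) (T.S σ y) := hw _
      _ = ∫ σ in (0:ℝ)..t, P.pair yd (T.S (σ+τ) y) := intervalIntegral.integral_congr h2
      _ = ∫ u in ((0:ℝ)+τ)..(t+τ), P.pair yd (T.S u y) := h3
      _ = ∫ u in Set.Ioc τ (τ+t), P.pair yd (T.S u y) := by
          rw [zero_add, add_comm t τ, intervalIntegral.integral_of_le (by linarith)]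
  -- expand the Laplace transform
  have hzero : P.pair yd (T.lap l (l • w - (T.S t y - y)))
      = ∫ τ in Set.Ioi (0:ℝ), Real.exp (-l*τ) *
          (l * P.pair yd (T.S τ w) - P.pair yd (T.S (τ+t) y) + P.pair yd (T.S τ y)) := by
    rw [T.lap_eq l hl]
    apply setIntegral_congr_fun measurableSet_Ioi
    intro τ hτ
    dsimp only
    congr 1
    have hS : T.S τ (l • w - (T.S t y - y)) = l • T.S τ w - (T.S τ (T.S t y) - T.S τ y) := by
      rw [map_sub, _root_.map_smul, map_sub]
    rw [hS, map_sub, _root_.map_smul, map_sub, smul_eq_mul,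
      ← T.S_add τ t (le_of_lt hτ) ht.le y]
    ring
  -- integrable pieces
  have hq_int : IntegrableOn (fun τ => Real.exp (-l*τ) * P.pair yd (T.S τ w)) (Set.Ioi 0) :=
    TL_int1' T l hl yd w
  have hft_int : IntegrableOn (fun τ => Real.exp (-l*τ) * P.pair yd (T.S (τ+t) y)) (Set.Ioi 0) :=
    TL_int1 T l t hl ht.le yd y
  have hf0_int : IntegrableOn (fun τ => Real.exp (-l*τ) * P.pair yd (T.S τ y)) (Set.Ioi 0) :=
    TL_int1' T l hl yd y
  -- split the main integral
  have hsplit : P.pair yd (T.lap l (l • w - (T.S t y - y)))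
      = l * Q - (∫ τ in Set.Ioi (0:ℝ), Real.exp (-l*τ) * P.pair yd (T.S (τ+t) y))
        + ∫ τ in Set.Ioi (0:ℝ), Real.exp (-l*τ) * P.pair yd (T.S τ y) := by
    rw [hzero]
    have hfe : (fun τ => Real.exp (-l*τ) *
          (l * P.pair yd (T.S τ w) - P.pair yd (T.S (τ+t) y) + P.pair yd (T.S τ y)))
        = fun τ => ((l * (Real.exp (-l*τ) * P.pair yd (T.S τ w))
            - Real.exp (-l*τ) * P.pair yd (T.S (τ+t) y))
            + Real.exp (-l*τ) * P.pair yd (T.S τ y)) := by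
      funext τ; ring
    have i1 : Integrable (fun τ => l * (Real.exp (-l*τ) * P.pair yd (T.S τ w))
        - Real.exp (-l*τ) * P.pair yd (T.S (τ+t) y)) (volume.restrict (Set.Ioi 0)) :=
      (hq_int.const_mul l).sub hft_int
    have i3 : Integrable (fun τ => l * (Real.exp (-l*τ) * P.pair yd (T.S τ w)))
        (volume.restrict (Set.Ioi 0)) := hq_int.const_mul l
    rw [hfe, integral_add i1 hf0_int, integral_sub i3 hft_int, MeasureTheory.integral_const_mul]
  -- E2 = exp(l t) * B
  have hE2 : (∫ τ in Set.Ioi (0:ℝ), Real.exp (-l*τ) * P.pair yd (T.S (τ+t) y))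
      = Real.exp (l*t) * B := by
    have h1 : (fun τ => Real.exp (-l*τ) * P.pair yd (T.S (τ+t) y))
        = fun τ => Real.exp (l*t) * (Real.exp (-l*(τ+t)) * P.pair yd (T.S (τ+t) y)) := by
      funext τ
      rw [← mul_assoc, ← Real.exp_add, show l*t + -l*(τ+t) = -l*τ from by ring]
    rw [h1, MeasureTheory.integral_const_mul,
      shift_Ioi (fun u => Real.exp (-l*u) * P.pair yd (T.S u y)) t]
  -- E3 = A + B
  have hE3 : (∫ τ in Set.Ioi (0:ℝ), Real.exp (-l*τ) * P.pair yd (T.S τ y)) = A + B :=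
    split_Ioi _ t ht.le hf0_int
  -- Fubini setup
  set Adom : Set (ℝ × ℝ) := {p : ℝ × ℝ | p.1 < p.2 ∧ p.2 ≤ p.1 + t} with hAdom_def
  have hAmeas : MeasurableSet Adom :=
    (measurableSet_lt measurable_fst measurable_snd).inter
      (measurableSet_le measurable_snd (measurable_fst.add_const t))
  set ψ : ℝ × ℝ → ℝ := fun p => l * Real.exp (-l * p.1) * P.pair yd (T.S p.2 y) with hψ_def
  have hψmeas : Measurable ψ :=
    ((Real.measurable_exp.comp (measurable_fst.const_mul (-l))).const_mul l).mul
      ((T.meas yd y).comp measurable_snd)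
  set Φ : ℝ × ℝ → ℝ := Adom.indicator ψ with hΦ_def
  set μ : Measure ℝ := volume.restrict (Set.Ioi (0:ℝ)) with hμ_def
  have hΦmeas : AEStronglyMeasurable Φ (μ.prod μ) :=
    (hψmeas.indicator hAmeas).aestronglyMeasurable
  have hslice : ∀ τ : ℝ, (fun u => Φ (τ, u))
      = (Set.Ioc τ (τ+t)).indicator (fun u => l * Real.exp (-l*τ) * P.pair yd (T.S u y)) := by
    intro τ; funext u
    simp only [hΦ_def, hψ_def, hAdom_def, Set.indicator_apply, Set.mem_setOf_eq, Set.mem_Ioc]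
  have htslice : ∀ u : ℝ, (fun τ => Φ (τ, u))
      = fun τ => (Set.Ico (u-t) u).indicator (fun τ => l * Real.exp (-l*τ)) τ
          * P.pair yd (T.S u y) := by
    intro u; funext τ
    simp only [hΦ_def, hψ_def, hAdom_def, Set.indicator_apply, Set.mem_setOf_eq, Set.mem_Ico]
    split_ifs with h1 h2 h2
    · ring
    · exact absurd ⟨by linarith [h1.2], h1.1⟩ h2
    · exact absurd ⟨h2.2, by linarith [h2.1]⟩ h1
    · ring
  -- integrability on the product
  have hsubset : ∀ τ : ℝ, 0 < τ → Set.Ioc τ (τ+t) ⊆ Set.Ioi (0:ℝ) := by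
    intro τ hτ u hu
    exact lt_trans hτ hu.1
  have hΦint : Integrable Φ (μ.prod μ) := by
    rw [MeasureTheory.integrable_prod_iff hΦmeas]
    constructor
    · filter_upwards [ae_restrict_mem measurableSet_Ioi] with τ hτ
      rw [hslice τ]
      exact (MeasureTheory.IntegrableOn.integrable_indicator
        ((TL_int2 T τ (τ+t) (le_of_lt hτ) yd y).const_mul
          (l * Real.exp (-l*τ))) measurableSet_Ioc).integrableOn
    · apply Integrable.mono'
        (g := fun τ => (|l| * (T.M * Real.exp (|T.omega| *t) * ‖y‖ * ‖yd‖) * t)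
          * Real.exp (-(l - T.omega) * τ))
      · exact (exp_neg_integrableOn_Ioi 0 (by linarith)).const_mul _
      · exact hΦmeas.norm.integral_prod_right'
      · filter_upwards [ae_restrict_mem measurableSet_Ioi] with τ hτ
        have hτ0 : (0:ℝ) < τ := hτ
        have hM : (0:ℝ) < T.M := lt_of_lt_of_le one_pos T.one_le_M
        set C' : ℝ := |l| * Real.exp (-l*τ) * (T.M * Real.exp (T.omega*τ + |T.omega| *t) * ‖y‖ * ‖yd‖) with hC'_def
        have hC'0 : 0 ≤ C' := by positivity
        have hbd : ∀ u ∈ Set.Ioc τ (τ+t),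
            ‖‖l * Real.exp (-l*τ) * P.pair yd (T.S u y)‖‖ ≤ C' := by
          intro u hu
          have h0u : 0 ≤ u := le_trans (le_of_lt hτ0) (le_of_lt hu.1)
          have hfu : |P.pair yd (T.S u y)| ≤ T.M * Real.exp (T.omega*u) * ‖y‖ * ‖yd‖ :=
            T.bound u h0u yd y
          have hexp : Real.exp (T.omega*u) ≤ Real.exp (T.omega*τ + |T.omega| *t) := by
            apply Real.exp_le_exp.2
            rcases le_or_gt 0 T.omega with hω | hω
            · nlinarith [hu.2, abs_of_nonneg hω]
            · nlinarith [hu.1.le, abs_of_neg hω]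
          rw [norm_norm, norm_mul, norm_mul, Real.norm_eq_abs, Real.norm_eq_abs,
            Real.norm_eq_abs, Real.abs_exp, hC'_def]
          have : |P.pair yd (T.S u y)| ≤ T.M * Real.exp (T.omega*τ + |T.omega| *t) * ‖y‖ * ‖yd‖ := by
            calc |P.pair yd (T.S u y)| ≤ T.M * Real.exp (T.omega*u) * ‖y‖ * ‖yd‖ := hfu
              _ ≤ T.M * Real.exp (T.omega*τ + |T.omega| *t) * ‖y‖ * ‖yd‖ :=
                mul_le_mul_of_nonneg_right (mul_le_mul_of_nonneg_right
                  (mul_le_mul_of_nonneg_left hexp hM.le) (norm_nonneg y)) (norm_nonneg yd)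
          have hpos : 0 ≤ |l| * Real.exp (-l*τ) := by positivity
          calc |l| * Real.exp (-l*τ) * |P.pair yd (T.S u y)|
              ≤ |l| * Real.exp (-l*τ) * (T.M * Real.exp (T.omega*τ + |T.omega| *t) * ‖y‖ * ‖yd‖) :=
                mul_le_mul_of_nonneg_left this hpos
            _ = _ := rfl
        have hnorm_int : (∫ u, ‖Φ (τ, u)‖ ∂μ) = ∫ u in Set.Ioc τ (τ+t),
            ‖l * Real.exp (-l*τ) * P.pair yd (T.S u y)‖ := by
          rw [hμ_def]
          have : (fun u => ‖Φ (τ, u)‖) = (Set.Ioc τ (τ+t)).indicator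
              (fun u => ‖l * Real.exp (-l*τ) * P.pair yd (T.S u y)‖) := by
            funext u
            rw [congrFun (hslice τ) u]
            exact norm_indicator_eq_indicator_norm _ u
          rw [this, MeasureTheory.integral_indicator measurableSet_Ioc,
            Measure.restrict_restrict measurableSet_Ioc,
            Set.inter_eq_left.2 (hsubset τ hτ0)]
        have hn := norm_setIntegral_le_of_norm_le_const (μ := volume)
          (s := Set.Ioc τ (τ+t)) measure_Ioc_lt_top hbd
        rw [Real.volume_real_Ioc_of_le (by linarith), show τ + t - τ = t from by ring] at hn
        have hint_nonneg : 0 ≤ ∫ u in Set.Ioc τ (τ+t),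
            ‖l * Real.exp (-l*τ) * P.pair yd (T.S u y)‖ :=
          setIntegral_nonneg measurableSet_Ioc (fun u _ => norm_nonneg _)
        rw [Real.norm_eq_abs, hnorm_int, abs_of_nonneg hint_nonneg]
        calc (∫ u in Set.Ioc τ (τ+t), ‖l * Real.exp (-l*τ) * P.pair yd (T.S u y)‖)
            ≤ C' * t := le_trans (le_abs_self _) hn
          _ = (|l| * (T.M * Real.exp (|T.omega| *t) * ‖y‖ * ‖yd‖) * t)
              * Real.exp (-(l - T.omega) * τ) := by
              rw [hC'_def,
                show Real.exp (T.omega*τ + |T.omega| * t)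
                  = Real.exp (T.omega*τ) * Real.exp (|T.omega| * t) from Real.exp_add _ _,
                show Real.exp (-(l - T.omega) * τ)
                  = Real.exp (-l*τ) * Real.exp (T.omega*τ) from by
                    rw [← Real.exp_add]; congr 1; ring]
              ring
  -- the swap
  have hunc : Function.uncurry (fun τ u => Φ (τ, u)) = Φ := rfl
  have hswap := MeasureTheory.integral_integral_swap (f := fun τ u => Φ (τ, u))
    (by rw [hunc]; exact hΦint)
  -- left iterated integral = l * Q
  have hleft : (∫ τ, (∫ u, Φ (τ, u) ∂μ) ∂μ) = l * Q := by
    rw [hQ_def, ← MeasureTheory.integral_const_mul, hμ_def]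
    apply setIntegral_congr_fun measurableSet_Ioi
    intro τ hτ
    dsimp only
    rw [hslice τ, MeasureTheory.integral_indicator measurableSet_Ioc,
      Measure.restrict_restrict measurableSet_Ioc, Set.inter_eq_left.2 (hsubset τ hτ),
      MeasureTheory.integral_const_mul, ← hq τ (le_of_lt hτ)]
    ring
  -- inner integral on the right
  have hinner : ∀ u ∈ Set.Ioi (0:ℝ), (∫ τ, Φ (τ, u) ∂μ)
      = P.pair yd (T.S u y) * (Real.exp (-l * max 0 (u-t)) - Real.exp (-l*u)) := by
    intro u hu
    have hu0 : (0:ℝ) < u := hu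
    rw [htslice u, MeasureTheory.integral_mul_const, hμ_def,
      MeasureTheory.integral_indicator measurableSet_Ico,
      Measure.restrict_restrict measurableSet_Ico]
    rcases le_or_gt u t with hut | hut
    · have hset : Set.Ico (u-t) u ∩ Set.Ioi 0 = Set.Ioo 0 u := by
        ext τ
        simp only [Set.mem_inter_iff, Set.mem_Ico, Set.mem_Ioi, Set.mem_Ioo]
        constructor
        · rintro ⟨⟨h1, h2⟩, h3⟩; exact ⟨h3, h2⟩
        · rintro ⟨h1, h2⟩; exact ⟨⟨by linarith, h2⟩, h1⟩
      rw [hset, ← MeasureTheory.integral_Ioc_eq_integral_Ioo,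
        ← intervalIntegral.integral_of_le hu0.le, exp_int l 0 u hu0.le,
        show max 0 (u-t) = 0 from max_eq_left (by linarith)]
      ring_nf
    · have hset : Set.Ico (u-t) u ∩ Set.Ioi 0 = Set.Ico (u-t) u := by
        apply Set.inter_eq_left.2
        intro τ hτ
        simp only [Set.mem_Ioi]
        have := hτ.1
        linarith [hτ.1]
      rw [hset, MeasureTheory.integral_Ico_eq_integral_Ioo,
        ← MeasureTheory.integral_Ioc_eq_integral_Ioo,
        ← intervalIntegral.integral_of_le (show u - t ≤ u from by linarith),
        exp_int l (u-t) u (by linarith),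
        show max 0 (u-t) = u - t from max_eq_right (by linarith)]
      ring_nf
  -- right iterated integral
  have hWint : IntegrableOn (fun u => ∫ τ, Φ (τ, u) ∂μ) (Set.Ioi 0) := by
    have := hΦint.integral_prod_right
    rwa [hμ_def] at this
  have hright : (∫ u, (∫ τ, Φ (τ, u) ∂μ) ∂μ) = (F - A) + (Real.exp (l*t) - 1) * B := by
    rw [hμ_def]
    rw [split_Ioi _ t ht.le hWint]
    have p1 : (∫ u in Set.Ioc (0:ℝ) t, ∫ τ, Φ (τ, u) ∂μ) = F - A := by
      have hcongr : Set.EqOn (fun u => ∫ τ, Φ (τ, u) ∂μ)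
          (fun u => P.pair yd (T.S u y) - Real.exp (-l*u) * P.pair yd (T.S u y))
          (Set.Ioc (0:ℝ) t) := by
        intro u hu
        dsimp only
        rw [hinner u hu.1, show max 0 (u-t) = 0 from max_eq_left (by linarith [hu.2])]
        simp [Real.exp_zero]
        ring
      rw [setIntegral_congr_fun measurableSet_Ioc hcongr,
        integral_sub (TL_int2 T 0 t le_rfl yd y) (hf0_int.mono_set Set.Ioc_subset_Ioi_self),
        hF_def, hA_def]
    have p2 : (∫ u in Set.Ioi t, ∫ τ, Φ (τ, u) ∂μ) = (Real.exp (l*t) - 1) * B := by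
      have hcongr : Set.EqOn (fun u => ∫ τ, Φ (τ, u) ∂μ)
          (fun u => (Real.exp (l*t) - 1) * (Real.exp (-l*u) * P.pair yd (T.S u y)))
          (Set.Ioi t) := by
        intro u hu
        have hu0 : (0:ℝ) < u := lt_trans ht hu
        dsimp only
        rw [hinner u hu0, show max 0 (u-t) = u - t from max_eq_right (by linarith [Set.mem_Ioi.1 hu])]
        rw [show -l * (u-t) = l*t + -l*u from by ring, Real.exp_add]
        ring
      rw [setIntegral_congr_fun measurableSet_Ioi hcongr,
        MeasureTheory.integral_const_mul, hB_def]
    rw [p1, p2]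
  -- put everything together
  have hlQ : l * Q = (F - A) + (Real.exp (l*t) - 1) * B := by
    rw [← hleft, hswap, hright]
  rw [hwF, hsplit, hE2, hE3, hlQ]
  ring

end TAux

/-- Lemma 2.3 of Diekmann–Verduyn Lunel: for a twin semigroup, the weak integral
`∫₀ᵗ S(τ)y dτ` is represented by an element `w` of `Y`, which belongs to the domain of
the generator `C` with `S(t)y − y ∈ Cw`, i.e. `w = S̄(λ)(λw − (S(t)y − y))` for every
`λ > ω`. -/
theorem twin_orbit_integral_mem_domain
    {Y Yd : Type*} [NormedAddCommGroup Y] [NormedSpace ℝ Y] [CompleteSpace Y]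
    [NormedAddCommGroup Yd] [NormedSpace ℝ Yd] [CompleteSpace Yd]
    (P : NormingDualPair Y Yd) (T : TwinSemigroup Y Yd P) :
    ∀ t : ℝ, 0 < t → ∀ y : Y, ∃ w : Y,
      (∀ yd : Yd, P.pair yd w = ∫ τ in (0:ℝ)..t, P.pair yd (T.S τ y)) ∧
      (∀ l : ℝ, T.omega < l → w = T.lap l (l • w - (T.S t y - y))) := by
  intro t ht y
  obtain ⟨w, hw⟩ := TL_part1 P T t ht y
  exact ⟨w, hw, fun l hl => TL_part2 P T t ht y w hw l hl⟩
end

section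
/- Let {S(t)}_{t≥0} be a twin semigroup on a norming dual pair (Y,Y⋄) with constants M ≥ 1, ω ∈ ℝ and Laplace transform S̄(λ) for λ > ω. If y, z ∈ Y satisfy y = S̄(λ)(λ·y − z) for some λ > ω (i.e. y ∈ D(C) and z ∈ Cy), then limsup_{h↓0} (1/h)‖S(h)y − y‖ ≤ M‖z‖; in particular this limsup is finite. -/
open MeasureTheory Filter Topology
open Set

lemma int_exp_aux (l u h : ℝ) :
    ∫ s in u..h, l * Real.exp (l*s) = Real.exp (l*h) - Real.exp (l*u) := by
  refine intervalIntegral.integral_eq_sub_of_hasDerivAt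
    (f := fun s => Real.exp (l*s)) (fun x _ => ?_) ?_
  · simpa [mul_comm] using (((hasDerivAt_id x).const_mul l).exp)
  · exact (continuous_const.mul
      (Real.continuous_exp.comp (continuous_const.mul continuous_id))).intervalIntegrable u h

lemma exp_mul_integrableOn_Ioc {l h : ℝ} {ψ : ℝ → ℝ} (hm : Measurable ψ)
    (hint : IntegrableOn ψ (Set.Ioc 0 h)) :
    IntegrableOn (fun u => Real.exp (l*u) * ψ u) (Set.Ioc 0 h) := by
  refine Integrable.mono' (hint.abs.const_mul (Real.exp (|l| * h)))
    ((Real.measurable_exp.comp (measurable_id.const_mul l)).mul hm).aestronglyMeasurable ?_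
  rw [ae_restrict_iff' measurableSet_Ioc]
  filter_upwards with u hu
  have h1 : l * u ≤ |l| * h :=
    le_trans (mul_le_mul_of_nonneg_right (le_abs_self l) hu.1.le)
      (mul_le_mul_of_nonneg_left hu.2 (abs_nonneg l))
  have habs : |Real.exp (l*u) * ψ u| = Real.exp (l*u) * |ψ u| := by
    rw [abs_mul, abs_of_pos (Real.exp_pos _)]
  rw [Real.norm_eq_abs, habs]
  exact mul_le_mul_of_nonneg_right (Real.exp_le_exp.2 h1) (abs_nonneg _)

lemma fubini_core {l h : ℝ} (hh : 0 < h) {ψ : ℝ → ℝ} (hm : Measurable ψ)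
    (hint : IntegrableOn ψ (Set.Ioc 0 h)) :
    IntegrableOn (fun s => l * Real.exp (l*s) * ∫ u in Set.Ioc 0 s, ψ u) (Set.Ioc 0 h) ∧
    ∫ s in Set.Ioc 0 h, l * Real.exp (l*s) * ∫ u in Set.Ioc 0 s, ψ u
      = Real.exp (l*h) * (∫ u in Set.Ioc 0 h, ψ u)
        - ∫ u in Set.Ioc 0 h, Real.exp (l*u) * ψ u := by
  set μ := volume.restrict (Set.Ioc (0:ℝ) h) with hμ
  haveI : IsFiniteMeasure μ := ⟨by
    rw [hμ, Measure.restrict_apply_univ]; exact measure_Ioc_lt_top⟩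
  set F : ℝ → ℝ → ℝ := fun s u => if u ≤ s then l * Real.exp (l*s) * ψ u else 0 with hF
  have hFmeas : Measurable (Function.uncurry F) := by
    have : Function.uncurry F =
        Set.indicator {p : ℝ × ℝ | p.2 ≤ p.1} (fun p => l * Real.exp (l*p.1) * ψ p.2) := by
      funext p
      simp only [Function.uncurry, hF, Set.indicator_apply, Set.mem_setOf_eq]
    rw [this]
    exact Measurable.indicator
      (((Real.measurable_exp.comp (measurable_fst.const_mul l)).const_mul l).mul
        (hm.comp measurable_snd))
      (measurableSet_le measurable_snd measurable_fst)
  have hprodres : μ.prod μ = (volume.prod volume).restrict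
      ((Set.Ioc (0:ℝ) h) ×ˢ (Set.Ioc (0:ℝ) h)) := by
    rw [hμ, Measure.prod_restrict]
  have hFint : Integrable (Function.uncurry F) (μ.prod μ) := by
    refine Integrable.mono'
      ((integrable_const (|l| * Real.exp (|l| * h))).mul_prod hint.abs)
      hFmeas.aestronglyMeasurable ?_
    rw [hprodres, ae_restrict_iff' (measurableSet_Ioc.prod measurableSet_Ioc)]
    filter_upwards with p hp
    obtain ⟨hp1, -⟩ := hp
    have h1 : l * p.1 ≤ |l| * h :=
      le_trans (mul_le_mul_of_nonneg_right (le_abs_self l) hp1.1.le)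
        (mul_le_mul_of_nonneg_left hp1.2 (abs_nonneg l))
    rw [Real.norm_eq_abs]
    show |F p.1 p.2| ≤ |l| * Real.exp (|l| * h) * |ψ p.2|
    rw [hF]
    by_cases hc : p.2 ≤ p.1
    · simp only [hc, if_true]
      rw [abs_mul, abs_mul, abs_of_pos (Real.exp_pos _)]
      exact mul_le_mul_of_nonneg_right
        (mul_le_mul_of_nonneg_left (Real.exp_le_exp.2 h1) (abs_nonneg l)) (abs_nonneg _)
    · simp only [hc, if_false, abs_zero]
      positivity
  have hswap : ∫ s, (∫ u, F s u ∂μ) ∂μ = ∫ u, (∫ s, F s u ∂μ) ∂μ :=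
    integral_integral_swap hFint
  have hleft : ∀ s ∈ Set.Ioc (0:ℝ) h,
      (∫ u, F s u ∂μ) = l * Real.exp (l*s) * ∫ u in Set.Ioc 0 s, ψ u := by
    intro s hs
    have hFs : ∀ u, F s u = Set.indicator (Set.Iic s) (fun u => l * Real.exp (l*s) * ψ u) u := by
      intro u; simp [hF, Set.indicator_apply, Set.mem_Iic]
    simp_rw [hμ, hFs]
    rw [setIntegral_indicator measurableSet_Iic, Set.Ioc_inter_Iic,
      min_eq_right hs.2, integral_const_mul]
  have hright : ∀ u ∈ Set.Ioc (0:ℝ) h,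
      (∫ s, F s u ∂μ) = ψ u * (Real.exp (l*h) - Real.exp (l*u)) := by
    intro u hu
    have hFu : ∀ s, F s u = Set.indicator (Set.Ici u) (fun s => l * Real.exp (l*s) * ψ u) s := by
      intro s; simp [hF, Set.indicator_apply, Set.mem_Ici]
    have hset : Set.Ioc (0:ℝ) h ∩ Set.Ici u = Set.Icc u h := by
      ext x
      simp only [Set.mem_inter_iff, Set.mem_Ioc, Set.mem_Ici, Set.mem_Icc]
      exact ⟨fun ⟨⟨_, hxh⟩, hux⟩ => ⟨hux, hxh⟩,
        fun ⟨hux, hxh⟩ => ⟨⟨lt_of_lt_of_le hu.1 hux, hxh⟩, hux⟩⟩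
    simp_rw [hμ, hFu]
    rw [setIntegral_indicator measurableSet_Ici, hset]
    have : ∫ s in Set.Icc u h, l * Real.exp (l*s) * ψ u
        = (∫ s in Set.Icc u h, l * Real.exp (l*s)) * ψ u := integral_mul_const _ _
    rw [this, integral_Icc_eq_integral_Ioc, ← intervalIntegral.integral_of_le hu.2,
      int_exp_aux, mul_comm]
  have hLHS : ∫ s, (∫ u, F s u ∂μ) ∂μ
      = ∫ s in Set.Ioc 0 h, l * Real.exp (l*s) * ∫ u in Set.Ioc 0 s, ψ u := by
    rw [hμ]
    exact setIntegral_congr_fun measurableSet_Ioc fun s hs => hleft s hs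
  have hRHS : ∫ u, (∫ s, F s u ∂μ) ∂μ
      = ∫ u in Set.Ioc 0 h, ψ u * (Real.exp (l*h) - Real.exp (l*u)) := by
    rw [hμ]
    exact setIntegral_congr_fun measurableSet_Ioc fun u hu => hright u hu
  have hfinal : ∫ u in Set.Ioc 0 h, ψ u * (Real.exp (l*h) - Real.exp (l*u))
      = Real.exp (l*h) * (∫ u in Set.Ioc 0 h, ψ u)
        - ∫ u in Set.Ioc 0 h, Real.exp (l*u) * ψ u := by
    have : ∫ u in Set.Ioc 0 h, ψ u * (Real.exp (l*h) - Real.exp (l*u))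
        = ∫ u in Set.Ioc 0 h,
            (Real.exp (l*h) * ψ u - Real.exp (l*u) * ψ u) :=
      integral_congr_ae (Filter.Eventually.of_forall fun u => by ring)
    rw [this, integral_sub (hint.const_mul _) (exp_mul_integrableOn_Ioc hm hint),
      integral_const_mul]
  constructor
  · have hmarg : Integrable (fun s => ∫ u, F s u ∂μ) μ := hFint.integral_prod_left
    refine (hmarg.congr ?_)
    exact (ae_restrict_mem measurableSet_Ioc).mono fun s hs => hleft s hs
  · rw [← hLHS, hswap, hRHS, hfinal]

lemma twin_key_identity
    {Y Yd : Type*} [NormedAddCommGroup Y] [NormedSpace ℝ Y] [CompleteSpace Y]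
    [NormedAddCommGroup Yd] [NormedSpace ℝ Yd] [CompleteSpace Yd]
    (P : NormingDualPair Y Yd) (T : TwinSemigroup Y Yd P) (y z : Y) {l : ℝ}
    (hl : T.omega < l) (hy' : y = T.lap l (l • y - z)) {h : ℝ} (hh : 0 < h) (yd : Yd) :
    P.pair yd (T.S h y) - P.pair yd y = ∫ s in Set.Ioc 0 h, P.pair yd (T.S s z) := by
  set w : Y := l • y - z with hwdef
  set f : ℝ → ℝ := fun t => P.pair yd (T.S t w) with hfdef
  set ψ : ℝ → ℝ := fun u => Real.exp (-l * u) * f u with hψdef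
  have hfm : Measurable f := T.meas yd w
  have hψm : Measurable ψ :=
    (Real.measurable_exp.comp (measurable_id.const_mul (-l))).mul hfm
  -- integrability of ψ on (0, ∞)
  have hψint : IntegrableOn ψ (Set.Ioi 0) := by
    refine Integrable.mono'
      ((exp_neg_integrableOn_Ioi 0 (show (0:ℝ) < l - T.omega by linarith)).const_mul
        (T.M * ‖w‖ * ‖yd‖)) hψm.aestronglyMeasurable ?_
    rw [ae_restrict_iff' measurableSet_Ioi]
    filter_upwards with t ht
    have h1 : |f t| ≤ T.M * Real.exp (T.omega * t) * ‖w‖ * ‖yd‖ := T.bound t (le_of_lt ht) yd w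
    have h2 : ‖ψ t‖ = Real.exp (-l * t) * |f t| := by
      rw [Real.norm_eq_abs, hψdef, abs_mul, abs_of_pos (Real.exp_pos _)]
    rw [h2]
    calc Real.exp (-l * t) * |f t|
        ≤ Real.exp (-l * t) * (T.M * Real.exp (T.omega * t) * ‖w‖ * ‖yd‖) :=
          mul_le_mul_of_nonneg_left h1 (Real.exp_pos _).le
      _ = T.M * ‖w‖ * ‖yd‖ * Real.exp (-(l - T.omega) * t) := by
          rw [show -(l - T.omega) * t = -l * t + T.omega * t by ring, Real.exp_add]; ring
  -- the fundamental representation of the orbit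
  have I_def : ∀ t : ℝ, 0 ≤ t →
      P.pair yd (T.S t y) = Real.exp (l * t) * ∫ u in Set.Ioi t, ψ u := by
    intro t ht
    have htrans : (∫ s in Set.Ioi (0:ℝ), Real.exp (-l * s) * f (s + t))
        = Real.exp (l * t) * ∫ u in Set.Ioi t, ψ u := by
      have hind : ∀ s : ℝ,
          (Set.Ioi (0:ℝ)).indicator (fun s => Real.exp (-l * s) * f (s + t)) s
          = (Set.Ioi t).indicator (fun u => Real.exp (l * t) * ψ u) (s + t) := by
        intro s
        by_cases hs : (0:ℝ) < s
        · rw [Set.indicator_of_mem (Set.mem_Ioi.2 hs),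
            Set.indicator_of_mem (by simpa using hs : s + t ∈ Set.Ioi t)]
          have : Real.exp (l * t) * Real.exp (-l * (s + t)) = Real.exp (-l * s) := by
            rw [← Real.exp_add]; congr 1; ring
          rw [hψdef]; dsimp only; rw [← mul_assoc, this]
        · rw [Set.indicator_of_notMem (by simpa using hs),
            Set.indicator_of_notMem (by simpa using hs)]
      calc (∫ s in Set.Ioi (0:ℝ), Real.exp (-l * s) * f (s + t))
          = ∫ s, (Set.Ioi (0:ℝ)).indicator (fun s => Real.exp (-l * s) * f (s + t)) s :=
            (integral_indicator measurableSet_Ioi).symm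
        _ = ∫ s, (Set.Ioi t).indicator (fun u => Real.exp (l * t) * ψ u) (s + t) := by
            simp_rw [hind]
        _ = ∫ u, (Set.Ioi t).indicator (fun u => Real.exp (l * t) * ψ u) u :=
            integral_add_right_eq_self _ t
        _ = ∫ u in Set.Ioi t, Real.exp (l * t) * ψ u := integral_indicator measurableSet_Ioi
        _ = Real.exp (l * t) * ∫ u in Set.Ioi t, ψ u := integral_const_mul _ _
    calc P.pair yd (T.S t y) = P.pair (T.Sd t yd) y := (T.compat t ht yd y).symm
      _ = P.pair (T.Sd t yd) (T.lap l w) := congrArg _ hy'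
      _ = ∫ s in Set.Ioi (0:ℝ), Real.exp (-l * s) * P.pair (T.Sd t yd) (T.S s w) :=
          T.lap_eq l hl (T.Sd t yd) w
      _ = ∫ s in Set.Ioi (0:ℝ), Real.exp (-l * s) * f (s + t) := by
          refine setIntegral_congr_fun measurableSet_Ioi fun s hs => ?_
          have : P.pair (T.Sd t yd) (T.S s w) = f (s + t) := by
            rw [T.compat t ht yd (T.S s w), hfdef]
            dsimp only
            rw [add_comm s t, T.S_add t s ht (le_of_lt hs)]
          rw [this]
      _ = Real.exp (l * t) * ∫ u in Set.Ioi t, ψ u := htrans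
  have pair_y : P.pair yd y = ∫ u in Set.Ioi (0:ℝ), ψ u := by
    have h0 := I_def 0 le_rfl
    simpa [T.S_zero] using h0
  have hsplit : ∀ t : ℝ, 0 ≤ t → (∫ u in Set.Ioi (0:ℝ), ψ u)
      = (∫ u in Set.Ioc 0 t, ψ u) + ∫ u in Set.Ioi t, ψ u := by
    intro t ht
    rw [← setIntegral_union Set.Ioc_disjoint_Ioi_same measurableSet_Ioi
      (hψint.mono_set Set.Ioc_subset_Ioi_self) (hψint.mono_set (Set.Ioi_subset_Ioi ht)),
      Set.Ioc_union_Ioi_eq_Ioi ht]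
  have hψIoc : IntegrableOn ψ (Set.Ioc 0 h) := hψint.mono_set Set.Ioc_subset_Ioi_self
  have hfψ : ∀ u : ℝ, Real.exp (l * u) * ψ u = f u := by
    intro u
    rw [hψdef]; dsimp only
    rw [← mul_assoc, ← Real.exp_add]
    simp
  have hfIoc : IntegrableOn f (Set.Ioc 0 h) :=
    (exp_mul_integrableOn_Ioc hψm hψIoc).congr (Filter.Eventually.of_forall hfψ)
  -- notation
  set I : ℝ := ∫ u in Set.Ioi (0:ℝ), ψ u with hI
  set B : ℝ → ℝ := fun s => ∫ u in Set.Ioc (0:ℝ) s, ψ u with hB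
  have pair_Sy : ∀ s : ℝ, 0 ≤ s →
      P.pair yd (T.S s y) = Real.exp (l * s) * (I - B s) := by
    intro s hs
    rw [I_def s hs]
    have : (∫ u in Set.Ioi s, ψ u) = I - B s := by
      have h1 := hsplit s hs
      have h2 : B s = ∫ u in Set.Ioc (0:ℝ) s, ψ u := rfl
      rw [h2]; linarith [h1]
    rw [this]
  have pair_z : ∀ s : ℝ, 0 ≤ s →
      P.pair yd (T.S s z) = (l * Real.exp (l * s) * I - f s) - l * Real.exp (l * s) * B s := by
    intro s hs
    have hz : z = l • y - w := by rw [hwdef]; abel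
    have e1 : T.S s z = l • T.S s y - T.S s w := by rw [hz, map_sub, LinearMap.map_smul]
    have e2 : P.pair yd (T.S s z) = l * P.pair yd (T.S s y) - f s := by
      rw [e1, map_sub, LinearMap.map_smul, smul_eq_mul, hfdef]
    rw [e2, pair_Sy s hs]; ring
  -- compute the right-hand side
  have hcont : Continuous (fun s : ℝ => l * Real.exp (l * s) * I) :=
    (continuous_const.mul (Real.continuous_exp.comp (continuous_const.mul continuous_id))).mul
      continuous_const
  have int1 : IntegrableOn (fun s => l * Real.exp (l * s) * I - f s) (Set.Ioc 0 h) :=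
    (hcont.integrableOn_Ioc).sub hfIoc
  obtain ⟨int2, hfub⟩ := fubini_core (l := l) hh hψm hψIoc
  have hRHS : (∫ s in Set.Ioc 0 h, P.pair yd (T.S s z))
      = ((Real.exp (l * h) - 1) * I - ∫ s in Set.Ioc 0 h, f s)
        - (Real.exp (l * h) * B h - ∫ s in Set.Ioc 0 h, f s) := by
    have c1 : (∫ s in Set.Ioc 0 h, P.pair yd (T.S s z))
        = ∫ s in Set.Ioc 0 h,
            ((l * Real.exp (l * s) * I - f s) - l * Real.exp (l * s) * B s) :=
      setIntegral_congr_fun measurableSet_Ioc fun s hs => pair_z s (le_of_lt hs.1)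
    rw [c1, integral_sub int1 int2, integral_sub hcont.integrableOn_Ioc hfIoc]
    have c2 : (∫ s in Set.Ioc 0 h, l * Real.exp (l * s) * I)
        = (Real.exp (l * h) - 1) * I := by
      rw [integral_mul_const]
      congr 1
      rw [← intervalIntegral.integral_of_le (le_of_lt hh), int_exp_aux]
      simp
    have c3 : (∫ s in Set.Ioc 0 h, l * Real.exp (l * s) * B s)
        = Real.exp (l * h) * B h - ∫ s in Set.Ioc 0 h, f s := by
      rw [hB]; dsimp only
      rw [hfub]
      congr 1
      exact setIntegral_congr_fun measurableSet_Ioc fun u _ => hfψ u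
    rw [c2, c3]
  rw [hRHS, pair_Sy h (le_of_lt hh), pair_y]
  ring

/-- Lemma 3.3 of Diekmann–Verduyn Lunel: if `y ∈ D(C)` and `z ∈ Cy` (i.e.
`y = S̄(λ)(λy − z)` for some `λ > ω`) then
`limsup_{h↓0} (1/h)‖S(h)y − y‖ ≤ M‖z‖`; in particular this limsup is finite. -/
theorem twin_limsup_difference_quotient
    {Y Yd : Type*} [NormedAddCommGroup Y] [NormedSpace ℝ Y] [CompleteSpace Y]
    [NormedAddCommGroup Yd] [NormedSpace ℝ Yd] [CompleteSpace Yd]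
    (P : NormingDualPair Y Yd) (T : TwinSemigroup Y Yd P) (y z : Y)
    (hy : ∃ l : ℝ, T.omega < l ∧ y = T.lap l (l • y - z)) :
    Filter.limsup (fun h : ℝ => (((1 / h) * ‖T.S h y - y‖ : ℝ) : EReal)) (𝓝[>] (0:ℝ))
      ≤ ((T.M * ‖z‖ : ℝ) : EReal) := by
  obtain ⟨l, hl, hy'⟩ := hy
  have hM0 : (0:ℝ) < T.M := lt_of_lt_of_le one_pos T.one_le_M
  have hbound : ∀ h : ℝ, 0 < h →
      (1 / h) * ‖T.S h y - y‖ ≤ T.M * Real.exp (|T.omega| * h) * ‖z‖ := by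
    intro h hh
    set C : ℝ := T.M * Real.exp (|T.omega| * h) * ‖z‖ with hC
    have hC0 : (0:ℝ) ≤ C := by
      rw [hC]
      have := Real.exp_pos (|T.omega| * h)
      positivity
    have hnorm : ‖T.S h y - y‖ ≤ C * h := by
      rw [P.norm_eq (T.S h y - y)]
      apply Real.sSup_le
      · rintro r ⟨yd, hyd, rfl⟩
        have hid : P.pair yd (T.S h y - y)
            = ∫ s in Set.Ioc 0 h, P.pair yd (T.S s z) := by
          rw [map_sub]
          exact twin_key_identity P T y z hl hy' hh yd
        have hptw : ∀ s ∈ Set.Ioc (0:ℝ) h, ‖P.pair yd (T.S s z)‖ ≤ C * ‖yd‖ := by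
          intro s hs
          have b1 := T.bound s (le_of_lt hs.1) yd z
          have hexp : T.omega * s ≤ |T.omega| * h :=
            le_trans (mul_le_mul_of_nonneg_right (le_abs_self _) (le_of_lt hs.1))
              (mul_le_mul_of_nonneg_left hs.2 (abs_nonneg _))
          rw [Real.norm_eq_abs]
          calc |P.pair yd (T.S s z)| ≤ T.M * Real.exp (T.omega * s) * ‖z‖ * ‖yd‖ := b1
            _ ≤ T.M * Real.exp (|T.omega| * h) * ‖z‖ * ‖yd‖ := by
                refine mul_le_mul_of_nonneg_right (mul_le_mul_of_nonneg_right
                  (mul_le_mul_of_nonneg_left (Real.exp_le_exp.2 hexp) hM0.le)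
                  (norm_nonneg z)) (norm_nonneg yd)
            _ = C * ‖yd‖ := by rw [hC]
        have hb : |P.pair yd (T.S h y - y)| ≤ (C * ‖yd‖) * h := by
          rw [hid]
          have hmeas : (volume (Set.Ioc (0:ℝ) h)).toReal = h := by
            rw [Real.volume_Ioc, ENNReal.toReal_ofReal (by linarith)]
            ring
          have := norm_setIntegral_le_of_norm_le_const (μ := volume)
            (s := Set.Ioc (0:ℝ) h) measure_Ioc_lt_top hptw
          rw [Measure.real, hmeas, Real.norm_eq_abs] at this
          exact this
        calc |P.pair yd (T.S h y - y)| ≤ (C * ‖yd‖) * h := hb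
          _ ≤ (C * 1) * h :=
              mul_le_mul_of_nonneg_right (mul_le_mul_of_nonneg_left hyd hC0) (le_of_lt hh)
          _ = C * h := by ring
      · exact mul_nonneg hC0 (le_of_lt hh)
    have h1 : (1/h) * ‖T.S h y - y‖ ≤ (1/h) * (C * h) :=
      mul_le_mul_of_nonneg_left hnorm (by positivity)
    calc (1/h) * ‖T.S h y - y‖ ≤ (1/h) * (C * h) := h1
      _ = C := by field_simp
  have hev : ∀ᶠ h in 𝓝[>] (0:ℝ),
      (((1 / h) * ‖T.S h y - y‖ : ℝ) : EReal)
        ≤ ((T.M * Real.exp (|T.omega| * h) * ‖z‖ : ℝ) : EReal) := by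
    filter_upwards [self_mem_nhdsWithin] with h hh
    exact EReal.coe_le_coe_iff.2 (hbound h hh)
  have htendR : Tendsto (fun h : ℝ => T.M * Real.exp (|T.omega| * h) * ‖z‖)
      (𝓝 (0:ℝ)) (𝓝 (T.M * ‖z‖)) := by
    have hc : Continuous fun h : ℝ => T.M * Real.exp (|T.omega| * h) * ‖z‖ :=
      (continuous_const.mul (Real.continuous_exp.comp
        (continuous_const.mul continuous_id))).mul continuous_const
    have := hc.tendsto 0
    simpa using this
  have htend : Tendsto (fun h : ℝ => ((T.M * Real.exp (|T.omega| * h) * ‖z‖ : ℝ) : EReal))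
      (𝓝[>] (0:ℝ)) (𝓝 ((T.M * ‖z‖ : ℝ) : EReal)) :=
    (continuous_coe_real_ereal.tendsto _).comp (htendR.mono_left nhdsWithin_le_nhds)
  calc Filter.limsup (fun h : ℝ => (((1 / h) * ‖T.S h y - y‖ : ℝ) : EReal)) (𝓝[>] (0:ℝ))
      ≤ Filter.limsup
          (fun h : ℝ => ((T.M * Real.exp (|T.omega| * h) * ‖z‖ : ℝ) : EReal)) (𝓝[>] (0:ℝ)) :=
        Filter.limsup_le_limsup hev
    _ = ((T.M * ‖z‖ : ℝ) : EReal) := htend.limsup_eq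
end

section
/- Let {S(t)}_{t≥0} be a twin semigroup on a norming dual pair (Y,Y⋄). Assume that every sequentially σ(Y⋄,Y)-continuous linear functional on Y⋄ is σ(Y⋄,Y)-continuous; equivalently, every linear map φ : Y⋄ → ℝ with the property that φ(y⋄_m) → 0 whenever (y⋄_m) is a sequence in Y⋄ with ⟨y⋄_m, y⟩ → 0 for all y ∈ Y, is represented by an element of Y. Let q ∈ Y and let f : [0,T] → ℝ be bounded and Borel measurable. Then for every t ∈ [0,T] there exists an element u(t) ∈ Y such that ⟨y⋄, u(t)⟩ = ∫₀ᵗ y⋄S(t−τ)q · f(τ) dτ for all y⋄ ∈ Y⋄. -/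
open MeasureTheory Filter Topology

/-- Lemma 4.2 of Diekmann–Verduyn Lunel: if every sequentially `σ(Y⋄,Y)`-continuous
linear functional on `Y⋄` is represented by an element of `Y`, then for `q ∈ Y` and a
bounded measurable `f : [0,T] → ℝ`, the weak integral `∫₀ᵗ S(t−τ)q f(τ) dτ` is
represented by an element of `Y`. -/
theorem twin_voc_integral_represented_of_seq_continuity
    {Y Yd : Type*} [NormedAddCommGroup Y] [NormedSpace ℝ Y] [CompleteSpace Y]
    [NormedAddCommGroup Yd] [NormedSpace ℝ Yd] [CompleteSpace Yd]
    (P : NormingDualPair Y Yd) (T : TwinSemigroup Y Yd P)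
    (hrep : ∀ φ : Yd →ₗ[ℝ] ℝ,
      (∀ yds : ℕ → Yd,
        (∀ y : Y, Tendsto (fun m => P.pair (yds m) y) atTop (𝓝 0)) →
        Tendsto (fun m => φ (yds m)) atTop (𝓝 0)) →
      ∃ y : Y, ∀ yd : Yd, φ yd = P.pair yd y)
    (q : Y) (Tmax : ℝ) (f : ℝ → ℝ) (hfm : Measurable f)
    (C : ℝ) (hfb : ∀ τ ∈ Set.Icc (0:ℝ) Tmax, |f τ| ≤ C) :
    ∀ t ∈ Set.Icc (0:ℝ) Tmax, ∃ u : Y, ∀ yd : Yd,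
      P.pair yd u = ∫ τ in (0:ℝ)..t, P.pair yd (T.S (t - τ) q) * f τ := by
  intro t ht
  obtain ⟨ht0, htT⟩ := ht
  have hC0 : 0 ≤ C := le_trans (abs_nonneg _) (hfb 0 ⟨le_refl 0, le_trans ht0 htT⟩)
  set B : ℝ := T.M * Real.exp (|T.omega| * t) * ‖q‖ with hB
  have hM0 : 0 ≤ T.M := le_trans zero_le_one T.one_le_M
  have hB0 : 0 ≤ B := by positivity
  have huIoc : Set.uIoc (0:ℝ) t = Set.Ioc 0 t := Set.uIoc_of_le ht0
  -- pointwise bound on the semigroup term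
  have hSbound : ∀ (yd : Yd), ∀ τ ∈ Set.uIoc (0:ℝ) t,
      |P.pair yd (T.S (t - τ) q)| ≤ B * ‖yd‖ := by
    intro yd τ hτ
    rw [huIoc] at hτ
    have hτt : 0 ≤ t - τ := sub_nonneg.mpr hτ.2
    have h1 := T.bound (t - τ) hτt yd q
    have hexp : Real.exp (T.omega * (t - τ)) ≤ Real.exp (|T.omega| * t) := by
      apply Real.exp_le_exp.mpr
      calc T.omega * (t - τ) ≤ |T.omega * (t - τ)| := le_abs_self _
        _ = |T.omega| * |t - τ| := abs_mul _ _
        _ ≤ |T.omega| * t := by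
            apply mul_le_mul_of_nonneg_left _ (abs_nonneg _)
            rw [abs_of_nonneg hτt]; linarith [hτ.1.le]
    calc |P.pair yd (T.S (t - τ) q)| ≤ T.M * Real.exp (T.omega * (t - τ)) * ‖q‖ * ‖yd‖ := h1
      _ ≤ T.M * Real.exp (|T.omega| * t) * ‖q‖ * ‖yd‖ := by
          apply mul_le_mul_of_nonneg_right _ (norm_nonneg _)
          apply mul_le_mul_of_nonneg_right _ (norm_nonneg _)
          exact mul_le_mul_of_nonneg_left hexp hM0
      _ = B * ‖yd‖ := rfl
  have hfbound : ∀ τ ∈ Set.uIoc (0:ℝ) t, |f τ| ≤ C := by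
    intro τ hτ
    rw [huIoc] at hτ
    exact hfb τ ⟨hτ.1.le, le_trans hτ.2 htT⟩
  -- measurability of the integrand
  have hmeas : ∀ yd : Yd, Measurable fun τ => P.pair yd (T.S (t - τ) q) * f τ := by
    intro yd
    exact ((T.meas yd q).comp (measurable_const.sub measurable_id)).mul hfm
  -- integrability of the integrand
  have hint : ∀ yd : Yd, IntervalIntegrable
      (fun τ => P.pair yd (T.S (t - τ) q) * f τ) volume 0 t := by
    intro yd
    apply (intervalIntegrable_const (c := B * ‖yd‖ * C)).mono_fun
      (hmeas yd).aestronglyMeasurable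
    filter_upwards [MeasureTheory.ae_restrict_mem measurableSet_uIoc] with τ hτ
    have h1 := hSbound yd τ hτ
    have h2 := hfbound τ hτ
    have : |P.pair yd (T.S (t - τ) q) * f τ| ≤ B * ‖yd‖ * C := by
      rw [abs_mul]
      exact mul_le_mul h1 h2 (abs_nonneg _) (by positivity)
    calc ‖P.pair yd (T.S (t - τ) q) * f τ‖ = |P.pair yd (T.S (t - τ) q) * f τ| := rfl
      _ ≤ B * ‖yd‖ * C := this
      _ ≤ ‖B * ‖yd‖ * C‖ := le_abs_self _
  -- the candidate functional
  set φ : Yd →ₗ[ℝ] ℝ :=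
    { toFun := fun yd => ∫ τ in (0:ℝ)..t, P.pair yd (T.S (t - τ) q) * f τ
      map_add' := by
        intro a b
        have : (fun τ => P.pair (a + b) (T.S (t - τ) q) * f τ)
            = fun τ => P.pair a (T.S (t - τ) q) * f τ + P.pair b (T.S (t - τ) q) * f τ := by
          funext τ; simp [map_add, add_mul]
        simp only [this]
        exact intervalIntegral.integral_add (hint a) (hint b)
      map_smul' := by
        intro c a
        have : (fun τ => P.pair (c • a) (T.S (t - τ) q) * f τ)
            = fun τ => c * (P.pair a (T.S (t - τ) q) * f τ) := by
          funext τ; simp [_root_.map_smul, smul_eq_mul, mul_assoc]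
        simp only [this, RingHom.id_apply, smul_eq_mul]
        exact intervalIntegral.integral_const_mul c _ } with hφ
  -- sequential continuity of φ
  have hseq : ∀ yds : ℕ → Yd,
      (∀ y : Y, Tendsto (fun m => P.pair (yds m) y) atTop (𝓝 0)) →
      Tendsto (fun m => φ (yds m)) atTop (𝓝 0) := by
    intro yds hy
    -- uniform bound on ‖yds m‖ via Banach–Steinhaus
    set g : ℕ → Y →L[ℝ] ℝ := fun m =>
      LinearMap.mkContinuous (P.pair (yds m)) (P.M * ‖yds m‖) (fun y => by
        have := P.pair_bound (yds m) y
        simpa [Real.norm_eq_abs, mul_assoc] using this) with hg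
    have hpb : ∀ y : Y, ∃ c : ℝ, ∀ m : ℕ, ‖g m y‖ ≤ c := by
      intro y
      have h1 : Tendsto (fun m => ‖g m y‖) atTop (𝓝 0) := by
        have : Tendsto (fun m => ‖P.pair (yds m) y‖) atTop (𝓝 ‖(0:ℝ)‖) := (hy y).norm
        rw [norm_zero] at this
        exact this
      obtain ⟨c, hc⟩ := h1.bddAbove_range
      exact ⟨c, fun m => hc ⟨m, rfl⟩⟩
    obtain ⟨C', hC'⟩ := banach_steinhaus hpb
    have hC'0 : 0 ≤ C' := le_trans (norm_nonneg _) (hC' 0)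
    have hnb : ∀ m : ℕ, ‖yds m‖ ≤ C' := by
      intro m
      rw [P.norm_eq' (yds m)]
      apply Real.sSup_le _ hC'0
      rintro r ⟨y, hy1, rfl⟩
      calc |P.pair (yds m) y| = ‖g m y‖ := rfl
        _ ≤ ‖g m‖ * ‖y‖ := (g m).le_opNorm y
        _ ≤ C' * 1 := mul_le_mul (hC' m) hy1 (norm_nonneg _) hC'0
        _ = C' := mul_one _
    -- dominated convergence
    have h0 : (0:ℝ) = ∫ τ in (0:ℝ)..t, (0:ℝ) := by simp
    rw [h0]
    apply intervalIntegral.tendsto_integral_filter_of_dominated_convergence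
      (fun _ => B * C' * C)
    · filter_upwards with m
      exact (hmeas (yds m)).aestronglyMeasurable
    · filter_upwards with m
      filter_upwards with τ
      intro hτ
      have h1 := hSbound (yds m) τ hτ
      have h2 := hfbound τ hτ
      rw [Real.norm_eq_abs, abs_mul]
      calc |P.pair (yds m) (T.S (t - τ) q)| * |f τ|
          ≤ (B * ‖yds m‖) * C := mul_le_mul h1 h2 (abs_nonneg _) (by positivity)
        _ ≤ (B * C') * C := by
            apply mul_le_mul_of_nonneg_right _ hC0
            exact mul_le_mul_of_nonneg_left (hnb m) hB0
    · exact intervalIntegrable_const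
    · filter_upwards with τ
      intro hτ
      have := (hy (T.S (t - τ) q)).mul_const (f τ)
      simpa using this
  obtain ⟨u, hu⟩ := hrep φ hseq
  exact ⟨u, fun yd => (hu yd).symm⟩
end

section
/- Let ζ : [0,1] → ℝ^{n×n} have entries of bounded variation, right-continuous on (0,1), with ζ(0) = 0, and extend ζ by ζ(τ) = ζ(1) for τ ≥ 1. Let φ : [-1,0] → ℝⁿ be bounded and Borel measurable. Define f(t) = φ(0) + ∫₀¹ (ζ(t+σ) − ζ(σ)) φ(−σ) dσ for t ≥ 0, and let ρ = Σ_{l=1}^∞ ζ^{l∗} (convergent in the sense of locally uniform convergence) be the resolvent of ζ, the unique solution of ρ∗ζ + ζ = ρ = ζ∗ρ + ζ, where (g∗h)(t) = ∫₀ᵗ g(t−s)h(s) ds. Then the unique locally bounded measurable solution of the Volterra equation x = ζ∗x + f on [0,∞) (equivalently, of the retarded functional differential equation ẋ(t) = ∫_{[0,1]} dζ(σ) x(t−σ) for t ≥ 0 with x(θ) = φ(θ) for −1 ≤ θ ≤ 0) is given by x(t) = (I + ∫₀ᵗ ρ(σ) dσ) φ(0) + ∫₀¹ { ζ(t+σ)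 − ζ(σ) + ∫₀ᵗ ρ(τ)(ζ(t−τ+σ) − ζ(σ)) dτ } φ(−σ) dσ. -/
open MeasureTheory Filter Topology

namespace RFDEAux

variable {n : ℕ}

lemma isFiniteRestrictIoc (a b : ℝ) : IsFiniteMeasure (volume.restrict (Set.Ioc a b)) := by
  constructor
  rw [Measure.restrict_apply_univ, Real.volume_Ioc]
  exact ENNReal.ofReal_lt_top

lemma intervalIntegrable_of_bounded {E : Type*} [NormedAddCommGroup E]
    {f : ℝ → E} {a b C : ℝ}
    (hm : AEStronglyMeasurable f (volume.restrict (Set.uIoc a b)))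
    (hb : ∀ s ∈ Set.uIoc a b, ‖f s‖ ≤ C) :
    IntervalIntegrable f volume a b := by
  rw [intervalIntegrable_iff]
  haveI : IsFiniteMeasure (volume.restrict (Set.uIoc a b)) := isFiniteRestrictIoc _ _
  exact (integrable_const C).mono' hm ((ae_restrict_iff' measurableSet_uIoc).2 (ae_of_all _ hb))

lemma eval_intervalIntegral {f : ℝ → Fin n → ℝ} {a b : ℝ}
    (hf : IntervalIntegrable f volume a b) (i : Fin n) :
    (∫ s in a..b, f s) i = ∫ s in a..b, f s i := by
  have := (ContinuousLinearMap.proj (R := ℝ) (φ := fun _ : Fin n => ℝ)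
    i).intervalIntegral_comp_comm hf
  simpa using this.symm

lemma mulVec_intervalIntegral (A : Matrix (Fin n) (Fin n) ℝ) {f : ℝ → Fin n → ℝ} {a b : ℝ}
    (hf : IntervalIntegrable f volume a b) :
    A.mulVec (∫ s in a..b, f s) = ∫ s in a..b, A.mulVec (f s) := by
  have := (LinearMap.toContinuousLinearMap A.mulVecLin).intervalIntegral_comp_comm hf
  simpa using this.symm

lemma measurable_mulVec {α : Type*} [MeasurableSpace α]
    {A : α → Matrix (Fin n) (Fin n) ℝ} {v : α → Fin n → ℝ}
    (hA : ∀ i j, Measurable fun s => A s i j) (hv : Measurable v) :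
    Measurable fun s => (A s).mulVec (v s) := by
  apply measurable_pi_lambda
  intro i
  simp only [Matrix.mulVec, dotProduct]
  exact Finset.measurable_sum _ fun j _ => (hA i j).mul ((measurable_pi_apply j).comp hv)

lemma measurable_mul_entries {α : Type*} [MeasurableSpace α]
    {A B : α → Matrix (Fin n) (Fin n) ℝ}
    (hA : ∀ i j, Measurable fun s => A s i j) (hB : ∀ i j, Measurable fun s => B s i j)
    (i j : Fin n) : Measurable fun s => (A s * B s) i j := by
  simp only [Matrix.mul_apply]
  exact Finset.measurable_sum _ fun k _ => (hA i k).mul (hB k j)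

lemma norm_mulVec_le (A : Matrix (Fin n) (Fin n) ℝ) (v : Fin n → ℝ) {C D : ℝ}
    (hA : ∀ i j, |A i j| ≤ C) (hv : ‖v‖ ≤ D) (hC : 0 ≤ C) (hD : 0 ≤ D) :
    ‖A.mulVec v‖ ≤ n * C * D := by
  have key : ∀ i, ‖A.mulVec v i‖ ≤ (n : ℝ) * C * D := by
    intro i
    simp only [Matrix.mulVec, dotProduct, Real.norm_eq_abs]
    calc |∑ j, A i j * v j| ≤ ∑ j, |A i j * v j| := Finset.abs_sum_le_sum_abs _ _
      _ ≤ ∑ _j : Fin n, C * D := by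
          refine Finset.sum_le_sum fun j _ => ?_
          rw [abs_mul]
          refine mul_le_mul (hA i j) ?_ (abs_nonneg _) hC
          exact le_trans (norm_le_pi_norm v j) hv
      _ = (n : ℝ) * C * D := by simp [mul_assoc]
  exact (pi_norm_le_iff_of_nonneg (by positivity)).2 key

lemma abs_mul_entry_le (A B : Matrix (Fin n) (Fin n) ℝ) {CA CB : ℝ}
    (hA : ∀ i j, |A i j| ≤ CA) (hB : ∀ i j, |B i j| ≤ CB) (h0A : 0 ≤ CA) (i j : Fin n) :
    |(A * B) i j| ≤ n * CA * CB := by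
  simp only [Matrix.mul_apply]
  calc |∑ k, A i k * B k j| ≤ ∑ k, |A i k * B k j| := Finset.abs_sum_le_sum_abs _ _
    _ ≤ ∑ _k : Fin n, CA * CB := by
        refine Finset.sum_le_sum fun k _ => ?_
        rw [abs_mul]
        exact mul_le_mul (hA i k) (hB k j) (abs_nonneg _) h0A
    _ = (n : ℝ) * CA * CB := by simp [mul_assoc]

lemma stronglyMeasurable_param {H : ℝ → ℝ → Fin n → ℝ}
    (hH : Measurable (Function.uncurry H)) (a b : ℝ) :
    StronglyMeasurable fun s => ∫ u in a..b, H s u := by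
  have h1 : ∀ c d : ℝ, StronglyMeasurable fun s => ∫ u in Set.Ioc c d, H s u :=
    fun c d => hH.stronglyMeasurable.integral_prod_right (ν := volume.restrict (Set.Ioc c d))
  exact (h1 a b).sub (h1 b a)

lemma rect_swap {F : ℝ → ℝ → Fin n → ℝ} {t C : ℝ} (ht : 0 ≤ t)
    (hF : Measurable (Function.uncurry F))
    (hb : ∀ s u : ℝ, s ∈ Set.Icc 0 t → u ∈ Set.Icc (0:ℝ) 1 → ‖F s u‖ ≤ C) :
    (∫ s in (0:ℝ)..t, ∫ u in (0:ℝ)..1, F s u)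
      = ∫ u in (0:ℝ)..1, ∫ s in (0:ℝ)..t, F s u := by
  haveI := isFiniteRestrictIoc 0 t
  haveI := isFiniteRestrictIoc 0 (1:ℝ)
  have hInt : Integrable (Function.uncurry F)
      ((volume.restrict (Set.Ioc 0 t)).prod (volume.restrict (Set.Ioc (0:ℝ) 1))) := by
    refine (integrable_const (max C 0)).mono' hF.aestronglyMeasurable ?_
    rw [Measure.prod_restrict, ae_restrict_iff' (measurableSet_Ioc.prod measurableSet_Ioc)]
    refine ae_of_all _ fun p hp => ?_
    rcases hp with ⟨h1, h2⟩
    exact le_trans (hb p.1 p.2 (Set.Ioc_subset_Icc_self h1) (Set.Ioc_subset_Icc_self h2))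
      (le_max_left _ _)
  have key := integral_integral_swap (f := F)
    (μ := volume.restrict (Set.Ioc 0 t)) (ν := volume.restrict (Set.Ioc (0:ℝ) 1)) hInt
  rw [intervalIntegral.integral_of_le ht, intervalIntegral.integral_of_le (zero_le_one)]
  rw [setIntegral_congr_fun measurableSet_Ioc
    (fun s _ => intervalIntegral.integral_of_le zero_le_one),
    setIntegral_congr_fun measurableSet_Ioc
    (fun u _ => intervalIntegral.integral_of_le ht)]
  exact key

lemma triangle_swap {F : ℝ → ℝ → Fin n → ℝ} {t C : ℝ} (ht : 0 ≤ t)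
    (hF : Measurable (Function.uncurry F))
    (hb : ∀ s u : ℝ, s ∈ Set.Icc 0 t → u ∈ Set.Icc 0 t → ‖F s u‖ ≤ C) :
    (∫ s in (0:ℝ)..t, ∫ u in (0:ℝ)..s, F s u)
      = ∫ u in (0:ℝ)..t, ∫ s in u..t, F s u := by
  haveI := isFiniteRestrictIoc 0 t
  set K : ℝ × ℝ → Fin n → ℝ :=
    (Set.indicator {p : ℝ × ℝ | 0 < p.2 ∧ p.2 ≤ p.1} (Function.uncurry F)) with hK
  have hAmeas : MeasurableSet {p : ℝ × ℝ | 0 < p.2 ∧ p.2 ≤ p.1} :=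
    (measurableSet_lt measurable_const measurable_snd).inter
      (measurableSet_le measurable_snd measurable_fst)
  have hKmeas : Measurable K := hF.indicator hAmeas
  have hInt : Integrable (Function.uncurry fun s u => K (s, u))
      ((volume.restrict (Set.Ioc 0 t)).prod (volume.restrict (Set.Ioc 0 t))) := by
    refine (integrable_const (max C 0)).mono' hKmeas.aestronglyMeasurable ?_
    rw [Measure.prod_restrict, ae_restrict_iff' (measurableSet_Ioc.prod measurableSet_Ioc)]
    refine ae_of_all _ fun p hp => ?_
    rcases hp with ⟨h1, h2⟩
    show ‖K p‖ ≤ max C 0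
    rw [hK]
    by_cases hmem : p ∈ {p : ℝ × ℝ | 0 < p.2 ∧ p.2 ≤ p.1}
    · rw [Set.indicator_of_mem hmem]
      exact le_trans (hb p.1 p.2 (Set.Ioc_subset_Icc_self h1) (Set.Ioc_subset_Icc_self h2))
        (le_max_left _ _)
    · rw [Set.indicator_of_notMem hmem]
      simp [le_max_right]
  have key := integral_integral_swap (f := fun s u => K (s, u))
    (μ := volume.restrict (Set.Ioc 0 t)) (ν := volume.restrict (Set.Ioc 0 t)) hInt
  have lhs_eq : (∫ s in (0:ℝ)..t, ∫ u in (0:ℝ)..s, F s u)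
      = ∫ s in Set.Ioc (0:ℝ) t, ∫ u in Set.Ioc (0:ℝ) t, K (s, u) := by
    rw [intervalIntegral.integral_of_le ht]
    refine setIntegral_congr_fun measurableSet_Ioc fun s hs => ?_
    rw [intervalIntegral.integral_of_le hs.1.le]
    have : ∀ u : ℝ, K (s, u) = Set.indicator (Set.Ioc 0 s) (F s) u := by
      intro u
      rw [hK]
      by_cases hu : u ∈ Set.Ioc 0 s
      · rw [Set.indicator_of_mem hu, Set.indicator_of_mem (by exact ⟨hu.1, hu.2⟩)]
        rfl
      · rw [Set.indicator_of_notMem hu, Set.indicator_of_notMem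
          (by simpa [Set.mem_Ioc] using hu)]
    simp_rw [this]
    rw [setIntegral_indicator measurableSet_Ioc,
      Set.inter_eq_self_of_subset_right (Set.Ioc_subset_Ioc le_rfl hs.2)]
  have rhs_eq : (∫ u in (0:ℝ)..t, ∫ s in u..t, F s u)
      = ∫ u in Set.Ioc (0:ℝ) t, ∫ s in Set.Ioc (0:ℝ) t, K (s, u) := by
    rw [intervalIntegral.integral_of_le ht]
    refine setIntegral_congr_fun measurableSet_Ioc fun u hu => ?_
    have : ∀ s : ℝ, K (s, u) = Set.indicator (Set.Ici u) (fun s => F s u) s := by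
      intro s
      rw [hK]
      by_cases hsu : u ≤ s
      · rw [Set.indicator_of_mem (show (s,u) ∈ {p : ℝ × ℝ | 0 < p.2 ∧ p.2 ≤ p.1} from ⟨hu.1, hsu⟩),
          Set.indicator_of_mem (show s ∈ Set.Ici u from hsu)]
        rfl
      · rw [Set.indicator_of_notMem
          (show (s,u) ∉ {p : ℝ × ℝ | 0 < p.2 ∧ p.2 ≤ p.1} from fun h => hsu h.2),
          Set.indicator_of_notMem (show s ∉ Set.Ici u from hsu)]
    simp_rw [this]
    rw [setIntegral_indicator measurableSet_Ici]
    have hset : Set.Ioc (0:ℝ) t ∩ Set.Ici u = Set.Icc u t := by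
      ext s
      simp only [Set.mem_inter_iff, Set.mem_Ioc, Set.mem_Ici, Set.mem_Icc]
      constructor
      · rintro ⟨⟨_, h2⟩, h3⟩; exact ⟨h3, h2⟩
      · rintro ⟨h1, h2⟩; exact ⟨⟨lt_of_lt_of_le hu.1 h1, h2⟩, h1⟩
    rw [hset, integral_Icc_eq_integral_Ioc, ← intervalIntegral.integral_of_le hu.2]
  rw [lhs_eq, rhs_eq]
  exact key

end RFDEAux

/-- Lemma 4.1 (Lemma 6.1) of Diekmann–Verduyn Lunel: explicit representation of the
solution of the retarded functional differential equation
`ẋ(t) = ∫_{[0,1]} dζ(σ) x(t−σ)`, `x = φ` on `[-1,0]`, written in the integrated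
(Volterra) form `x = ζ∗x + f`, in terms of the resolvent `ρ` of the kernel `ζ`
(the unique solution of `ρ∗ζ + ζ = ρ = ζ∗ρ + ζ`). -/
theorem rfde_solution_representation {n : ℕ}
    (ζ : ℝ → Matrix (Fin n) (Fin n) ℝ)
    (hζbv : ∀ i j, BoundedVariationOn (fun t => ζ t i j) (Set.Icc 0 1))
    (hζrc : ∀ t ∈ Set.Ioo (0:ℝ) 1, ∀ i j,
      ContinuousWithinAt (fun s => ζ s i j) (Set.Ici t) t)
    (hζzero : ζ 0 = 0)
    (hζone : ∀ τ : ℝ, 1 ≤ τ → ζ τ = ζ 1)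
    (φ : ℝ → Fin n → ℝ) (hφm : Measurable φ)
    (Cφ : ℝ) (hφb : ∀ θ ∈ Set.Icc (-1:ℝ) 0, ‖φ θ‖ ≤ Cφ)
    -- the resolvent `ρ` of `ζ`, i.e. the unique solution of `ρ∗ζ + ζ = ρ = ζ∗ρ + ζ`
    (ρ : ℝ → Matrix (Fin n) (Fin n) ℝ)
    (hρm : ∀ i j, Measurable fun t => ρ t i j)
    (hρb : ∀ T : ℝ, 0 < T → ∃ C : ℝ, ∀ t ∈ Set.Icc (0:ℝ) T, ∀ i j, |ρ t i j| ≤ C)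
    (hρ1 : ∀ t : ℝ, 0 ≤ t →
      (Matrix.of fun i j => ∫ s in (0:ℝ)..t, ((ρ (t - s)) * (ζ s)) i j) + ζ t = ρ t)
    (hρ2 : ∀ t : ℝ, 0 ≤ t →
      (Matrix.of fun i j => ∫ s in (0:ℝ)..t, ((ζ (t - s)) * (ρ s)) i j) + ζ t = ρ t)
    -- `x` is a locally bounded measurable solution of `x = ζ∗x + f`, `x = φ` on `[-1,0]`
    (x : ℝ → Fin n → ℝ) (hxm : Measurable x)
    (hxb : ∀ T : ℝ, 0 < T → ∃ C : ℝ, ∀ t ∈ Set.Icc (-1:ℝ) T, ‖x t‖ ≤ C)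
    (hxinit : ∀ θ ∈ Set.Icc (-1:ℝ) 0, x θ = φ θ)
    (hxeq : ∀ t : ℝ, 0 ≤ t →
      x t = (∫ s in (0:ℝ)..t, (ζ (t - s)).mulVec (x s))
        + (φ 0 + ∫ σ in (0:ℝ)..1, (ζ (t + σ) - ζ σ).mulVec (φ (-σ)))) :
    -- then `x` is given by the explicit formula
    ∀ t : ℝ, 0 ≤ t →
      x t = (φ 0 + ∫ τ in (0:ℝ)..t, (ρ τ).mulVec (φ 0))
        + ∫ σ in (0:ℝ)..1,
            ((ζ (t + σ) - ζ σ).mulVec (φ (-σ))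
              + ∫ τ in (0:ℝ)..t, ((ρ τ) * (ζ (t - τ + σ) - ζ σ)).mulVec (φ (-σ))) := by
  intro t ht
  classical
  -- clamped kernel and history segment
  set ζc : ℝ → Matrix (Fin n) (Fin n) ℝ := fun s => ζ (max 0 (min s 1)) with hζcdef
  set ψ : ℝ → Fin n → ℝ := fun σ => φ (-(max 0 (min σ 1))) with hψdef
  have hclampmem : ∀ s : ℝ, max 0 (min s 1) ∈ Set.Icc (0:ℝ) 1 := fun s =>
    ⟨le_max_left _ _, max_le zero_le_one (min_le_right _ _)⟩
  have hcz : ∀ s : ℝ, 0 ≤ s → ζc s = ζ s := by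
    intro s hs
    rcases le_or_gt s 1 with h | h
    · simp only [hζcdef]
      rw [min_eq_left h, max_eq_right hs]
    · simp only [hζcdef]
      rw [min_eq_right h.le, max_eq_right zero_le_one, hζone s h.le]
  have hψeq : ∀ σ : ℝ, σ ∈ Set.Icc (0:ℝ) 1 → ψ σ = φ (-σ) := by
    intro σ hσ
    simp only [hψdef]
    rw [min_eq_left hσ.2, max_eq_right hσ.1]
  -- measurability of the clamped kernel
  have hζcm : ∀ i j, Measurable fun s => ζc s i j := by
    intro i j
    obtain ⟨p, q, hp, hq, hpq⟩ :=
      (hζbv i j).locallyBoundedVariationOn.exists_monotoneOn_sub_monotoneOn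
    have hmono : ∀ r : ℝ → ℝ, MonotoneOn r (Set.Icc 0 1) →
        Monotone fun s : ℝ => r (max 0 (min s 1)) := by
      intro r hr a b hab
      exact hr (hclampmem a) (hclampmem b)
        (max_le_max le_rfl (min_le_min hab le_rfl))
    have heq : (fun s => ζc s i j)
        = fun s => p (max 0 (min s 1)) - q (max 0 (min s 1)) := by
      funext s
      have h := congrFun hpq (max 0 (min s 1))
      simp only [Pi.sub_apply] at h
      simpa only [hζcdef] using h
    rw [heq]
    exact ((hmono p hp).measurable).sub ((hmono q hq).measurable)
  -- bound for the clamped kernel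
  obtain ⟨Cz, hCz0, hCzb⟩ : ∃ Cz : ℝ, 0 ≤ Cz ∧ ∀ (s : ℝ) (i j : Fin n), |ζc s i j| ≤ Cz := by
    refine ⟨∑ i : Fin n, ∑ j : Fin n,
      (eVariationOn (fun u => ζ u i j) (Set.Icc 0 1)).toReal,
      Finset.sum_nonneg fun _ _ => Finset.sum_nonneg fun _ _ => ENNReal.toReal_nonneg, ?_⟩
    intro s i j
    have h0 : (0:ℝ) ∈ Set.Icc (0:ℝ) 1 := ⟨le_rfl, zero_le_one⟩
    have hedist := eVariationOn.edist_le (fun u => ζ u i j) (hclampmem s) h0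
    have hd : dist (ζ (max 0 (min s 1)) i j) (ζ 0 i j)
        ≤ (eVariationOn (fun u => ζ u i j) (Set.Icc 0 1)).toReal := by
      have h1 := ENNReal.toReal_mono (hζbv i j) hedist
      rwa [edist_dist, ENNReal.toReal_ofReal dist_nonneg] at h1
    have habs : |ζc s i j| ≤ (eVariationOn (fun u => ζ u i j) (Set.Icc 0 1)).toReal := by
      have he : ζc s i j = ζ (max 0 (min s 1)) i j := by simp only [hζcdef]
      rw [he]
      calc |ζ (max 0 (min s 1)) i j|
          = dist (ζ (max 0 (min s 1)) i j) (ζ 0 i j) := by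
            rw [hζzero]
            show |ζ (max 0 (min s 1)) i j| = dist (ζ (max 0 (min s 1)) i j) 0
            rw [Real.dist_eq, sub_zero]
        _ ≤ _ := hd
    refine le_trans habs (le_trans (Finset.single_le_sum
      (f := fun j' => (eVariationOn (fun u => ζ u i j') (Set.Icc 0 1)).toReal)
      (fun j' _ => ENNReal.toReal_nonneg) (Finset.mem_univ j)) ?_)
    exact Finset.single_le_sum
      (f := fun i' => ∑ j' : Fin n, (eVariationOn (fun u => ζ u i' j') (Set.Icc 0 1)).toReal)
      (fun i' _ => Finset.sum_nonneg fun _ _ => ENNReal.toReal_nonneg) (Finset.mem_univ i)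
  -- history segment: measurability and bound
  have hψm : Measurable ψ := by
    simp only [hψdef]
    exact hφm.comp ((measurable_const.max (measurable_id.min measurable_const)).neg)
  obtain ⟨Cφ', hCφ'0, hψb⟩ : ∃ C : ℝ, 0 ≤ C ∧ ∀ σ : ℝ, ‖ψ σ‖ ≤ C := by
    refine ⟨max Cφ 0, le_max_right _ _, fun σ => ?_⟩
    simp only [hψdef]
    refine le_trans (hφb _ ?_) (le_max_left _ _)
    have h := hclampmem σ
    exact ⟨by linarith [h.2], by linarith [h.1]⟩
  -- bounds for ρ and x on the relevant ranges
  obtain ⟨Cρ₀, hCρ₀⟩ := hρb (t + 1) (by linarith)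
  obtain ⟨Cρ, hCρ0, hCρ⟩ : ∃ C : ℝ, 0 ≤ C ∧ ∀ s ∈ Set.Icc (0:ℝ) t, ∀ i j, |ρ s i j| ≤ C :=
    ⟨max Cρ₀ 0, le_max_right _ _, fun s hs i j =>
      le_trans (hCρ₀ s ⟨hs.1, by linarith [hs.2]⟩ i j) (le_max_left _ _)⟩
  obtain ⟨Cx₀, hCx₀⟩ := hxb (t + 1) (by linarith)
  obtain ⟨Cx, hCx0, hCx⟩ : ∃ C : ℝ, 0 ≤ C ∧ ∀ s ∈ Set.Icc (-1:ℝ) t, ‖x s‖ ≤ C :=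
    ⟨max Cx₀ 0, le_max_right _ _, fun s hs =>
      le_trans (hCx₀ s ⟨hs.1, by linarith [hs.2]⟩) (le_max_left _ _)⟩
  -- the forcing function
  set f : ℝ → Fin n → ℝ :=
    fun s => φ 0 + ∫ σ in (0:ℝ)..1, (ζc (s + σ) - ζc σ).mulVec (ψ σ) with hfdef
  have hH1m : Measurable (Function.uncurry
      fun s σ => (ζc (s + σ) - ζc σ).mulVec (ψ σ)) := by
    exact RFDEAux.measurable_mulVec
      (A := fun p : ℝ × ℝ => ζc (p.1 + p.2) - ζc p.2) (v := fun p : ℝ × ℝ => ψ p.2)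
      (fun i j => by
        exact
          (((hζcm i j).comp (measurable_fst.add measurable_snd)).sub
            ((hζcm i j).comp measurable_snd)))
      (hψm.comp measurable_snd)
  have hfm : Measurable f := by
    simp only [hfdef]
    exact measurable_const.add (RFDEAux.stronglyMeasurable_param hH1m 0 1).measurable
  have hsubbound : ∀ (M N : Matrix (Fin n) (Fin n) ℝ),
      (∀ i j, |M i j| ≤ Cz) → (∀ i j, |N i j| ≤ Cz) → ∀ i j, |(M - N) i j| ≤ 2 * Cz := by
    intro M N hM hN i j
    simp only [Matrix.sub_apply]
    calc |M i j - N i j| ≤ |M i j| + |N i j| := abs_sub _ _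
      _ ≤ 2 * Cz := by linarith [hM i j, hN i j]
  obtain ⟨Cf, hCf0, hfb⟩ : ∃ C : ℝ, 0 ≤ C ∧ ∀ s : ℝ, ‖f s‖ ≤ C := by
    refine ⟨‖φ 0‖ + n * (2 * Cz) * Cφ', by positivity, fun s => ?_⟩
    simp only [hfdef]
    refine le_trans (norm_add_le _ _) ?_
    have hint : ‖∫ σ in (0:ℝ)..1, (ζc (s + σ) - ζc σ).mulVec (ψ σ)‖
        ≤ n * (2 * Cz) * Cφ' * |1 - 0| := by
      apply intervalIntegral.norm_integral_le_of_norm_le_const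
      intro σ _
      exact RFDEAux.norm_mulVec_le _ _
        (fun i j => hsubbound _ _ (fun i' j' => hCzb _ i' j') (fun i' j' => hCzb _ i' j') i j)
        (hψb σ) (by positivity) hCφ'0
    have h1 : |(1:ℝ) - 0| = 1 := by norm_num
    rw [h1, mul_one] at hint
    linarith [hint]

  -- f agrees with the original forcing function for nonnegative times
  have hfeq : ∀ s : ℝ, 0 ≤ s →
      f s = φ 0 + ∫ σ in (0:ℝ)..1, (ζ (s + σ) - ζ σ).mulVec (φ (-σ)) := by
    intro s hs
    simp only [hfdef]
    congr 1
    apply intervalIntegral.integral_congr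
    intro σ hσ
    beta_reduce
    rw [Set.uIcc_of_le zero_le_one] at hσ
    rw [hcz (s + σ) (by linarith [hσ.1]), hcz σ hσ.1, hψeq σ hσ]
  have hxeq' : ∀ s : ℝ, 0 ≤ s →
      x s = (∫ u in (0:ℝ)..s, (ζc (s - u)).mulVec (x u)) + f s := by
    intro s hs
    rw [hxeq s hs, hfeq s hs]
    congr 1
    apply intervalIntegral.integral_congr
    intro u hu
    beta_reduce
    rw [Set.uIcc_of_le hs] at hu
    rw [hcz (s - u) (by linarith [hu.2])]
  -- resolvent identity, entrywise, for the clamped kernel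
  have hρ1' : ∀ r : ℝ, 0 ≤ r → ∀ i j : Fin n,
      (∫ s in (0:ℝ)..r, (ρ (r - s) * ζc s) i j) = ρ r i j - ζc r i j := by
    intro r hr i j
    have h2 : ((Matrix.of fun i j => ∫ s in (0:ℝ)..r, ((ρ (r - s)) * (ζ s)) i j) + ζ r) i j
        = ρ r i j := by rw [hρ1 r hr]
    simp only [Matrix.add_apply, Matrix.of_apply] at h2
    have h3 : (∫ s in (0:ℝ)..r, (ρ (r - s) * ζc s) i j)
        = ∫ s in (0:ℝ)..r, (ρ (r - s) * ζ s) i j := by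
      apply intervalIntegral.integral_congr
      intro s hs
      beta_reduce
      rw [Set.uIcc_of_le hr] at hs
      rw [hcz s hs.1]
    rw [h3, hcz r hr]
    linarith
  -- integrability facts
  have int_i : ∀ s ∈ Set.Icc (0:ℝ) t,
      IntervalIntegrable (fun u => (ζc (s - u)).mulVec (x u)) volume 0 s := by
    intro s hs
    apply RFDEAux.intervalIntegrable_of_bounded (C := n * Cz * Cx)
    · exact (RFDEAux.measurable_mulVec
        (A := fun u : ℝ => ζc (s - u)) (v := x)
        (fun i j => (hζcm i j).comp (measurable_const.sub measurable_id))
        hxm).aestronglyMeasurable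
    · intro u hu
      rw [Set.uIoc_of_le hs.1] at hu
      exact RFDEAux.norm_mulVec_le _ _ (fun i j => hCzb _ i j)
        (hCx u ⟨by linarith [hu.1], le_trans hu.2 hs.2⟩) hCz0 hCx0
  have int_zx : IntervalIntegrable (fun u => (ζc (t - u)).mulVec (x u)) volume 0 t :=
    int_i t ⟨ht, le_rfl⟩
  have int_rx : IntervalIntegrable (fun s => (ρ (t - s)).mulVec (x s)) volume 0 t := by
    apply RFDEAux.intervalIntegrable_of_bounded (C := n * Cρ * Cx)
    · exact (RFDEAux.measurable_mulVec (A := fun s : ℝ => ρ (t - s)) (v := x)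
        (fun i j => (hρm i j).comp (measurable_const.sub measurable_id))
        hxm).aestronglyMeasurable
    · intro s hs
      rw [Set.uIoc_of_le ht] at hs
      exact RFDEAux.norm_mulVec_le _ _
        (fun i j => hCρ (t - s) ⟨by linarith [hs.2], by linarith [hs.1]⟩ i j)
        (hCx s ⟨by linarith [hs.1], hs.2⟩) hCρ0 hCx0
  have int_rf : IntervalIntegrable (fun s => (ρ (t - s)).mulVec (f s)) volume 0 t := by
    apply RFDEAux.intervalIntegrable_of_bounded (C := n * Cρ * Cf)
    · exact (RFDEAux.measurable_mulVec (A := fun s : ℝ => ρ (t - s)) (v := f)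
        (fun i j => (hρm i j).comp (measurable_const.sub measurable_id))
        hfm).aestronglyMeasurable
    · intro s hs
      rw [Set.uIoc_of_le ht] at hs
      exact RFDEAux.norm_mulVec_le _ _
        (fun i j => hCρ (t - s) ⟨by linarith [hs.2], by linarith [hs.1]⟩ i j)
        (hfb s) hCρ0 hCf0
  have int_tri : ∀ u ∈ Set.Icc (0:ℝ) t,
      IntervalIntegrable (fun s => ((ρ (t - s)) * (ζc (s - u))).mulVec (x u)) volume u t := by
    intro u hu
    apply RFDEAux.intervalIntegrable_of_bounded (C := n * (n * Cρ * Cz) * Cx)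
    · exact (RFDEAux.measurable_mulVec
        (A := fun s : ℝ => ρ (t - s) * ζc (s - u)) (v := fun _ => x u)
        (RFDEAux.measurable_mul_entries
          (fun i j => (hρm i j).comp (measurable_const.sub measurable_id))
          (fun i j => (hζcm i j).comp (measurable_id.sub measurable_const)))
        measurable_const).aestronglyMeasurable
    · intro s hs
      rw [Set.uIoc_of_le hu.2] at hs
      exact RFDEAux.norm_mulVec_le _ _
        (RFDEAux.abs_mul_entry_le _ _
          (fun i j => hCρ (t - s) ⟨by linarith [hs.2], by linarith [hu.1, hs.1]⟩ i j)
          (fun i j => hCzb _ i j) hCρ0)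
        (hCx u ⟨by linarith [hu.1], hu.2⟩) (by positivity) hCx0
  have int_entry : ∀ u ∈ Set.Icc (0:ℝ) t, ∀ i j : Fin n,
      IntervalIntegrable (fun s => (ρ (t - s) * ζc (s - u)) i j) volume u t := by
    intro u hu i j
    apply RFDEAux.intervalIntegrable_of_bounded (C := n * Cρ * Cz)
    · exact (RFDEAux.measurable_mul_entries
        (fun i j => (hρm i j).comp (measurable_const.sub measurable_id))
        (fun i j => (hζcm i j).comp (measurable_id.sub measurable_const))
        i j).aestronglyMeasurable
    · intro s hs
      rw [Set.uIoc_of_le hu.2] at hs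
      rw [Real.norm_eq_abs]
      exact RFDEAux.abs_mul_entry_le _ _
        (fun i j => hCρ (t - s) ⟨by linarith [hs.2], by linarith [hu.1, hs.1]⟩ i j)
        (fun i j => hCzb _ i j) hCρ0 i j
  have int_inner : ∀ τ : ℝ, IntervalIntegrable
      (fun σ => (ζc (t - τ + σ) - ζc σ).mulVec (ψ σ)) volume 0 1 := by
    intro τ
    apply RFDEAux.intervalIntegrable_of_bounded (C := n * (2 * Cz) * Cφ')
    · exact (RFDEAux.measurable_mulVec
        (A := fun σ : ℝ => ζc (t - τ + σ) - ζc σ) (v := ψ)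
        (fun i j => by
          exact
            (((hζcm i j).comp (measurable_const.add measurable_id)).sub (hζcm i j)))
        hψm).aestronglyMeasurable
    · intro σ _
      exact RFDEAux.norm_mulVec_le _ _
        (fun i j => hsubbound _ _ (fun a b => hCzb _ a b) (fun a b => hCzb _ a b) i j)
        (hψb σ) (by positivity) hCφ'0
  have int_A : IntervalIntegrable (fun σ => (ζc (t + σ) - ζc σ).mulVec (ψ σ)) volume 0 1 := by
    apply RFDEAux.intervalIntegrable_of_bounded (C := n * (2 * Cz) * Cφ')
    · exact (RFDEAux.measurable_mulVec
        (A := fun σ : ℝ => ζc (t + σ) - ζc σ) (v := ψ)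
        (fun i j => by
          exact
            (((hζcm i j).comp (measurable_const.add measurable_id)).sub (hζcm i j)))
        hψm).aestronglyMeasurable
    · intro σ _
      exact RFDEAux.norm_mulVec_le _ _
        (fun i j => hsubbound _ _ (fun a b => hCzb _ a b) (fun a b => hCzb _ a b) i j)
        (hψb σ) (by positivity) hCφ'0
  have int_rφ0 : IntervalIntegrable (fun τ => (ρ τ).mulVec (φ 0)) volume 0 t := by
    apply RFDEAux.intervalIntegrable_of_bounded (C := n * Cρ * ‖φ 0‖)
    · exact (RFDEAux.measurable_mulVec (A := ρ) (v := fun _ => φ 0)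
        hρm measurable_const).aestronglyMeasurable
    · intro τ hτ
      rw [Set.uIoc_of_le ht] at hτ
      exact RFDEAux.norm_mulVec_le _ _ (fun i j => hCρ τ ⟨hτ.1.le, hτ.2⟩ i j)
        le_rfl hCρ0 (norm_nonneg _)
  have hG2m : Measurable (Function.uncurry
      fun τ σ => ((ρ τ) * (ζc (t - τ + σ) - ζc σ)).mulVec (ψ σ)) :=
    RFDEAux.measurable_mulVec
      (A := fun p : ℝ × ℝ => ρ p.1 * (ζc (t - p.1 + p.2) - ζc p.2))
      (v := fun p : ℝ × ℝ => ψ p.2)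
      (RFDEAux.measurable_mul_entries
        (fun i j => (hρm i j).comp measurable_fst)
        (fun i j => by
          exact
            (((hζcm i j).comp ((measurable_const.sub measurable_fst).add measurable_snd)).sub
              ((hζcm i j).comp measurable_snd))))
      (hψm.comp measurable_snd)
  have hG2m' : Measurable (Function.uncurry
      fun σ τ => ((ρ τ) * (ζc (t - τ + σ) - ζc σ)).mulVec (ψ σ)) :=
    RFDEAux.measurable_mulVec
      (A := fun p : ℝ × ℝ => ρ p.2 * (ζc (t - p.2 + p.1) - ζc p.1))
      (v := fun p : ℝ × ℝ => ψ p.1)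
      (RFDEAux.measurable_mul_entries
        (fun i j => (hρm i j).comp measurable_snd)
        (fun i j => by
          exact
            (((hζcm i j).comp ((measurable_const.sub measurable_snd).add measurable_fst)).sub
              ((hζcm i j).comp measurable_fst))))
      (hψm.comp measurable_fst)
  have hG2bound : ∀ τ σ : ℝ, τ ∈ Set.Icc (0:ℝ) t →
      ‖((ρ τ) * (ζc (t - τ + σ) - ζc σ)).mulVec (ψ σ)‖
        ≤ n * (n * Cρ * (2 * Cz)) * Cφ' := by
    intro τ σ hτ
    exact RFDEAux.norm_mulVec_le _ _
      (RFDEAux.abs_mul_entry_le _ _ (fun i j => hCρ τ hτ i j)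
        (fun i j => hsubbound _ _ (fun a b => hCzb _ a b) (fun a b => hCzb _ a b) i j) hCρ0)
      (hψb σ) (by positivity) hCφ'0
  have int_B : IntervalIntegrable
      (fun σ => ∫ τ in (0:ℝ)..t, ((ρ τ) * (ζc (t - τ + σ) - ζc σ)).mulVec (ψ σ))
      volume 0 1 := by
    apply RFDEAux.intervalIntegrable_of_bounded
      (C := n * (n * Cρ * (2 * Cz)) * Cφ' * |t - 0|)
    · exact (RFDEAux.stronglyMeasurable_param hG2m' 0 t).measurable.aestronglyMeasurable
    · intro σ _
      apply intervalIntegral.norm_integral_le_of_norm_le_const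
      intro τ hτ
      rw [Set.uIoc_of_le ht] at hτ
      exact hG2bound τ σ ⟨hτ.1.le, hτ.2⟩
  have int_G2τ : IntervalIntegrable
      (fun τ => ∫ σ in (0:ℝ)..1, ((ρ τ) * (ζc (t - τ + σ) - ζc σ)).mulVec (ψ σ))
      volume 0 t := by
    apply RFDEAux.intervalIntegrable_of_bounded
      (C := n * (n * Cρ * (2 * Cz)) * Cφ' * |1 - 0|)
    · exact (RFDEAux.stronglyMeasurable_param hG2m 0 1).measurable.aestronglyMeasurable
    · intro τ hτ
      rw [Set.uIoc_of_le ht] at hτ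
      apply intervalIntegral.norm_integral_le_of_norm_le_const
      intro σ _
      exact hG2bound τ σ ⟨hτ.1.le, hτ.2⟩
  -- the inner convolution, evaluated via the resolvent identity
  have step2 : ∀ u ∈ Set.Icc (0:ℝ) t,
      (∫ s in u..t, ((ρ (t - s)) * (ζc (s - u))).mulVec (x u))
        = ((ρ (t - u)) - (ζc (t - u))).mulVec (x u) := by
    intro u hu
    funext i
    rw [RFDEAux.eval_intervalIntegral (int_tri u hu) i]
    simp only [Matrix.mulVec, dotProduct]
    rw [intervalIntegral.integral_finset_sum]
    swap
    · intro j _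
      exact (int_entry u hu i j).mul_const _
    have hterm : ∀ j ∈ Finset.univ (α := Fin n),
        (∫ s in u..t, (ρ (t - s) * ζc (s - u)) i j * x u j)
          = (ρ (t - u) i j - ζc (t - u) i j) * x u j := by
      intro j _
      rw [intervalIntegral.integral_mul_const]
      have sub1 : (∫ s in u..t, (ρ (t - s) * ζc (s - u)) i j)
          = ∫ w in (0:ℝ)..(t - u), (ρ (t - u - w) * ζc w) i j := by
        have h := intervalIntegral.integral_comp_add_right (a := (0:ℝ)) (b := t - u)
          (fun s => (ρ (t - s) * ζc (s - u)) i j) u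
        have e0 : (0:ℝ) + u = u := by ring
        have e3 : t - u + u = t := by ring
        rw [e0, e3] at h
        rw [← h]
        apply intervalIntegral.integral_congr
        intro w _
        beta_reduce
        show (ρ (t - (w + u)) * ζc (w + u - u)) i j = (ρ (t - u - w) * ζc w) i j
        have e1 : t - (w + u) = t - u - w := by ring
        have e2 : w + u - u = w := by ring
        rw [e1, e2]
      rw [sub1, hρ1' (t - u) (by linarith [hu.2]) i j]
    rw [Finset.sum_congr rfl hterm]
    simp [Matrix.sub_apply, sub_mul]
  -- joint measurability and bound for the triangle kernel
  have hFm : Measurable (Function.uncurry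
      fun s u => ((ρ (t - s)) * (ζc (s - u))).mulVec (x u)) :=
    RFDEAux.measurable_mulVec
      (A := fun p : ℝ × ℝ => ρ (t - p.1) * ζc (p.1 - p.2)) (v := fun p : ℝ × ℝ => x p.2)
      (RFDEAux.measurable_mul_entries
        (fun i j => (hρm i j).comp (measurable_const.sub measurable_fst))
        (fun i j => (hζcm i j).comp (measurable_fst.sub measurable_snd)))
      (hxm.comp measurable_snd)
  have hFb : ∀ s u : ℝ, s ∈ Set.Icc (0:ℝ) t → u ∈ Set.Icc (0:ℝ) t →
      ‖((ρ (t - s)) * (ζc (s - u))).mulVec (x u)‖ ≤ n * (n * Cρ * Cz) * Cx := by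
    intro s u hs hu
    exact RFDEAux.norm_mulVec_le _ _
      (RFDEAux.abs_mul_entry_le _ _
        (fun i j => hCρ (t - s) ⟨by linarith [hs.2], by linarith [hs.1]⟩ i j)
        (fun i j => hCzb _ i j) hCρ0)
      (hCx u ⟨by linarith [hu.1], hu.2⟩) (by positivity) hCx0
  -- key identity: ζ∗x = ρ∗f
  have keyA : (∫ u in (0:ℝ)..t, (ζc (t - u)).mulVec (x u))
      = ∫ s in (0:ℝ)..t, (ρ (t - s)).mulVec (f s) := by
    have e1 : (∫ s in (0:ℝ)..t, (ρ (t - s)).mulVec (x s))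
          - (∫ s in (0:ℝ)..t, (ρ (t - s)).mulVec (f s))
        = ∫ s in (0:ℝ)..t, (ρ (t - s)).mulVec
            (∫ u in (0:ℝ)..s, (ζc (s - u)).mulVec (x u)) := by
      rw [← intervalIntegral.integral_sub int_rx int_rf]
      apply intervalIntegral.integral_congr
      intro s hs
      beta_reduce
      rw [Set.uIcc_of_le ht] at hs
      rw [← Matrix.mulVec_sub, hxeq' s hs.1, add_sub_cancel_right]
    have e2 : (∫ s in (0:ℝ)..t, (ρ (t - s)).mulVec
            (∫ u in (0:ℝ)..s, (ζc (s - u)).mulVec (x u)))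
        = (∫ s in (0:ℝ)..t, (ρ (t - s)).mulVec (x s))
          - (∫ u in (0:ℝ)..t, (ζc (t - u)).mulVec (x u)) := by
      have c1 : ∀ s ∈ Set.uIcc (0:ℝ) t,
          (ρ (t - s)).mulVec (∫ u in (0:ℝ)..s, (ζc (s - u)).mulVec (x u))
            = ∫ u in (0:ℝ)..s, ((ρ (t - s)) * (ζc (s - u))).mulVec (x u) := by
        intro s hs
        rw [Set.uIcc_of_le ht] at hs
        rw [RFDEAux.mulVec_intervalIntegral _ (int_i s hs)]
        apply intervalIntegral.integral_congr
        intro u _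
        beta_reduce
        rw [Matrix.mulVec_mulVec]
      rw [intervalIntegral.integral_congr c1]
      rw [RFDEAux.triangle_swap ht hFm hFb]
      have c2 : ∀ u ∈ Set.uIcc (0:ℝ) t,
          (∫ s in u..t, ((ρ (t - s)) * (ζc (s - u))).mulVec (x u))
            = (ρ (t - u)).mulVec (x u) - (ζc (t - u)).mulVec (x u) := by
        intro u hu
        rw [Set.uIcc_of_le ht] at hu
        rw [step2 u hu, Matrix.sub_mulVec]
      rw [intervalIntegral.integral_congr c2]
      exact intervalIntegral.integral_sub int_rx int_zx
    exact (sub_right_inj.mp (e1.trans e2)).symm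
  -- representation x = f + ρ∗f
  have hxrep : x t = f t + ∫ τ in (0:ℝ)..t, (ρ τ).mulVec (f (t - τ)) := by
    have h1 := hxeq' t ht
    have hsub : (∫ s in (0:ℝ)..t, (ρ (t - s)).mulVec (f s))
        = ∫ τ in (0:ℝ)..t, (ρ τ).mulVec (f (t - τ)) := by
      have h := intervalIntegral.integral_comp_sub_left (a := (0:ℝ)) (b := t)
        (fun τ => (ρ τ).mulVec (f (t - τ))) t
      have e3 : t - t = (0:ℝ) := by ring
      rw [e3, sub_zero] at h
      rw [← h]
      apply intervalIntegral.integral_congr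
      intro s _
      beta_reduce
      show (ρ (t - s)).mulVec (f s) = (ρ (t - s)).mulVec (f (t - (t - s)))
      have e4 : t - (t - s) = s := by ring
      rw [e4]
    rw [h1, keyA, hsub]
    abel
  -- expand ρ∗f
  have expand : (∫ τ in (0:ℝ)..t, (ρ τ).mulVec (f (t - τ)))
      = (∫ τ in (0:ℝ)..t, (ρ τ).mulVec (φ 0))
        + ∫ σ in (0:ℝ)..1, ∫ τ in (0:ℝ)..t,
            ((ρ τ) * (ζc (t - τ + σ) - ζc σ)).mulVec (ψ σ) := by
    have e : ∀ τ ∈ Set.uIcc (0:ℝ) t, (ρ τ).mulVec (f (t - τ))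
        = (ρ τ).mulVec (φ 0)
          + ∫ σ in (0:ℝ)..1, ((ρ τ) * (ζc (t - τ + σ) - ζc σ)).mulVec (ψ σ) := by
      intro τ _
      simp only [hfdef]
      rw [Matrix.mulVec_add]
      congr 1
      rw [RFDEAux.mulVec_intervalIntegral _ (int_inner τ)]
      apply intervalIntegral.integral_congr
      intro σ _
      beta_reduce
      rw [Matrix.mulVec_mulVec]
    rw [intervalIntegral.integral_congr e,
      intervalIntegral.integral_add int_rφ0 int_G2τ]
    congr 1
    exact RFDEAux.rect_swap ht hG2m (fun τ σ hτ _ => hG2bound τ σ hτ)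
  -- final assembly
  have conv1 : (∫ σ in (0:ℝ)..1,
        ((ζ (t + σ) - ζ σ).mulVec (φ (-σ))
          + ∫ τ in (0:ℝ)..t, ((ρ τ) * (ζ (t - τ + σ) - ζ σ)).mulVec (φ (-σ))))
      = ∫ σ in (0:ℝ)..1,
        ((ζc (t + σ) - ζc σ).mulVec (ψ σ)
          + ∫ τ in (0:ℝ)..t, ((ρ τ) * (ζc (t - τ + σ) - ζc σ)).mulVec (ψ σ)) := by
    apply intervalIntegral.integral_congr
    intro σ hσ
    beta_reduce
    rw [Set.uIcc_of_le zero_le_one] at hσ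
    rw [← hcz (t + σ) (by linarith [hσ.1]), ← hcz σ hσ.1, ← hψeq σ hσ]
    congr 1
    apply intervalIntegral.integral_congr
    intro τ hτ
    beta_reduce
    rw [Set.uIcc_of_le ht] at hτ
    rw [← hcz (t - τ + σ) (by linarith [hτ.2, hσ.1])]
  rw [conv1]
  have split : (∫ σ in (0:ℝ)..1,
        ((ζc (t + σ) - ζc σ).mulVec (ψ σ)
          + ∫ τ in (0:ℝ)..t, ((ρ τ) * (ζc (t - τ + σ) - ζc σ)).mulVec (ψ σ)))
      = (∫ σ in (0:ℝ)..1, (ζc (t + σ) - ζc σ).mulVec (ψ σ))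
        + ∫ σ in (0:ℝ)..1, ∫ τ in (0:ℝ)..t,
            ((ρ τ) * (ζc (t - τ + σ) - ζc σ)).mulVec (ψ σ) :=
    intervalIntegral.integral_add int_A int_B
  rw [split, hxrep, expand]
  have hft : f t = φ 0 + ∫ σ in (0:ℝ)..1, (ζc (t + σ) - ζc σ).mulVec (ψ σ) := by
    simp only [hfdef]
  rw [hft]
  abel
end

section
/- Let L : ℝ → ℝ^{n×n} satisfy: L restricted to [0,1] has entries of bounded variation, right-continuous on (0,1), with L(0) = 0, and L(a) = 0 for a ≤ 0, L(a) = L(1) for a ≥ 1. Let ψ : ℝ → ℝⁿ be of normalized bounded variation on [-1,0] (right-continuous on (-1,0), ψ(0) = 0), extended by ψ(θ) = 0 for θ > 0 and ψ(θ) = ψ(-1) for θ < -1. Then for every t ≥ 0, ∫_{(t,1]} L(da) ψ(t−a) − ∫_{[0,1]} L(da) ψ(−a) = ∫_{[-1,0]} [ L(t−θ) − L(−θ) ] ψ(dθ), where the left-hand integrals are against the measure determined by L and the right-hand integral is against the vector measure determined by ψ. -/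
open MeasureTheory Filter Topology

lemma neutral_renewal_aux (Lb ψb : Measure ℝ) [IsFiniteMeasure Lb] [IsFiniteMeasure ψb]
    (hLsupp : Lb ((Set.Icc (0:ℝ) 1)ᶜ) = 0) (hψsupp : ψb ((Set.Ioc (-1:ℝ) 0)ᶜ) = 0)
    (f g : ℝ → ℝ) (hfi : Integrable f Lb)
    (hg : Measurable g) (hgi : Integrable g ψb)
    (Lv ψv : ℝ → ℝ) (c : ℝ)
    (hLv : ∀ x ∈ Set.Icc (0:ℝ) 1, Lv x = ∫ a in Set.Icc (0:ℝ) x, f a ∂Lb)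
    (hLone : ∀ x : ℝ, 1 ≤ x → Lv x = Lv 1)
    (hψv : ∀ x ∈ Set.Icc (-1:ℝ) 0, ψv x = c + ∫ s in Set.Ioc (-1:ℝ) x, g s ∂ψb)
    (hψ0 : ψv 0 = 0)
    (t : ℝ) (ht : 0 ≤ t) :
    (∫ a in Set.Ioc t 1, f a * ψv (t - a) ∂Lb)
      - (∫ a in Set.Icc (0:ℝ) 1, f a * ψv (-a) ∂Lb)
      = ∫ θ in Set.Icc (-1:ℝ) 0, (Lv (t - θ) - Lv (-θ)) * g θ ∂ψb := by
  classical
  -- the primitive of `g`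
  set J : ℝ → ℝ := fun x => ∫ s in Set.Ioc (-1:ℝ) x, g s ∂ψb with hJ
  have hJeq : J = fun x => ∫ θ, ({q : ℝ × ℝ | -1 < q.2 ∧ q.2 ≤ q.1}).indicator
      (fun q => g q.2) (x, θ) ∂ψb := by
    funext x
    simp only [hJ]
    rw [← integral_indicator measurableSet_Ioc]
    refine integral_congr_ae (Eventually.of_forall fun θ => ?_)
    simp [Set.indicator_apply, Set.mem_Ioc, Set.mem_setOf_eq]
  have hJmeas : StronglyMeasurable J := by
    rw [hJeq]
    exact (((hg.comp measurable_snd).indicator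
      ((measurableSet_lt measurable_const measurable_snd).inter
        (measurableSet_le measurable_snd measurable_fst))).stronglyMeasurable).integral_prod_right'
  have hJbdd : ∀ x, ‖J x‖ ≤ ∫ θ, ‖g θ‖ ∂ψb := by
    intro x
    calc ‖J x‖ ≤ ∫ θ in Set.Ioc (-1:ℝ) x, ‖g θ‖ ∂ψb := norm_integral_le_integral_norm _
      _ ≤ ∫ θ, ‖g θ‖ ∂ψb :=
        integral_mono_measure Measure.restrict_le_self
          (Eventually.of_forall fun θ => norm_nonneg _) hgi.norm
  have hmul : ∀ e : ℝ → ℝ, Measurable e → Integrable (fun a => f a * J (e a)) Lb := by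
    intro e he
    have h1 : Integrable (fun a => J (e a) * f a) Lb :=
      Integrable.bdd_mul hfi ((hJmeas.measurable.comp he).aestronglyMeasurable)
        (Eventually.of_forall fun x => hJbdd (e x))
    exact h1.congr (Eventually.of_forall fun a => mul_comm _ _)
  -- a.e. localization on the product
  have hp1 : ∀ᵐ p : ℝ × ℝ ∂(Lb.prod ψb), p.1 ∈ Set.Icc (0:ℝ) 1 := by
    rw [ae_iff]
    have hs : {p : ℝ × ℝ | ¬ p.1 ∈ Set.Icc (0:ℝ) 1} = (Set.Icc (0:ℝ) 1)ᶜ ×ˢ (Set.univ : Set ℝ) := by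
      ext p; simp
    rw [hs, Measure.prod_prod, hLsupp, zero_mul]
  have hp2 : ∀ᵐ p : ℝ × ℝ ∂(Lb.prod ψb), p.2 ∈ Set.Ioc (-1:ℝ) 0 := by
    rw [ae_iff]
    have hs : {p : ℝ × ℝ | ¬ p.2 ∈ Set.Ioc (-1:ℝ) 0} = (Set.univ : Set ℝ) ×ˢ (Set.Ioc (-1:ℝ) 0)ᶜ := by
      ext p; simp
    rw [hs, Measure.prod_prod, hψsupp, mul_zero]
  set F : ℝ × ℝ → ℝ := fun p => f p.1 * g p.2 with hF
  have hFi : Integrable F (Lb.prod ψb) := hfi.mul_prod hgi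
  set S₁ : Set (ℝ × ℝ) := {p : ℝ × ℝ | p.1 ∈ Set.Ioc t 1 ∧ p.2 ∈ Set.Ioc (-1:ℝ) (t - p.1)} with hS₁
  set S₂ : Set (ℝ × ℝ) := {p : ℝ × ℝ | p.1 ∈ Set.Icc (0:ℝ) 1 ∧ p.2 ∈ Set.Ioc (-1:ℝ) (-p.1)} with hS₂
  set S₃ : Set (ℝ × ℝ) := {p : ℝ × ℝ | p.2 ∈ Set.Icc (-1:ℝ) 0 ∧ p.1 ∈ Set.Ioc (-p.2) (t - p.2)} with hS₃
  set S₄ : Set (ℝ × ℝ) := Set.Iic t ×ˢ Set.Ioc (-1:ℝ) 0 with hS₄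
  have m1 : MeasurableSet S₁ := by
    have : S₁ = (Set.Ioc t 1 ×ˢ Set.Ioi (-1:ℝ)) ∩ {p : ℝ × ℝ | p.2 ≤ t - p.1} := by
      ext p
      simp only [hS₁, Set.mem_setOf_eq, Set.mem_Ioc, Set.mem_inter_iff, Set.mem_prod, Set.mem_Ioi]
      try tauto
    rw [this]
    exact (measurableSet_Ioc.prod measurableSet_Ioi).inter
      (measurableSet_le measurable_snd (measurable_const.sub measurable_fst))
  have m2 : MeasurableSet S₂ := by
    have : S₂ = (Set.Icc (0:ℝ) 1 ×ˢ Set.Ioi (-1:ℝ)) ∩ {p : ℝ × ℝ | p.2 ≤ -p.1} := by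
      ext p
      simp only [hS₂, Set.mem_setOf_eq, Set.mem_Ioc, Set.mem_inter_iff, Set.mem_prod, Set.mem_Ioi]
      try tauto
    rw [this]
    exact (measurableSet_Icc.prod measurableSet_Ioi).inter
      (measurableSet_le measurable_snd measurable_fst.neg)
  have m3 : MeasurableSet S₃ := by
    have : S₃ = ((Set.univ : Set ℝ) ×ˢ Set.Icc (-1:ℝ) 0) ∩
        ({p : ℝ × ℝ | -p.2 < p.1} ∩ {p : ℝ × ℝ | p.1 ≤ t - p.2}) := by
      ext p
      simp only [hS₃, Set.mem_setOf_eq, Set.mem_Ioc, Set.mem_inter_iff, Set.mem_prod,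
        Set.mem_univ, true_and]
      try tauto
    rw [this]
    exact (MeasurableSet.univ.prod measurableSet_Icc).inter
      ((measurableSet_lt measurable_snd.neg measurable_fst).inter
        (measurableSet_le measurable_fst (measurable_const.sub measurable_snd)))
  have m4 : MeasurableSet S₄ := measurableSet_Iic.prod measurableSet_Ioc
  -- the key indicator identity and Fubini
  have hAB : (∫ p, S₁.indicator F p ∂(Lb.prod ψb)) - (∫ p, S₂.indicator F p ∂(Lb.prod ψb))
      = (∫ p, S₃.indicator F p ∂(Lb.prod ψb)) - (∫ p, S₄.indicator F p ∂(Lb.prod ψb)) := by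
    rw [← integral_sub (hFi.indicator m1) (hFi.indicator m2),
      ← integral_sub (hFi.indicator m3) (hFi.indicator m4)]
    refine integral_congr_ae ?_
    filter_upwards [hp1, hp2] with p h1 h2
    obtain ⟨a, θ⟩ := p
    obtain ⟨ha0, ha1⟩ := h1
    obtain ⟨hθ1, hθ0⟩ := h2
    have e1 : S₁.indicator F (a, θ) = if t < a ∧ a ≤ t - θ then f a * g θ else 0 := by
      by_cases h : t < a ∧ a ≤ t - θ
      · rw [if_pos h, Set.indicator_of_mem (show (a, θ) ∈ S₁ from ⟨⟨h.1, ha1⟩, ⟨hθ1, by linarith [h.2]⟩⟩)]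
      · rw [if_neg h, Set.indicator_of_notMem]
        intro hc
        exact h ⟨hc.1.1, by linarith [hc.2.2]⟩
    have e2 : S₂.indicator F (a, θ) = if a ≤ -θ then f a * g θ else 0 := by
      by_cases h : a ≤ -θ
      · rw [if_pos h, Set.indicator_of_mem (show (a, θ) ∈ S₂ from ⟨⟨ha0, ha1⟩, ⟨hθ1, by linarith⟩⟩)]
      · rw [if_neg h, Set.indicator_of_notMem]
        intro hc
        exact h (by linarith [hc.2.2])
    have e3 : S₃.indicator F (a, θ) = if -θ < a ∧ a ≤ t - θ then f a * g θ else 0 := by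
      by_cases h : -θ < a ∧ a ≤ t - θ
      · rw [if_pos h, Set.indicator_of_mem (show (a, θ) ∈ S₃ from ⟨⟨hθ1.le, hθ0⟩, h⟩)]
      · rw [if_neg h, Set.indicator_of_notMem]
        intro hc
        exact h hc.2
    have e4 : S₄.indicator F (a, θ) = if a ≤ t then f a * g θ else 0 := by
      by_cases h : a ≤ t
      · rw [if_pos h, Set.indicator_of_mem (show (a, θ) ∈ S₄ from ⟨h, ⟨hθ1, hθ0⟩⟩)]
      · rw [if_neg h, Set.indicator_of_notMem]
        intro hc
        exact h hc.1
    rw [e1, e2, e3, e4]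
    rcases le_or_gt a t with h1 | h1 <;> rcases le_or_gt a (-θ) with h2 | h2 <;>
      rcases le_or_gt a (t - θ) with h3 | h3
    · rw [if_neg (fun hc => absurd hc.1 (not_lt.2 h1)), if_pos h2,
        if_neg (fun hc => absurd hc.1 (not_lt.2 h2)), if_pos h1]
    · exact absurd (show a ≤ t - θ by linarith) (not_le.2 h3)
    · rw [if_neg (fun hc => absurd hc.1 (not_lt.2 h1)), if_neg (not_le.2 h2),
        if_pos ⟨h2, h3⟩, if_pos h1]
      ring
    · exact absurd (show a ≤ t - θ by linarith) (not_le.2 h3)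
    · rw [if_pos ⟨h1, h3⟩, if_pos h2, if_neg (fun hc => absurd hc.1 (not_lt.2 h2)),
        if_neg (not_le.2 h1)]
      ring
    · exact absurd (show a ≤ t - θ by linarith) (not_le.2 h3)
    · rw [if_pos ⟨h1, h3⟩, if_neg (not_le.2 h2), if_pos ⟨h2, h3⟩, if_neg (not_le.2 h1)]
    · rw [if_neg (fun hc => absurd hc.2 (not_le.2 h3)), if_neg (not_le.2 h2),
        if_neg (fun hc => absurd hc.2 (not_le.2 h3)), if_neg (not_le.2 h1)]
  -- Fubini computations of the four product integrals
  have compA : (∫ p, S₁.indicator F p ∂(Lb.prod ψb))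
      = ∫ a in Set.Ioc t 1, f a * J (t - a) ∂Lb := by
    rw [integral_prod _ (hFi.indicator m1), ← integral_indicator measurableSet_Ioc]
    refine integral_congr_ae (Eventually.of_forall fun a => ?_)
    by_cases ha : a ∈ Set.Ioc t 1
    · rw [Set.indicator_of_mem ha]
      simp only [hJ]
      rw [← integral_const_mul, ← integral_indicator measurableSet_Ioc]
      refine integral_congr_ae (Eventually.of_forall fun θ => ?_)
      show S₁.indicator F (a, θ) = (Set.Ioc (-1:ℝ) (t - a)).indicator (fun s => f a * g s) θ
      rw [Set.indicator_apply, Set.indicator_apply]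
      exact if_congr ⟨fun h => h.2, fun h => ⟨ha, h⟩⟩ rfl rfl
    · rw [Set.indicator_of_notMem ha]
      have hz : ∀ θ, S₁.indicator F (a, θ) = 0 :=
        fun θ => Set.indicator_of_notMem (fun hc => ha hc.1) _
      simp [hz]
  have compB : (∫ p, S₂.indicator F p ∂(Lb.prod ψb))
      = ∫ a in Set.Icc (0:ℝ) 1, f a * J (-a) ∂Lb := by
    rw [integral_prod _ (hFi.indicator m2), ← integral_indicator measurableSet_Icc]
    refine integral_congr_ae (Eventually.of_forall fun a => ?_)
    by_cases ha : a ∈ Set.Icc (0:ℝ) 1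
    · rw [Set.indicator_of_mem ha]
      simp only [hJ]
      rw [← integral_const_mul, ← integral_indicator measurableSet_Ioc]
      refine integral_congr_ae (Eventually.of_forall fun θ => ?_)
      show S₂.indicator F (a, θ) = (Set.Ioc (-1:ℝ) (-a)).indicator (fun s => f a * g s) θ
      rw [Set.indicator_apply, Set.indicator_apply]
      exact if_congr ⟨fun h => h.2, fun h => ⟨ha, h⟩⟩ rfl rfl
    · rw [Set.indicator_of_notMem ha]
      have hz : ∀ θ, S₂.indicator F (a, θ) = 0 :=
        fun θ => Set.indicator_of_notMem (fun hc => ha hc.1) _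
      simp [hz]
  have compR : (∫ p, S₃.indicator F p ∂(Lb.prod ψb))
      = ∫ θ in Set.Icc (-1:ℝ) 0, (∫ a in Set.Ioc (-θ) (t - θ), f a ∂Lb) * g θ ∂ψb := by
    rw [integral_prod_symm _ (hFi.indicator m3), ← integral_indicator measurableSet_Icc]
    refine integral_congr_ae (Eventually.of_forall fun θ => ?_)
    by_cases hθ : θ ∈ Set.Icc (-1:ℝ) 0
    · rw [Set.indicator_of_mem hθ]
      rw [← integral_mul_const, ← integral_indicator measurableSet_Ioc]
      refine integral_congr_ae (Eventually.of_forall fun a => ?_)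
      show S₃.indicator F (a, θ) = (Set.Ioc (-θ) (t - θ)).indicator (fun x => f x * g θ) a
      rw [Set.indicator_apply, Set.indicator_apply]
      exact if_congr ⟨fun h => h.2, fun h => ⟨hθ, h⟩⟩ rfl rfl
    · rw [Set.indicator_of_notMem hθ]
      have hz : ∀ a, S₃.indicator F (a, θ) = 0 :=
        fun a => Set.indicator_of_notMem (fun hc => hθ hc.1) _
      simp [hz]
  have compC : (∫ p, S₄.indicator F p ∂(Lb.prod ψb))
      = (∫ a in Set.Iic t, f a ∂Lb) * (∫ θ in Set.Ioc (-1:ℝ) 0, g θ ∂ψb) := by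
    have hsplit : ∀ p : ℝ × ℝ, S₄.indicator F p
        = ((Set.Iic t).indicator f p.1) * ((Set.Ioc (-1:ℝ) 0).indicator g p.2) := by
      intro p
      by_cases h1 : p.1 ∈ Set.Iic t <;> by_cases h2 : p.2 ∈ Set.Ioc (-1:ℝ) 0
      · rw [Set.indicator_of_mem h1, Set.indicator_of_mem h2,
          Set.indicator_of_mem (show p ∈ S₄ from ⟨h1, h2⟩)]
      · rw [Set.indicator_of_notMem h2, mul_zero,
          Set.indicator_of_notMem (fun hc => h2 hc.2)]
      · rw [Set.indicator_of_notMem h1, zero_mul,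
          Set.indicator_of_notMem (fun hc => h1 hc.1)]
      · rw [Set.indicator_of_notMem h1, zero_mul,
          Set.indicator_of_notMem (fun hc => h1 hc.1)]
    simp_rw [hsplit]
    rw [integral_prod_mul, integral_indicator measurableSet_Iic,
      integral_indicator measurableSet_Ioc]
  -- the two left-hand terms
  have hterm1 : (∫ a in Set.Ioc t 1, f a * ψv (t - a) ∂Lb)
      = c * (∫ a in Set.Ioc t 1, f a ∂Lb) + ∫ a in Set.Ioc t 1, f a * J (t - a) ∂Lb := by
    have h1 : (∫ a in Set.Ioc t 1, f a * ψv (t - a) ∂Lb)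
        = ∫ a in Set.Ioc t 1, (c * f a + f a * J (t - a)) ∂Lb := by
      refine setIntegral_congr_fun measurableSet_Ioc fun a ha => ?_
      obtain ⟨hat, ha1⟩ := ha
      rw [hψv (t - a) ⟨by linarith, by linarith⟩]
      simp only [hJ]
      ring
    rw [h1, integral_add ((hfi.const_mul c).integrableOn)
      ((hmul (fun a => t - a) (measurable_const.sub measurable_id)).integrableOn),
      integral_const_mul]
  have hterm2 : (∫ a in Set.Icc (0:ℝ) 1, f a * ψv (-a) ∂Lb)
      = c * (∫ a in Set.Icc (0:ℝ) 1, f a ∂Lb) + ∫ a in Set.Icc (0:ℝ) 1, f a * J (-a) ∂Lb := by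
    have h1 : (∫ a in Set.Icc (0:ℝ) 1, f a * ψv (-a) ∂Lb)
        = ∫ a in Set.Icc (0:ℝ) 1, (c * f a + f a * J (-a)) ∂Lb := by
      refine setIntegral_congr_fun measurableSet_Icc fun a ha => ?_
      obtain ⟨ha0, ha1⟩ := ha
      rw [hψv (-a) ⟨by linarith, by linarith⟩]
      simp only [hJ]
      ring
    rw [h1, integral_add ((hfi.const_mul c).integrableOn)
      ((hmul (fun a => -a) measurable_id.neg).integrableOn),
      integral_const_mul]
  -- rewriting `Lv` as a primitive over `Iic`
  have hMeq : ∀ x : ℝ, 0 ≤ x → Lv x = ∫ a in Set.Iic x, f a ∂Lb := by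
    intro x hx
    rcases le_or_gt x 1 with hx1 | hx1
    · rw [hLv x ⟨hx, hx1⟩]
      refine setIntegral_congr_set ?_
      rw [MeasureTheory.ae_eq_set]
      constructor
      · have hempty : Set.Icc (0:ℝ) x \ Set.Iic x = ∅ := by
          ext a
          simp only [Set.mem_diff, Set.mem_Icc, Set.mem_Iic, Set.mem_empty_iff_false, iff_false]
          rintro ⟨⟨_, h2⟩, h3⟩
          exact h3 h2
        simp [hempty]
      · refine measure_mono_null ?_ hLsupp
        rintro a ⟨h1, h2⟩
        simp only [Set.mem_Iic] at h1
        simp only [Set.mem_Icc, not_and, not_le] at h2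
        simp only [Set.mem_compl_iff, Set.mem_Icc, not_and, not_le]
        intro h0
        exact absurd (h2 h0) (not_lt.2 h1)
    · rw [hLone x hx1.le, hLv 1 ⟨by norm_num, le_rfl⟩]
      refine setIntegral_congr_set ?_
      rw [MeasureTheory.ae_eq_set]
      constructor
      · have hempty : Set.Icc (0:ℝ) 1 \ Set.Iic x = ∅ := by
          ext a
          simp only [Set.mem_diff, Set.mem_Icc, Set.mem_Iic, Set.mem_empty_iff_false, iff_false]
          rintro ⟨⟨_, h2⟩, h3⟩
          exact h3 (by linarith)
        simp [hempty]
      · refine measure_mono_null ?_ hLsupp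
        rintro a ⟨_, h2⟩
        exact h2
  have hdiff : ∀ θ ∈ Set.Icc (-1:ℝ) 0,
      Lv (t - θ) - Lv (-θ) = ∫ a in Set.Ioc (-θ) (t - θ), f a ∂Lb := by
    intro θ hθ
    obtain ⟨hθ1, hθ0⟩ := hθ
    rw [hMeq (t - θ) (by linarith), hMeq (-θ) (by linarith),
      ← Set.Iic_union_Ioc_eq_Iic (show (-θ:ℝ) ≤ t - θ by linarith),
      setIntegral_union (Set.Iic_disjoint_Ioc le_rfl) measurableSet_Ioc
        hfi.integrableOn hfi.integrableOn]
    ring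
  have hRHS : (∫ θ in Set.Icc (-1:ℝ) 0, (Lv (t - θ) - Lv (-θ)) * g θ ∂ψb)
      = ∫ θ in Set.Icc (-1:ℝ) 0, (∫ a in Set.Ioc (-θ) (t - θ), f a ∂Lb) * g θ ∂ψb :=
    setIntegral_congr_fun measurableSet_Icc fun θ hθ => by rw [hdiff θ hθ]
  have hsplitL : (∫ a in Set.Icc (0:ℝ) 1, f a ∂Lb)
      = (∫ a in Set.Iic t, f a ∂Lb) + ∫ a in Set.Ioc t 1, f a ∂Lb := by
    have hset : Set.Icc (0:ℝ) 1 =ᵐ[Lb] (Set.Iic t ∪ Set.Ioc t 1 : Set ℝ) := by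
      rw [MeasureTheory.ae_eq_set]
      constructor
      · have hempty : Set.Icc (0:ℝ) 1 \ (Set.Iic t ∪ Set.Ioc t 1) = ∅ := by
          ext a
          simp only [Set.mem_diff, Set.mem_Icc, Set.mem_union, Set.mem_Iic, Set.mem_Ioc,
            Set.mem_empty_iff_false, iff_false]
          rintro ⟨⟨h0, h1⟩, h2⟩
          push_neg at h2
          exact absurd h1 (not_le.2 (h2.2 h2.1))
        simp [hempty]
      · refine measure_mono_null ?_ hLsupp
        rintro a ⟨_, h2⟩
        exact h2
    rw [setIntegral_congr_set hset,
      setIntegral_union (Set.Iic_disjoint_Ioc le_rfl) measurableSet_Ioc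
        hfi.integrableOn hfi.integrableOn]
  have hg0 : (∫ θ in Set.Ioc (-1:ℝ) 0, g θ ∂ψb) = -c := by
    have h0 := hψv 0 ⟨by norm_num, le_rfl⟩
    rw [hψ0] at h0
    linarith
  -- assemble
  rw [compA, compB] at hAB
  rw [compR, compC, hg0] at hAB
  rw [hterm1, hterm2, hRHS, hsplitL]
  linear_combination hAB

/-- Lemmas 12.1 and 12.3 of Diekmann–Verduyn Lunel (integration by parts): for an NBV
kernel `L` on `[0,1]` (extended by `0` to the left and by `L(1)` to the right) and an
NBV initial datum `ψ` on `[-1,0]` (normalized by `ψ(0) = 0`, extended by `0` to the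
right and by `ψ(-1)` to the left),
`∫_{(t,1]} L(da) ψ(t−a) − ∫_{[0,1]} L(da) ψ(−a) = ∫_{[-1,0]} [L(t−θ) − L(−θ)] ψ(dθ)`
for all `t ≥ 0`.  The measures `dL` and `dψ` determined by `L` and `ψ` are represented
by base measures with densities. -/
theorem neutral_renewal_forcing_identity {n : ℕ}
    (L : ℝ → Matrix (Fin n) (Fin n) ℝ)
    (hLbv : ∀ i j, BoundedVariationOn (fun t => L t i j) (Set.Icc 0 1))
    (hLrc : ∀ t ∈ Set.Ioo (0:ℝ) 1, ∀ i j,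
      ContinuousWithinAt (fun s => L s i j) (Set.Ici t) t)
    (hLzero : L 0 = 0)
    (hLneg : ∀ a : ℝ, a ≤ 0 → L a = 0) (hLone : ∀ a : ℝ, 1 ≤ a → L a = L 1)
    -- representation of the measure `dL` on `[0,1]` (note `L(0) = 0`)
    (Lb : Measure ℝ) [IsFiniteMeasure Lb] (hLsupp : Lb ((Set.Icc (0:ℝ) 1)ᶜ) = 0)
    (Ld : ℝ → Fin n → Fin n → ℝ) (hLdm : ∀ i j, Measurable fun σ => Ld σ i j)
    (hLdi : ∀ i j, Integrable (fun σ => Ld σ i j) Lb)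
    (hLlink : ∀ a ∈ Set.Icc (0:ℝ) 1, ∀ i j,
      L a i j = ∫ σ in Set.Icc (0:ℝ) a, Ld σ i j ∂Lb)
    -- `ψ`: normalized bounded variation on `[-1,0]`, with the stated extensions
    (ψ : ℝ → Fin n → ℝ)
    (hψbv : ∀ i, BoundedVariationOn (fun θ => ψ θ i) (Set.Icc (-1) 0))
    (hψrc : ∀ θ ∈ Set.Ioo (-1:ℝ) 0, ContinuousWithinAt ψ (Set.Ici θ) θ)
    (hψzero : ψ 0 = 0)
    (hψpos : ∀ θ : ℝ, 0 < θ → ψ θ = 0) (hψneg : ∀ θ : ℝ, θ < -1 → ψ θ = ψ (-1))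
    -- representation of the vector measure `dψ` on `[-1,0]`
    (ψb : Measure ℝ) [IsFiniteMeasure ψb] (hψsupp : ψb ((Set.Ioc (-1:ℝ) 0)ᶜ) = 0)
    (ψd : ℝ → Fin n → ℝ) (hψdm : Measurable ψd) (hψdi : Integrable ψd ψb)
    (hψlink : ∀ θ ∈ Set.Icc (-1:ℝ) 0, ∀ i,
      ψ θ i = ψ (-1) i + ∫ s in Set.Ioc (-1:ℝ) θ, ψd s i ∂ψb) :
    ∀ t : ℝ, 0 ≤ t →
      ((fun i => ∑ k, ∫ a in Set.Ioc t 1, Ld a i k * ψ (t - a) k ∂Lb)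
          - fun i => ∑ k, ∫ a in Set.Icc (0:ℝ) 1, Ld a i k * ψ (-a) k ∂Lb)
        = fun i => ∑ k, ∫ θ in Set.Icc (-1:ℝ) 0,
            (L (t - θ) i k - L (-θ) i k) * ψd θ k ∂ψb := by
  intro t ht
  funext i
  simp only [Pi.sub_apply]
  rw [← Finset.sum_sub_distrib]
  refine Finset.sum_congr rfl fun k _ => ?_
  have hg : Measurable fun θ => ψd θ k := (measurable_pi_apply k).comp hψdm
  have hgi : Integrable (fun θ => ψd θ k) ψb :=
    (ContinuousLinearMap.proj (R := ℝ) (φ := fun _ : Fin n => ℝ) k).integrable_comp hψdi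
  exact neutral_renewal_aux Lb ψb hLsupp hψsupp
    (fun a => Ld a i k) (fun θ => ψd θ k) (hLdi i k) hg hgi
    (fun x => L x i k) (fun x => ψ x k) (ψ (-1) k)
    (fun x hx => hLlink x hx i k)
    (fun x hx => by simp only [hLone x hx])
    (fun x hx => hψlink x hx k)
    (by simp only [hψzero, Pi.zero_apply])
    t ht
end

section
/- Let μ be a complex Borel measure on [0,∞) of bounded total variation and let f : [0,∞) → ℂ be bounded and continuous, and set (μ ⋆ f)(t) = ∫_{[0,t]} f(t−s) μ(ds). Then: (i) if f(0) = 0, then μ ⋆ f is a bounded continuous function on [0,∞) with sup_t |(μ ⋆ f)(t)| ≤ ‖μ‖_{TV} · sup_t |f(t)|; (ii) if μ has no discrete part (no atoms), then μ ⋆ f is a bounded continuous function on [0,∞) with the same bound, without assuming f(0) = 0. -/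
open MeasureTheory Filter Topology

/-- Key continuity lemma, for a globally continuous bounded `F`. -/
lemma conv_key (base : Measure ℝ) [IsFiniteMeasure base]
    (dens : ℝ → ℂ) (hdm : Measurable dens) (hdi : Integrable dens base)
    (F : ℝ → ℂ) (hFc : Continuous F) (C : ℝ) (hC : ∀ x, ‖F x‖ ≤ C)
    (g : ℝ → ℂ)
    (hg : ∀ t ∈ Set.Ici (0:ℝ), g t = ∫ s in Set.Icc (0:ℝ) t, F (t - s) * dens s ∂base)
    (hcase : F 0 = 0 ∨ ∀ x : ℝ, dens x = 0 ∨ base {x} = 0) :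
    ContinuousOn g (Set.Ici 0) := by
  have hC0 : 0 ≤ C := le_trans (norm_nonneg _) (hC 0)
  intro t ht
  rw [ContinuousWithinAt, tendsto_iff_seq_tendsto]
  intro u hu
  have hut : Tendsto u atTop (𝓝 t) := hu.mono_right nhdsWithin_le_nhds
  have hu0 : ∀ᶠ n in atTop, u n ∈ Set.Ici (0:ℝ) := hu.eventually eventually_mem_nhdsWithin
  set Fn : ℕ → ℝ → ℂ := fun n s => (Set.Icc (0:ℝ) (u n)).indicator
      (fun s => F (u n - s) * dens s) s with hFn
  set Flim : ℝ → ℂ := fun s => (Set.Icc (0:ℝ) t).indicator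
      (fun s => F (t - s) * dens s) s with hFlim
  have hgt : g t = ∫ s, Flim s ∂base := by
    rw [hg t ht, hFlim]
    exact (integral_indicator measurableSet_Icc).symm
  have heq : ∀ᶠ n in atTop, (fun n => ∫ s, Fn n s ∂base) n = (g ∘ u) n := by
    filter_upwards [hu0] with n hn
    simp only [Function.comp_apply, hg (u n) hn, hFn]
    exact integral_indicator measurableSet_Icc
  rw [show (𝓝 (g t)) = 𝓝 (∫ s, Flim s ∂base) by rw [hgt]]
  refine Tendsto.congr' heq ?_
  -- pointwise convergence lemma
  have hpt : ∀ s : ℝ, (s ≠ t ∨ dens t = 0 ∨ F 0 = 0) →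
      Tendsto (fun n => Fn n s) atTop (𝓝 (Flim s)) := by
    intro s hs
    rcases lt_trichotomy s t with hst | heqst | hst
    · rcases lt_or_ge s 0 with hs0 | hs0
      · have h1 : ∀ n, Fn n s = 0 := fun n =>
          Set.indicator_of_notMem (fun hm => absurd hm.1 (not_le.2 hs0)) _
        have h2 : Flim s = 0 :=
          Set.indicator_of_notMem (fun hm => absurd hm.1 (not_le.2 hs0)) _
        simp only [h1, h2]
        exact tendsto_const_nhds
      · -- 0 ≤ s < t
        have hev : ∀ᶠ n in atTop, s < u n := hut.eventually (eventually_gt_nhds hst)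
        have h2 : Flim s = F (t - s) * dens s :=
          Set.indicator_of_mem (Set.mem_Icc.mpr ⟨hs0, hst.le⟩) _
        rw [h2]
        refine Tendsto.congr' ?_ (((hFc.tendsto (t - s)).comp (hut.sub_const s)).mul
          tendsto_const_nhds)
        filter_upwards [hev] with n hn
        simp only [hFn]
        rw [Set.indicator_of_mem (show s ∈ Set.Icc (0:ℝ) (u n) from ⟨hs0, hn.le⟩)]
        rfl
    · -- s = s
      subst heqst
      rcases eq_or_ne (dens s) 0 with hd | hd
      · have h1 : ∀ n, Fn n s = 0 := by
          intro n
          by_cases hm : s ∈ Set.Icc (0:ℝ) (u n)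
          · simp only [hFn]; rw [Set.indicator_of_mem hm, hd, mul_zero]
          · exact Set.indicator_of_notMem hm _
        have h2 : Flim s = 0 := by
          by_cases hm : s ∈ Set.Icc (0:ℝ) s
          · simp only [hFlim]; rw [Set.indicator_of_mem hm, hd, mul_zero]
          · exact Set.indicator_of_notMem hm _
        simp only [h1, h2]
        exact tendsto_const_nhds
      · have hF0 : F 0 = 0 := by
          rcases hs with h | h | h
          · exact absurd rfl h
          · exact absurd h hd
          · exact h
        have h2 : Flim s = 0 := by
          rw [hFlim]
          by_cases hm : s ∈ Set.Icc (0:ℝ) s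
          · simp only [Set.indicator_of_mem hm, sub_self, hF0, zero_mul]
          · exact Set.indicator_of_notMem hm _
        rw [h2]
        rw [tendsto_zero_iff_norm_tendsto_zero]
        have hb : ∀ n, ‖Fn n s‖ ≤ ‖F (u n - s)‖ * ‖dens s‖ := by
          intro n
          by_cases hm : s ∈ Set.Icc (0:ℝ) (u n)
          · rw [hFn]; simp only [Set.indicator_of_mem hm, norm_mul]; exact le_refl _
          · rw [hFn]; simp only [Set.indicator_of_notMem hm, norm_zero]
            positivity
        have htend : Tendsto (fun n => ‖F (u n - s)‖ * ‖dens s‖) atTop (𝓝 0) := by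
          have : Tendsto (fun n => u n - s) atTop (𝓝 0) := by
            simpa using hut.sub_const s
          have := ((hFc.tendsto 0).comp this).norm.mul_const ‖dens s‖
          simpa [hF0] using this
        exact squeeze_zero (fun n => norm_nonneg _) hb htend
    · -- t < s
      have hev : ∀ᶠ n in atTop, u n < s := hut.eventually (eventually_lt_nhds hst)
      have h2 : Flim s = 0 :=
        Set.indicator_of_notMem (fun hm => absurd hm.2 (not_le.2 hst)) _
      rw [h2]
      refine Tendsto.congr' ?_ tendsto_const_nhds
      filter_upwards [hev] with n hn
      simp only [hFn]
      exact (Set.indicator_of_notMem (fun (hm : s ∈ Set.Icc (0:ℝ) (u n)) => absurd hm.2 (not_le.2 hn)) _).symm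
  have hmeas : ∀ n, AEStronglyMeasurable (Fn n) base := by
    intro n
    exact (((hFc.comp (continuous_const.sub continuous_id)).measurable.mul
      hdm).aestronglyMeasurable).indicator measurableSet_Icc
  have hbound : ∀ n, ∀ᵐ s ∂base, ‖Fn n s‖ ≤ C * ‖dens s‖ := by
    intro n
    refine Eventually.of_forall fun s => ?_
    by_cases hm : s ∈ Set.Icc (0:ℝ) (u n)
    · rw [hFn]; simp only [Set.indicator_of_mem hm, norm_mul]
      exact mul_le_mul_of_nonneg_right (hC _) (norm_nonneg _)
    · rw [hFn]; simp only [Set.indicator_of_notMem hm, norm_zero]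
      positivity
  have hlim : ∀ᵐ s ∂base, Tendsto (fun n => Fn n s) atTop (𝓝 (Flim s)) := by
    rcases hcase with hF0 | hatom
    · exact Eventually.of_forall fun s => hpt s (Or.inr (Or.inr hF0))
    · rcases hatom t with hd | hsing
      · exact Eventually.of_forall fun s => hpt s (Or.inr (Or.inl hd))
      · have : ∀ᵐ s ∂base, s ≠ t := by
          rw [ae_iff]
          convert hsing using 2
          ext s; simp
        filter_upwards [this] with s hs using hpt s (Or.inl hs)
  exact tendsto_integral_of_dominated_convergence _ hmeas (hdi.norm.const_mul C) hbound hlim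

lemma conv_bound (base : Measure ℝ) [IsFiniteMeasure base]
    (dens : ℝ → ℂ) (hdm : Measurable dens) (hdi : Integrable dens base)
    (F : ℝ → ℂ) (hFc : Continuous F) (C : ℝ) (hC : ∀ x, ‖F x‖ ≤ C)
    (t : ℝ) :
    ‖∫ s in Set.Icc (0:ℝ) t, F (t - s) * dens s ∂base‖ ≤ (∫ s, ‖dens s‖ ∂base) * C := by
  have hC0 : 0 ≤ C := le_trans (norm_nonneg _) (hC 0)
  calc ‖∫ s in Set.Icc (0:ℝ) t, F (t - s) * dens s ∂base‖
      ≤ ∫ s in Set.Icc (0:ℝ) t, ‖F (t - s) * dens s‖ ∂base := norm_integral_le_integral_norm _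
    _ ≤ ∫ s in Set.Icc (0:ℝ) t, C * ‖dens s‖ ∂base := by
        refine integral_mono_of_nonneg (Eventually.of_forall fun s => norm_nonneg _)
          ((hdi.norm.const_mul C).restrict) (Eventually.of_forall fun s => ?_)
        dsimp only
        rw [norm_mul]
        exact mul_le_mul_of_nonneg_right (hC _) (norm_nonneg _)
    _ ≤ ∫ s, C * ‖dens s‖ ∂base := by
        refine setIntegral_le_integral (hdi.norm.const_mul C)
          (Eventually.of_forall fun s => by positivity)
    _ = (∫ s, ‖dens s‖ ∂base) * C := by
        rw [integral_const_mul, mul_comm]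

/-- Theorem A.8 of Diekmann–Verduyn Lunel: for a bounded complex Borel measure `μ` on
`[0,∞)` (represented by a base measure and a density) and a bounded continuous
`f : [0,∞) → ℂ`, the convolution `(μ ⋆ f)(t) = ∫_{[0,t]} f(t−s) μ(ds)` is bounded and
continuous with `sup |μ ⋆ f| ≤ ‖μ‖_{TV} sup |f|`, provided either (i) `f(0) = 0`, or
(ii) `μ` has no discrete part (no atoms). -/
theorem convolution_measure_continuous
    (base : Measure ℝ) [IsFiniteMeasure base] (hsupp : base (Set.Iio (0:ℝ)) = 0)
    (dens : ℝ → ℂ) (hdm : Measurable dens) (hdi : Integrable dens base)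
    (f : ℝ → ℂ) (hfc : ContinuousOn f (Set.Ici 0))
    (C : ℝ) (hfb : ∀ t ∈ Set.Ici (0:ℝ), ‖f t‖ ≤ C)
    (g : ℝ → ℂ) (hg : ∀ t : ℝ, g t = ∫ s in Set.Icc (0:ℝ) t, f (t - s) * dens s ∂base) :
    (f 0 = 0 →
      ContinuousOn g (Set.Ici 0) ∧
        ∀ t ∈ Set.Ici (0:ℝ), ‖g t‖ ≤ (∫ s, ‖dens s‖ ∂base) * C)
    ∧ ((∀ x : ℝ, (∫ s in ({x} : Set ℝ), dens s ∂base) = 0) →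
      ContinuousOn g (Set.Ici 0) ∧
        ∀ t ∈ Set.Ici (0:ℝ), ‖g t‖ ≤ (∫ s, ‖dens s‖ ∂base) * C) := by
  set F : ℝ → ℂ := fun x => f (max x 0) with hF
  have hFc : Continuous F :=
    hfc.comp_continuous (continuous_id.max continuous_const) (fun x => le_max_right x 0)
  have hC : ∀ x, ‖F x‖ ≤ C := fun x => by
    rw [hF]; simpa using hfb _ (le_max_right x 0)
  have hg' : ∀ t ∈ Set.Ici (0:ℝ), g t = ∫ s in Set.Icc (0:ℝ) t, F (t - s) * dens s ∂base := by
    intro t ht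
    rw [hg t]
    refine setIntegral_congr_fun measurableSet_Icc fun s hs => ?_
    have hmax : max (t - s) 0 = t - s := max_eq_left (sub_nonneg.2 hs.2)
    rw [hF]; dsimp only; rw [hmax]
  have hbd : ∀ t ∈ Set.Ici (0:ℝ), ‖g t‖ ≤ (∫ s, ‖dens s‖ ∂base) * C := by
    intro t ht
    rw [hg' t ht]
    exact conv_bound base dens hdm hdi F hFc C hC t
  constructor
  · intro hf0
    refine ⟨conv_key base dens hdm hdi F hFc C hC g hg' (Or.inl ?_), hbd⟩
    rw [hF]; simpa using hf0
  · intro hatom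
    refine ⟨conv_key base dens hdm hdi F hFc C hC g hg' (Or.inr fun x => ?_), hbd⟩
    have hx := hatom x
    rw [integral_singleton] at hx
    rcases smul_eq_zero.mp hx with h | h
    · exact Or.inr (((ENNReal.toReal_eq_zero_iff _).mp h).resolve_right (measure_ne_top base {x}))
    · exact Or.inl h
end
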